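/- arXiv:1812.02955 — 7 statements merged into one kernel-verified Lean document; each statement's English description precedes it below -/
import Mathlib

section
/- For positive integers n, k, r and m, the mixed restricted Stirling number of the second kind satisfies S_{≤m}(n,k,r) = Σ_{i=r}^{n} (n choose i) · {i brace r}_{≤m} · {n−i brace k−1}_{≤m} · (k−1)!. -/
set_option linter.unusedSectionVars false
set_option linter.unusedVariables false


open Finset

variable {α β : Type*} [DecidableEq α] [DecidableEq β]

/-- Transport a finpartition along an embedding. -/
noncomputable def Finpartition.mapEmb (f : α ↪ β) {t : Finset α} (P : Finpartition t) :
    Finpartition (t.map f) where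
  parts := P.parts.image (Finset.map f)
  supIndep := by
    rw [Finset.supIndep_iff_pairwiseDisjoint]
    rintro _ h1 _ h2 hne
    simp only [coe_image, Set.mem_image, mem_coe] at h1 h2
    obtain ⟨a, ha, rfl⟩ := h1
    obtain ⟨b, hb, rfl⟩ := h2
    have hab : a ≠ b := by rintro rfl; exact hne rfl
    have := P.supIndep.pairwiseDisjoint ha hb hab
    simp only [Function.onFun, id] at this ⊢
    exact (Finset.disjoint_map f).2 this
  sup_parts := by
    ext x
    simp only [Finset.mem_sup, mem_image, id, Finset.mem_map]
    constructor
    · rintro ⟨_, ⟨B, hB, rfl⟩, hx⟩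
      simp only [Finset.mem_map] at hx
      obtain ⟨a, ha, rfl⟩ := hx
      exact ⟨a, by rw [← P.sup_parts]; exact Finset.mem_sup.2 ⟨B, hB, ha⟩, rfl⟩
    · rintro ⟨a, ha, rfl⟩
      rw [← P.sup_parts] at ha
      obtain ⟨B, hB, haB⟩ := Finset.mem_sup.1 ha
      exact ⟨B.map f, ⟨B, hB, rfl⟩, Finset.mem_map_of_mem f haB⟩
  bot_notMem := by
    simp only [bot_eq_empty, mem_image]
    rintro ⟨B, hB, h⟩
    exact P.bot_notMem (by rwa [Finset.map_eq_empty.1 h] at hB)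

@[simp] lemma Finpartition.mapEmb_parts (f : α ↪ β) {t : Finset α} (P : Finpartition t) :
    (P.mapEmb f).parts = P.parts.image (Finset.map f) := rfl

/-- Pull back a finpartition along an embedding. -/
noncomputable def Finpartition.preimageEmb (f : α ↪ β) {t : Finset α}
    (Q : Finpartition (t.map f)) : Finpartition t where
  parts := Q.parts.image fun B => B.preimage f f.injective.injOn
  supIndep := by
    rw [Finset.supIndep_iff_pairwiseDisjoint]
    rintro _ h1 _ h2 hne
    simp only [coe_image, Set.mem_image, mem_coe] at h1 h2
    obtain ⟨a, ha, rfl⟩ := h1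
    obtain ⟨b, hb, rfl⟩ := h2
    have hab : a ≠ b := by rintro rfl; exact hne rfl
    have := Q.disjoint ha hb hab
    simp only [Function.onFun, id, Finset.disjoint_left, Finset.mem_preimage] at this ⊢
    intro x hx
    exact this hx
  sup_parts := by
    ext a
    simp only [Finset.mem_sup, mem_image, id]
    constructor
    · rintro ⟨_, ⟨B, hB, rfl⟩, hx⟩
      rw [Finset.mem_preimage] at hx
      have : f a ∈ t.map f := by rw [← Q.sup_parts]; exact Finset.mem_sup.2 ⟨B, hB, hx⟩
      rwa [Finset.mem_map' f] at this
    · intro ha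
      have : f a ∈ t.map f := Finset.mem_map_of_mem f ha
      rw [← Q.sup_parts] at this
      obtain ⟨B, hB, haB⟩ := Finset.mem_sup.1 this
      exact ⟨_, ⟨B, hB, rfl⟩, Finset.mem_preimage.2 haB⟩
  bot_notMem := by
    simp only [bot_eq_empty, mem_image]
    rintro ⟨B, hB, h⟩
    obtain ⟨b, hb⟩ := Q.nonempty_of_mem_parts hB
    have hbt : b ∈ t.map f := Q.le hB hb
    obtain ⟨a, _, rfl⟩ := Finset.mem_map.1 hbt
    have : a ∈ B.preimage f f.injective.injOn := Finset.mem_preimage.2 hb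
    rw [h] at this
    exact absurd this (Finset.notMem_empty a)

/-- Finpartitions transported along an embedding. -/
noncomputable def Finpartition.embCongr (f : α ↪ β) (t : Finset α) :
    Finpartition t ≃ Finpartition (t.map f) where
  toFun := Finpartition.mapEmb f
  invFun := Finpartition.preimageEmb f
  left_inv P := by
    ext B
    simp only [Finpartition.preimageEmb, Finpartition.mapEmb, mem_image, exists_exists_and_eq_and]
    constructor
    · rintro ⟨C, hC, rfl⟩
      have : (C.map f).preimage f f.injective.injOn = C := by
        ext a; simp [Finset.mem_preimage]
      rwa [this]
    · intro hB
      refine ⟨B, hB, ?_⟩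
      ext a; simp [Finset.mem_preimage]
  right_inv Q := by
    ext B
    simp only [Finpartition.preimageEmb, Finpartition.mapEmb, mem_image, exists_exists_and_eq_and]
    constructor
    · rintro ⟨C, hC, rfl⟩
      have : (C.preimage f f.injective.injOn).map f = C := by
        ext b
        simp only [Finset.mem_map, Finset.mem_preimage]
        constructor
        · rintro ⟨a, ha, rfl⟩; exact ha
        · intro hb
          have hbt : b ∈ t.map f := Q.le hC hb
          obtain ⟨a, _, rfl⟩ := Finset.mem_map.1 hbt
          exact ⟨a, hb, rfl⟩
      rwa [this]
    · intro hB
      refine ⟨B, hB, ?_⟩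
      ext b
      simp only [Finset.mem_map, Finset.mem_preimage]
      constructor
      · rintro ⟨a, ha, rfl⟩; exact ha
      · intro hb
        have hbt : b ∈ t.map f := Q.le hB hb
        obtain ⟨a, _, rfl⟩ := Finset.mem_map.1 hbt
        exact ⟨a, hb, rfl⟩

open Finset

section
variable {α β : Type*} [DecidableEq α] [DecidableEq β]

lemma embCongr_parts_card (f : α ↪ β) {t : Finset α} (P : Finpartition t) :
    ((Finpartition.embCongr f t) P).parts.card = P.parts.card :=
  Finset.card_image_of_injective _ (Finset.map_injective f)

lemma embCongr_parts_le (f : α ↪ β) {t : Finset α} (P : Finpartition t) (m : ℕ) :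
    (∀ B ∈ ((Finpartition.embCongr f t) P).parts, B.card ≤ m) ↔
      (∀ B ∈ P.parts, B.card ≤ m) := by
  constructor
  · intro h C hC
    have := h (C.map f) (Finset.mem_image_of_mem _ hC)
    rwa [Finset.card_map] at this
  · rintro h B hB
    obtain ⟨C, hC, rfl⟩ := Finset.mem_image.1 hB
    rw [Finset.card_map]
    exact h C hC

end

/-- The restricted Stirling number of the second kind `{n brace k}_{≤ m}`: the number of
partitions of an `n`-element set into exactly `k` nonempty blocks, each of size at most `m`. -/
noncomputable def stirlingLe (m n k : ℕ) : ℕ :=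
  Nat.card {P : Finpartition (Finset.univ : Finset (Fin n)) //
    P.parts.card = k ∧ ∀ B ∈ P.parts, B.card ≤ m}

section
variable {α β : Type*} [DecidableEq α] [DecidableEq β]

lemma card_partSubtype_of_map {j : ℕ} [Fintype α] (f : Fin j ↪ α) (s : Finset α)
    (h : (univ : Finset (Fin j)).map f = s) (r m : ℕ) :
    Nat.card {P : Finpartition s // P.parts.card = r ∧ ∀ B ∈ P.parts, B.card ≤ m} =
      stirlingLe m j r := by
  subst h
  refine (Nat.card_congr (Equiv.subtypeEquiv (Finpartition.embCongr f univ) fun P => ?_)).symm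
  rw [embCongr_parts_card, embCongr_parts_le]

lemma card_partSubtype [Fintype α] (s : Finset α) (r m : ℕ) :
    Nat.card {P : Finpartition s // P.parts.card = r ∧ ∀ B ∈ P.parts, B.card ≤ m} =
      stirlingLe m s.card r := by
  refine card_partSubtype_of_map
    ((s.equivFin.symm.toEmbedding).trans (Function.Embedding.subtype _)) s ?_ r m
  ext x
  simp only [Finset.mem_map, Finset.mem_univ, true_and, Function.Embedding.trans_apply,
    Equiv.coe_toEmbedding, Function.Embedding.coe_subtype]
  constructor
  · rintro ⟨a, _, rfl⟩; exact (s.equivFin.symm a).2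
  · intro hx; exact ⟨s.equivFin ⟨x, hx⟩, by simp⟩

lemma stirlingLe_eq_zero {m n k : ℕ} (h : n < k) : stirlingLe m n k = 0 := by
  rw [stirlingLe]
  have : IsEmpty {P : Finpartition (Finset.univ : Finset (Fin n)) //
      P.parts.card = k ∧ ∀ B ∈ P.parts, B.card ≤ m} := by
    refine ⟨fun x => ?_⟩
    obtain ⟨P, hP, -⟩ := x
    exact absurd (hP ▸ P.card_parts_le_card) (by simpa using h)
  exact Nat.card_of_isEmpty

end

section
open Finset
variable {α : Type*} [DecidableEq α] [Fintype α]

lemma natCard_sigma {ι : Type*} [Fintype ι] (F : ι → Type*) [∀ i, Finite (F i)] :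
    Nat.card (Σ i, F i) = ∑ i, Nat.card (F i) := by
  letI : ∀ i, Fintype (F i) := fun _ => Fintype.ofFinite _
  simp [Nat.card_eq_fintype_card]

/-- Ordered tuples of disjoint blocks with prescribed union. -/
abbrev Tup (s : Finset α) (k m : ℕ) : Type _ :=
  {B : Fin k → Finset α // (∀ i, (B i).Nonempty) ∧ (∀ i, (B i).card ≤ m) ∧
    (∀ i j, i ≠ j → Disjoint (B i) (B j)) ∧ Finset.univ.biUnion B = s}

instance (s : Finset α) (k m : ℕ) : Finite (Tup s k m) :=
  Subtype.finite

abbrev SPart (s : Finset α) (k m : ℕ) : Type _ :=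
  {P : Finpartition s // P.parts.card = k ∧ ∀ B ∈ P.parts, B.card ≤ m}

instance (s : Finset α) (k m : ℕ) : Finite (SPart s k m) := Subtype.finite

lemma tup_inj {s : Finset α} {k m : ℕ} (x : Tup s k m) : Function.Injective x.1 := by
  intro i j hij
  by_contra hne
  have hd := x.2.2.2.1 i j hne
  rw [hij, disjoint_self] at hd
  exact (x.2.1 j).ne_empty hd

def tupToPart {s : Finset α} {k m : ℕ} (x : Tup s k m) : SPart s k m :=
  ⟨{ parts := Finset.univ.image x.1
     supIndep := by
       rw [Finset.supIndep_iff_pairwiseDisjoint]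
       rintro a ha b hb hne
       simp only [coe_image, Set.mem_image, mem_coe] at ha hb
       obtain ⟨i, _, rfl⟩ := ha
       obtain ⟨j, _, rfl⟩ := hb
       have hij : i ≠ j := by rintro rfl; exact hne rfl
       exact x.2.2.2.1 i j hij
     sup_parts := by
       rw [Finset.sup_image, Function.id_comp]
       exact (Finset.sup_eq_biUnion Finset.univ x.1).trans x.2.2.2.2
     bot_notMem := by
       simp only [bot_eq_empty, mem_image]
       rintro ⟨i, _, h⟩
       exact (x.2.1 i).ne_empty h },
   by
     constructor
     · rw [Finset.card_image_of_injective _ (tup_inj x), card_univ, Fintype.card_fin]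
     · rintro B hB
       obtain ⟨i, _, rfl⟩ := Finset.mem_image.1 hB
       exact x.2.2.1 i⟩

lemma tupToPart_parts {s : Finset α} {k m : ℕ} (x : Tup s k m) :
    (tupToPart x).1.parts = Finset.univ.image x.1 := rfl

noncomputable def fiberInv {s : Finset α} {k m : ℕ} (P : SPart s k m)
    (e : Fin k ≃ {A // A ∈ P.1.parts}) : {x : Tup s k m // tupToPart x = P} := by
  refine ⟨⟨fun i => (e i).1, fun i => P.1.nonempty_of_mem_parts (e i).2,
    fun i => P.2.2 _ (e i).2, fun i j hij => ?_, ?_⟩, ?_⟩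
  · refine P.1.disjoint (e i).2 (e j).2 fun h => hij (e.injective (Subtype.ext h))
  · ext a
    simp only [Finset.mem_biUnion, Finset.mem_univ, true_and]
    conv_rhs => rw [← P.1.sup_parts]
    simp only [Finset.mem_sup, id]
    constructor
    · rintro ⟨i, hi⟩; exact ⟨(e i).1, (e i).2, hi⟩
    · rintro ⟨A, hA, ha⟩
      obtain ⟨i, hi⟩ := e.surjective ⟨A, hA⟩
      exact ⟨i, by rw [hi]; exact ha⟩
  · apply Subtype.ext
    apply Finpartition.ext
    rw [tupToPart_parts]
    ext A
    simp only [Finset.mem_image, Finset.mem_univ, true_and]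
    constructor
    · rintro ⟨i, rfl⟩; exact (e i).2
    · intro hA
      obtain ⟨i, hi⟩ := e.surjective ⟨A, hA⟩
      exact ⟨i, by rw [hi]⟩

@[simp] lemma fiberInv_apply {s : Finset α} {k m : ℕ} (P : SPart s k m)
    (e : Fin k ≃ {A // A ∈ P.1.parts}) (i : Fin k) :
    (fiberInv P e).1.1 i = (e i).1 := rfl

noncomputable def fiberEquiv {s : Finset α} {k m : ℕ} (P : SPart s k m) :
    {x : Tup s k m // tupToPart x = P} ≃ (Fin k ≃ {A // A ∈ P.1.parts}) where
  toFun x := Equiv.ofBijective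
    (fun i => ⟨x.1.1 i, by
      rw [← congrArg (fun y => (Subtype.val y).parts) x.2]
      exact Finset.mem_image_of_mem _ (Finset.mem_univ i)⟩)
    (by
      constructor
      · intro i j hij
        exact tup_inj x.1 (congrArg Subtype.val hij)
      · rintro ⟨A, hA⟩
        rw [← congrArg (fun y => (Subtype.val y).parts) x.2] at hA
        obtain ⟨i, _, rfl⟩ := Finset.mem_image.1 hA
        exact ⟨i, Subtype.ext rfl⟩)
  invFun := fiberInv P
  left_inv x := Subtype.ext (Subtype.ext rfl)
  right_inv e := Equiv.ext fun i => Subtype.ext (fiberInv_apply P e i)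

lemma natCard_equiv_fin {k : ℕ} {γ : Type*} [Fintype γ] [DecidableEq γ]
    (h : Fintype.card γ = k) : Nat.card (Fin k ≃ γ) = Nat.factorial k := by
  rw [Nat.card_eq_fintype_card,
    Fintype.card_equiv (Fintype.equivOfCardEq (by simp [h]))]
  simp

lemma card_Tup (s : Finset α) (k m : ℕ) :
    Nat.card (Tup s k m) = stirlingLe m s.card k * Nat.factorial k := by
  letI : Fintype (SPart s k m) := Fintype.ofFinite _
  rw [Nat.card_congr (Equiv.sigmaFiberEquiv (tupToPart (s := s) (k := k) (m := m))).symm]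
  rw [natCard_sigma]
  have hfib : ∀ P : SPart s k m, Nat.card {x : Tup s k m // tupToPart x = P}
      = Nat.factorial k := by
    intro P
    rw [Nat.card_congr (fiberEquiv P)]
    exact natCard_equiv_fin (by rw [Fintype.card_coe, P.2.1])
  rw [Finset.sum_congr rfl fun P _ => hfib P, Finset.sum_const, card_univ,
    ← Nat.card_eq_fintype_card, smul_eq_mul, ← card_partSubtype s k m]

end

section
open Finset

/-- The mixed restricted Stirling number of the second kind `S_{≤ m}(n, k, r)`: the number of
pairs `(π, (B_2, …, B_k))` where `B_2, …, B_k` are pairwise disjoint nonempty subsets of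
`{1, …, n}` of size at most `m` and `π` is a partition of the complement of their union into
exactly `r` nonempty blocks, each of size at most `m`. -/
noncomputable def mixedStirlingLe (m n k r : ℕ) : ℕ :=
  Nat.card {x : Σ B : Fin (k - 1) → Finset (Fin n),
      Finpartition ((Finset.univ : Finset (Fin n)) \ Finset.univ.biUnion B) //
    (∀ i, (x.1 i).Nonempty) ∧ (∀ i, (x.1 i).card ≤ m) ∧
    (∀ i j, i ≠ j → Disjoint (x.1 i) (x.1 j)) ∧
    x.2.parts.card = r ∧ ∀ p ∈ x.2.parts, p.card ≤ m}

variable {n k r m : ℕ}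

abbrev MixedT (n k r m : ℕ) := {x : Σ B : Fin (k - 1) → Finset (Fin n),
      Finpartition ((Finset.univ : Finset (Fin n)) \ Finset.univ.biUnion B) //
    (∀ i, (x.1 i).Nonempty) ∧ (∀ i, (x.1 i).card ≤ m) ∧
    (∀ i j, i ≠ j → Disjoint (x.1 i) (x.1 j)) ∧
    x.2.parts.card = r ∧ ∀ p ∈ x.2.parts, p.card ≤ m}

noncomputable def mixedFiberEquiv (s : Finset (Fin n)) :
    {x : MixedT n k r m // Finset.univ.biUnion x.1.1 = s} ≃
      (Tup s (k - 1) m × SPart ((Finset.univ : Finset (Fin n)) \ s) r m) where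
  toFun y := (⟨y.1.1.1, y.1.2.1, y.1.2.2.1, y.1.2.2.2.1, y.2⟩,
    ⟨y.1.1.2.copy (by rw [y.2]), by
      refine ⟨?_, ?_⟩ <;> simp only [Finpartition.copy_parts]
      exacts [y.1.2.2.2.2.1, y.1.2.2.2.2.2]⟩)
  invFun z := ⟨⟨⟨z.1.1, z.2.1.copy (by rw [z.1.2.2.2.2])⟩, z.1.2.1, z.1.2.2.1, z.1.2.2.2.1,
    by simp only [Finpartition.copy_parts]; exact z.2.2.1,
    by simp only [Finpartition.copy_parts]; exact z.2.2.2⟩, z.1.2.2.2.2⟩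
  left_inv y := Subtype.ext (Subtype.ext
    (congrArg (Sigma.mk y.1.1.1) (by apply Finpartition.ext; simp)))
  right_inv z := by
    refine Prod.ext ?_ ?_
    · exact Subtype.ext rfl
    · exact Subtype.ext (by apply Finpartition.ext; simp)

lemma card_MixedT :
    Nat.card (MixedT n k r m) =
      ∑ s : Finset (Fin n),
        stirlingLe m s.card (k - 1) * Nat.factorial (k - 1) *
          stirlingLe m (n - s.card) r := by
  rw [Nat.card_congr
      (Equiv.sigmaFiberEquiv (fun x : MixedT n k r m => Finset.univ.biUnion x.1.1)).symm,
    natCard_sigma]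
  refine Finset.sum_congr rfl fun s _ => ?_
  rw [Nat.card_congr (mixedFiberEquiv s), Nat.card_prod, card_Tup, card_partSubtype]
  congr 2
  rw [Finset.card_univ_diff, Fintype.card_fin]

theorem mixedStirlingLe_eq_sum_stirlingLe (n k r m : ℕ)
    (hn : 1 ≤ n) (hk : 1 ≤ k) (hr : 1 ≤ r) (hm : 1 ≤ m) :
    mixedStirlingLe m n k r =
      ∑ i ∈ Finset.Icc r n,
        n.choose i * stirlingLe m i r * stirlingLe m (n - i) (k - 1) *
          (k - 1).factorial := by
  have h1 : mixedStirlingLe m n k r = Nat.card (MixedT n k r m) := rfl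
  rw [h1, card_MixedT]
  -- group subsets by cardinality
  have h2 : ∑ s : Finset (Fin n),
        stirlingLe m s.card (k - 1) * Nat.factorial (k - 1) *
          stirlingLe m (n - s.card) r
      = ∑ j ∈ Finset.range (n + 1),
          n.choose j * (stirlingLe m j (k - 1) * Nat.factorial (k - 1) *
            stirlingLe m (n - j) r) := by
    rw [← Finset.powerset_univ, Finset.sum_powerset]
    rw [Finset.card_univ, Fintype.card_fin]
    refine Finset.sum_congr rfl fun j hj => ?_
    rw [Finset.sum_congr rfl (fun t ht => by
      rw [(Finset.mem_powersetCard.1 ht).2]), Finset.sum_const,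
      Finset.card_powersetCard, Finset.card_univ, Fintype.card_fin, smul_eq_mul]
  have h4 := Finset.sum_range_reflect (fun j => n.choose j *
    (stirlingLe m j (k - 1) * Nat.factorial (k - 1) * stirlingLe m (n - j) r)) (n + 1)
  rw [h2, ← h4]
  simp only [Nat.add_sub_cancel]
  have h3 : ∀ j ∈ Finset.range (n + 1),
      n.choose (n - j) * (stirlingLe m (n - j) (k - 1) * Nat.factorial (k - 1) *
        stirlingLe m (n - (n - j)) r)
      = n.choose j * stirlingLe m j r * stirlingLe m (n - j) (k - 1) *
        (k - 1).factorial := by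
    intro j hj
    have hjn : j ≤ n := Nat.lt_succ_iff.1 (Finset.mem_range.1 hj)
    rw [Nat.choose_symm hjn, Nat.sub_sub_self hjn]
    ring
  rw [Finset.sum_congr rfl h3]
  refine (Finset.sum_subset ?_ ?_).symm
  · intro i hi
    exact Finset.mem_range.2 (Nat.lt_succ_of_le (Finset.mem_Icc.1 hi).2)
  · intro i hi hni
    have hin : i ≤ n := Nat.lt_succ_iff.1 (Finset.mem_range.1 hi)
    have hir : i < r := by
      by_contra h
      exact hni (Finset.mem_Icc.2 ⟨Nat.le_of_not_lt h, hin⟩)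
    rw [stirlingLe_eq_zero hir, mul_zero, zero_mul, zero_mul]
end
end

section
/- For positive integers n, k, r and m, the mixed restricted Stirling number of the second kind satisfies S_{≤m}(n,k,r) = (k−1)! · (k+r−1 choose k−1) · {n brace k+r−1}_{≤m}. -/
open Finset

section Aux

variable {n a r m : ℕ}

abbrev Mixed (m n a r : ℕ) := {x : Σ B : Fin a → Finset (Fin n),
      Finpartition ((Finset.univ : Finset (Fin n)) \ Finset.univ.biUnion B) //
    (∀ i, (x.1 i).Nonempty) ∧ (∀ i, (x.1 i).card ≤ m) ∧
    (∀ i j, i ≠ j → Disjoint (x.1 i) (x.1 j)) ∧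
    x.2.parts.card = r ∧ ∀ p ∈ x.2.parts, p.card ≤ m}

abbrev PartLe (m n c : ℕ) := {P : Finpartition (Finset.univ : Finset (Fin n)) //
    P.parts.card = c ∧ ∀ B ∈ P.parts, B.card ≤ m}

abbrev Target (m n a r : ℕ) :=
  Σ P : PartLe m n (a + r), (Fin a ↪ {p // p ∈ P.1.parts})

namespace MixedAux

variable (x : Mixed m n a r)

lemma hne : ∀ i, (x.1.1 i).Nonempty := x.2.1
lemma hcard : ∀ i, (x.1.1 i).card ≤ m := x.2.2.1
lemma hdisj : ∀ i j, i ≠ j → Disjoint (x.1.1 i) (x.1.1 j) := x.2.2.2.1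
lemma hr : x.1.2.parts.card = r := x.2.2.2.2.1
lemma hm : ∀ p ∈ x.1.2.parts, p.card ≤ m := x.2.2.2.2.2

lemma hBinj : Function.Injective x.1.1 := by
  intro i j hij
  by_contra h
  have hd := hdisj x i j h
  rw [hij] at hd
  exact (hne x j).ne_empty (disjoint_self.mp hd)

lemma hsupim : (Finset.univ.image x.1.1).sup id = Finset.univ.biUnion x.1.1 := by
  rw [Finset.sup_image, Function.id_comp, Finset.sup_eq_biUnion]

lemma hπsub : ∀ p ∈ x.1.2.parts, p ⊆ Finset.univ \ Finset.univ.biUnion x.1.1 :=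
  fun _ hp => x.1.2.le hp

lemma hdisjim : Disjoint (Finset.univ.image x.1.1) x.1.2.parts := by
  rw [Finset.disjoint_left]
  rintro p hp hp'
  obtain ⟨i, -, rfl⟩ := Finset.mem_image.mp hp
  obtain ⟨y, hy⟩ := hne x i
  have := hπsub x _ hp' hy
  rw [Finset.mem_sdiff] at this
  exact this.2 (Finset.mem_biUnion.mpr ⟨i, Finset.mem_univ i, hy⟩)

/-- The combined partition of `univ`. -/
def fpart : Finpartition (Finset.univ : Finset (Fin n)) where
  parts := Finset.univ.image x.1.1 ∪ x.1.2.parts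
  supIndep := by
    rw [Finset.supIndep_iff_pairwiseDisjoint]
    intro p hp q hq hpq
    simp only [Finset.coe_union, Set.mem_union, Finset.coe_image, Set.mem_image,
      Finset.mem_coe] at hp hq
    rcases hp with ⟨i, -, rfl⟩ | hp
    · rcases hq with ⟨j, -, rfl⟩ | hq
      · exact hdisj x i j (fun h => hpq (by rw [h]))
      · exact (Finset.disjoint_sdiff.mono_left (Finset.subset_biUnion_of_mem x.1.1
          (Finset.mem_univ i))).mono_right (hπsub x _ hq)
    · rcases hq with ⟨j, -, rfl⟩ | hq
      · exact ((Finset.disjoint_sdiff.mono_left (Finset.subset_biUnion_of_mem x.1.1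
          (Finset.mem_univ j))).mono_right (hπsub x _ hp)).symm
      · exact x.1.2.disjoint hp hq hpq
  sup_parts := by
    rw [Finset.sup_union, hsupim x, x.1.2.sup_parts, Finset.sup_eq_union,
      Finset.union_sdiff_of_subset (Finset.subset_univ _)]
  bot_notMem := by
    rw [Finset.mem_union]
    rintro (h | h)
    · obtain ⟨i, -, hi⟩ := Finset.mem_image.mp h
      exact (hne x i).ne_empty hi
    · exact x.1.2.bot_notMem h

lemma fpart_card : (fpart x).parts.card = a + r := by
  rw [fpart, Finset.card_union_of_disjoint (hdisjim x),
    Finset.card_image_of_injective _ (hBinj x), Finset.card_univ, Fintype.card_fin, hr x]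

lemma fpart_le : ∀ B ∈ (fpart x).parts, B.card ≤ m := by
  intro B hB
  rw [fpart, Finset.mem_union] at hB
  rcases hB with h | h
  · obtain ⟨i, -, rfl⟩ := Finset.mem_image.mp h
    exact hcard x i
  · exact hm x _ h

/-- The forward map. -/
def F : Target m n a r :=
  ⟨⟨fpart x, fpart_card x, fpart_le x⟩,
    ⟨fun i => ⟨x.1.1 i,
      (Finset.mem_union_left _ (Finset.mem_image_of_mem _ (Finset.mem_univ i)))⟩,
     fun i j h => hBinj x (congrArg Subtype.val h)⟩⟩

end MixedAux

namespace TargetAux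

variable (y : Target m n a r)

/-- The tuple of distinguished blocks. -/
def B : Fin a → Finset (Fin n) := fun i => (y.2 i).1

lemma hBinj : Function.Injective (B y) :=
  fun i j h => y.2.injective (Subtype.ext h)

lemma hBmem : ∀ i, B y i ∈ y.1.1.parts := fun i => (y.2 i).2

lemma himsub : Finset.univ.image (B y) ⊆ y.1.1.parts := by
  intro p hp
  obtain ⟨i, -, rfl⟩ := Finset.mem_image.mp hp
  exact hBmem y i

lemma hsupim : (Finset.univ.image (B y)).sup id = Finset.univ.biUnion (B y) := by
  rw [Finset.sup_image, Function.id_comp, Finset.sup_eq_biUnion]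

lemma hdisjsup : Disjoint ((Finset.univ.image (B y)).sup id)
    ((y.1.1.parts \ Finset.univ.image (B y)).sup id) := by
  rw [Finset.disjoint_sup_left]
  intro p hp
  rw [Finset.disjoint_sup_right]
  intro q hq
  rw [Finset.mem_sdiff] at hq
  exact y.1.1.disjoint (himsub y hp) hq.1 (fun h => hq.2 (h ▸ hp))

lemma hsup : (y.1.1.parts \ Finset.univ.image (B y)).sup id
    = Finset.univ \ Finset.univ.biUnion (B y) := by
  rw [← hsupim y]
  refine ((hdisjsup y).sdiff_eq_of_sup_eq ?_).symm
  rw [← Finset.sup_union, Finset.union_sdiff_of_subset (himsub y), y.1.1.sup_parts]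

/-- The residual partition. -/
def gpart : Finpartition ((Finset.univ : Finset (Fin n)) \ Finset.univ.biUnion (B y)) where
  parts := y.1.1.parts \ Finset.univ.image (B y)
  supIndep := y.1.1.supIndep.subset (Finset.sdiff_subset)
  sup_parts := hsup y
  bot_notMem := fun h => y.1.1.bot_notMem (Finset.mem_sdiff.mp h).1

lemma gne (i : Fin a) : (B y i).Nonempty :=
  Finset.nonempty_iff_ne_empty.mpr
    (fun he => y.1.1.bot_notMem (by rw [Finset.bot_eq_empty, ← he]; exact hBmem y i))

lemma gcard : (gpart y).parts.card = r := by
  show (y.1.1.parts \ Finset.univ.image (B y)).card = r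
  rw [Finset.card_sdiff_of_subset (himsub y), Finset.card_image_of_injective _ (hBinj y),
    Finset.card_univ, Fintype.card_fin, y.1.2.1]
  omega

/-- The backward map. -/
def G : Mixed m n a r :=
  ⟨⟨B y, gpart y⟩, gne y, fun i => y.1.2.2 _ (hBmem y i),
    fun i j h => y.1.1.disjoint (hBmem y i) (hBmem y j) (fun he => h (hBinj y he)),
    gcard y, fun p hp => y.1.2.2 _ (Finset.mem_sdiff.mp hp).1⟩

end TargetAux

lemma mixed_ext {x y : Mixed m n a r} (h1 : x.1.1 = y.1.1)
    (h2 : x.1.2.parts = y.1.2.parts) : x = y := by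
  obtain ⟨⟨B, π⟩, hx⟩ := x
  obtain ⟨⟨B', π'⟩, hy⟩ := y
  dsimp only at h1 h2
  subst h1
  exact Subtype.ext (Sigma.ext rfl (heq_of_eq (Finpartition.ext h2)))

lemma target_ext {x y : Target m n a r} (h1 : x.1.1.parts = y.1.1.parts)
    (h2 : ∀ i, (x.2 i).1 = (y.2 i).1) : x = y := by
  obtain ⟨P, f⟩ := x
  obtain ⟨Q, g⟩ := y
  dsimp only at h1 h2
  have hPQ : P = Q := Subtype.ext (Finpartition.ext h1)
  subst hPQ
  exact Sigma.ext rfl (heq_of_eq (DFunLike.ext _ _ fun i => Subtype.ext (h2 i)))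

lemma GF (x : Mixed m n a r) : TargetAux.G (MixedAux.F x) = x := by
  refine mixed_ext ?_ ?_
  · show TargetAux.B (MixedAux.F x) = x.1.1
    rfl
  · show (TargetAux.gpart (MixedAux.F x)).parts = x.1.2.parts
    show (MixedAux.fpart x).parts \ Finset.univ.image (TargetAux.B (MixedAux.F x))
        = x.1.2.parts
    have hB : TargetAux.B (MixedAux.F x) = x.1.1 := rfl
    rw [hB]
    show (Finset.univ.image x.1.1 ∪ x.1.2.parts) \ Finset.univ.image x.1.1 = x.1.2.parts
    exact Finset.union_sdiff_cancel_left (MixedAux.hdisjim x)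

lemma FG (y : Target m n a r) : MixedAux.F (TargetAux.G y) = y := by
  refine target_ext ?_ (fun i => ?_)
  · show (MixedAux.fpart (TargetAux.G y)).parts = y.1.1.parts
    show Finset.univ.image (TargetAux.B y) ∪ (TargetAux.gpart y).parts = y.1.1.parts
    show Finset.univ.image (TargetAux.B y)
        ∪ (y.1.1.parts \ Finset.univ.image (TargetAux.B y)) = y.1.1.parts
    exact Finset.union_sdiff_of_subset (TargetAux.himsub y)
  · rfl

noncomputable def mixedEquiv : Mixed m n a r ≃ Target m n a r :=
  ⟨MixedAux.F, TargetAux.G, GF, FG⟩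

lemma key (m n a r : ℕ) :
    Nat.card (Mixed m n a r) = (a + r).descFactorial a * Nat.card (PartLe m n (a + r)) := by
  classical
  rw [Nat.card_congr (mixedEquiv (m := m) (n := n) (a := a) (r := r))]
  rw [Nat.card_eq_fintype_card, Nat.card_eq_fintype_card, Fintype.card_sigma]
  have : ∀ P : PartLe m n (a + r),
      Fintype.card (Fin a ↪ {p // p ∈ P.1.parts}) = (a + r).descFactorial a := by
    intro P
    rw [Fintype.card_embedding_eq, Fintype.card_fin, Fintype.card_coe, P.2.1]
  rw [Finset.sum_congr rfl (fun P _ => this P), Finset.sum_const, Finset.card_univ,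
    smul_eq_mul, mul_comm]

end Aux

theorem mixedStirlingLe_eq_stirlingLe (n k r m : ℕ)
    (hn : 1 ≤ n) (hk : 1 ≤ k) (hr : 1 ≤ r) (hm : 1 ≤ m) :
    mixedStirlingLe m n k r =
      (k - 1).factorial * (k + r - 1).choose (k - 1) * stirlingLe m n (k + r - 1) := by
  have h : k - 1 + r = k + r - 1 := by omega
  have e1 : mixedStirlingLe m n k r = Nat.card (Mixed m n (k - 1) r) := rfl
  have e2 : stirlingLe m n (k + r - 1) = Nat.card (PartLe m n (k + r - 1)) := rfl
  rw [e1, e2, key m n (k - 1) r, h, Nat.descFactorial_eq_factorial_mul_choose]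
end

section
/- For positive integers n, m, k and r, the mixed restricted Stirling numbers of the second kind satisfy the recurrence S_{≤m}(n,k,r) = Σ_{i=0}^{m−1} (n−1 choose i) · [ (k−1)·S_{≤m}(n−i−1,k−1,r) + S_{≤m}(n−i−1,k,r−1) ], where terms whose first argument n−i−1 is negative are taken to be 0, and the term (k−1)·S_{≤m}(n−i−1,k−1,r) is taken to be 0 when k = 1. -/
open Finset

variable {α β : Type*}

/-- Configuration predicate: `B` is a family of `b` pairwise disjoint nonempty blocks of size
at most `m`, and `P` is a partition of the complement of their union into `r` nonempty blocks
of size at most `m`. -/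
def IsConf (m r : ℕ) {b : ℕ} [Fintype α] [DecidableEq α]
    (B : Fin b → Finset α) (P : Finset (Finset α)) : Prop :=
  (∀ i, (B i).Nonempty) ∧ (∀ i, (B i).card ≤ m) ∧
  (∀ i j, i ≠ j → Disjoint (B i) (B j)) ∧
  (∀ p ∈ P, p.Nonempty) ∧ (∀ p ∈ P, p.card ≤ m) ∧
  (∀ p ∈ P, ∀ q ∈ P, p ≠ q → Disjoint p q) ∧
  (∀ a : α, (∃ p ∈ P, a ∈ p) ↔ ∀ i, a ∉ B i) ∧
  P.card = r

noncomputable def confCount (m b r : ℕ) (α : Type*) [Fintype α] [DecidableEq α] : ℕ :=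
  Nat.card {x : (Fin b → Finset α) × Finset (Finset α) // IsConf m r x.1 x.2}

def mkFinpartition [DecidableEq α] (s : Finset α) (P : Finset (Finset α))
    (hdisj : ∀ p ∈ P, ∀ q ∈ P, p ≠ q → Disjoint p q)
    (hmem : ∀ a, (∃ p ∈ P, a ∈ p) ↔ a ∈ s)
    (hne : ∀ p ∈ P, p.Nonempty) : Finpartition s where
  parts := P
  supIndep := Finset.supIndep_iff_pairwiseDisjoint.mpr
    (fun p hp q hq hne' => hdisj p hp q hq hne')
  sup_parts := by
    ext a
    simp only [Finset.mem_sup, id_eq]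
    exact hmem a
  bot_notMem := fun h => by simpa using (hne _ h).ne_empty

@[simp] lemma mkFinpartition_parts [DecidableEq α] (s : Finset α) (P : Finset (Finset α))
    (h1 h2 h3) : (mkFinpartition s P h1 h2 h3).parts = P := rfl

theorem mixedStirlingLe_eq_confCount (m n k r : ℕ) :
    mixedStirlingLe m n k r = confCount m (k - 1) r (Fin n) := by
  classical
  apply Nat.card_congr
  refine ⟨fun x => ⟨(x.1.1, x.1.2.parts), ?_⟩, fun y => ⟨⟨y.1.1, ?_⟩, ?_⟩, ?_, ?_⟩
  · obtain ⟨h1, h2, h3, h4, h5⟩ := x.2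
    refine ⟨h1, h2, h3, fun p hp => x.1.2.nonempty_of_mem_parts hp, h5, ?_, ?_, h4⟩
    · exact fun p hp q hq hne => x.1.2.supIndep.pairwiseDisjoint hp hq hne
    · intro a
      have h : (∃ p ∈ x.1.2.parts, a ∈ p) ↔ a ∈ (univ : Finset (Fin n)) \ univ.biUnion x.1.1 := by
        conv_rhs => rw [← x.1.2.sup_parts]
        simp [Finset.mem_sup]
      rw [h]
      simp
  · -- build the Finpartition from y
    refine mkFinpartition _ y.1.2 (y.2.2.2.2.2.2.1) ?_ (y.2.2.2.2.1)
    intro a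
    rw [y.2.2.2.2.2.2.2.1 a]
    simp
  · obtain ⟨h1, h2, h3, h4, h5, h6, h7, h8⟩ := y.2
    exact ⟨h1, h2, h3, h8, h5⟩
  · intro x
    apply Subtype.ext
    exact Sigma.ext rfl (heq_of_eq (Finpartition.ext rfl))
  · intro y
    apply Subtype.ext
    exact Prod.ext rfl rfl

section Transfer
variable [Fintype α] [DecidableEq α] [Fintype β] [DecidableEq β]

lemma isConf_map {m r b : ℕ} (e : α ≃ β) {B : Fin b → Finset α} {P : Finset (Finset α)}
    (h : IsConf m r B P) :
    IsConf m r (fun i => (B i).map e.toEmbedding)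
      (P.image fun u => u.map e.toEmbedding) := by
  obtain ⟨h1, h2, h3, h4, h5, h6, h7, h8⟩ := h
  refine ⟨fun i => (h1 i).map, fun i => by simpa using h2 i,
    fun i j hij => (Finset.disjoint_map _).mpr (h3 i j hij), ?_, ?_, ?_, ?_, ?_⟩
  · intro p hp
    obtain ⟨u, hu, rfl⟩ := Finset.mem_image.mp hp
    exact (h4 u hu).map
  · intro p hp
    obtain ⟨u, hu, rfl⟩ := Finset.mem_image.mp hp
    simpa using h5 u hu
  · intro p hp q hq hpq
    obtain ⟨u, hu, rfl⟩ := Finset.mem_image.mp hp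
    obtain ⟨v, hv, rfl⟩ := Finset.mem_image.mp hq
    have huv : u ≠ v := fun h => hpq (by rw [h])
    exact (Finset.disjoint_map _).mpr (h6 u hu v hv huv)
  · intro y
    have := h7 (e.symm y)
    constructor
    · intro ⟨p, hp, hyp⟩ i
      obtain ⟨u, hu, rfl⟩ := Finset.mem_image.mp hp
      rw [Finset.mem_map_equiv] at hyp ⊢
      exact this.mp ⟨u, hu, hyp⟩ i
    · intro hy
      obtain ⟨u, hu, hmu⟩ := this.mpr (fun i => by
        have := hy i; rwa [Finset.mem_map_equiv] at this)
      exact ⟨u.map e.toEmbedding, Finset.mem_image_of_mem _ hu,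
        Finset.mem_map_equiv.mpr (by simpa using hmu)⟩
  · rw [Finset.card_image_of_injective _ (Finset.map_injective _), h8]

omit [Fintype α] [DecidableEq α] [Fintype β] [DecidableEq β] in
lemma map_symm_map (e : α ≃ β) (u : Finset α) :
    (u.map e.toEmbedding).map e.symm.toEmbedding = u := by
  ext z; simp [Finset.mem_map_equiv]

omit [Fintype α] [DecidableEq α] [Fintype β] [DecidableEq β] in
lemma map_map_symm (e : α ≃ β) (u : Finset β) :
    (u.map e.symm.toEmbedding).map e.toEmbedding = u := by
  ext z; simp [Finset.mem_map_equiv]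

lemma confCount_congr (m b r : ℕ) (e : α ≃ β) :
    confCount m b r α = confCount m b r β := by
  apply Nat.card_congr
  refine ⟨fun x => ⟨(fun i => (x.1.1 i).map e.toEmbedding,
      x.1.2.image fun u => u.map e.toEmbedding), isConf_map e x.2⟩,
    fun y => ⟨(fun i => (y.1.1 i).map e.symm.toEmbedding,
      y.1.2.image fun u => u.map e.symm.toEmbedding), isConf_map e.symm y.2⟩, ?_, ?_⟩
  · intro x
    apply Subtype.ext
    refine Prod.ext (funext fun i => map_symm_map e _) ?_
    show Finset.image _ (Finset.image _ x.1.2) = x.1.2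
    rw [Finset.image_image]
    exact (Finset.image_congr (g := id) (fun u _ => map_symm_map e u)).trans Finset.image_id
  · intro y
    apply Subtype.ext
    refine Prod.ext (funext fun i => map_map_symm e _) ?_
    show Finset.image _ (Finset.image _ y.1.2) = y.1.2
    rw [Finset.image_image]
    exact (Finset.image_congr (g := id) (fun u _ => map_map_symm e u)).trans Finset.image_id

end Transfer

section Helpers
set_option linter.unusedSectionVars false
variable [DecidableEq α] {p : α → Prop} [DecidablePred p]

lemma map_subtype_of {u : Finset α} (h : ∀ x ∈ u, p x) :
    (u.subtype p).map (Function.Embedding.subtype p) = u := by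
  rw [Finset.subtype_map, Finset.filter_true_of_mem h]

lemma subtype_map' (v : Finset {x // p x}) :
    (v.map (Function.Embedding.subtype p)).subtype p = v := by
  ext y
  simp only [Finset.mem_subtype, Finset.mem_map, Function.Embedding.coe_subtype,
    Subtype.ext_iff]
  constructor
  · rintro ⟨w, hw, hwy⟩
    rwa [show w = y from Subtype.ext hwy] at hw
  · exact fun h => ⟨y, h, rfl⟩

lemma card_subtype_of {u : Finset α} (h : ∀ x ∈ u, p x) :
    (u.subtype p).card = u.card := by
  conv_rhs => rw [← map_subtype_of h]
  rw [Finset.card_map]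

lemma nonempty_subtype_of {u : Finset α} (h : ∀ x ∈ u, p x) (hu : u.Nonempty) :
    (u.subtype p).Nonempty := by
  rw [← Finset.card_pos, card_subtype_of h, Finset.card_pos]; exact hu

lemma disjoint_subtype {u v : Finset α} (h : Disjoint u v) :
    Disjoint (u.subtype p) (v.subtype p) := by
  rw [Finset.disjoint_left] at h ⊢
  intro y hy hy'
  exact h (Finset.mem_subtype.mp hy) (Finset.mem_subtype.mp hy')

lemma mem_map_subtype (z : α) (v : Finset {x // p x}) :
    z ∈ v.map (Function.Embedding.subtype p) ↔ ∃ h : p z, (⟨z, h⟩ : {x // p x}) ∈ v := by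
  constructor
  · intro h
    obtain ⟨w, hw, hwz⟩ := Finset.mem_map.mp h
    obtain ⟨wv, wp⟩ := w
    have hwz' : wv = z := hwz
    subst hwz'
    exact ⟨wp, hw⟩
  · rintro ⟨h, hv⟩
    exact Finset.mem_map.mpr ⟨_, hv, rfl⟩

end Helpers

section Fiber
variable [Fintype α] [DecidableEq α]

lemma fiberA {m r b : ℕ} (a : α) (S : Finset α) (ha : a ∉ S)
    (hS : S.card + 1 ≤ m) (j : Fin (b + 1)) :
    Nat.card {x : (Fin (b + 1) → Finset α) × Finset (Finset α) //
      IsConf m r x.1 x.2 ∧ x.1 j = insert a S} =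
    confCount m b r {y : α // y ∉ insert a S} := by
  classical
  set T := insert a S with hT
  set p : α → Prop := fun z => z ∉ T with hp
  apply Nat.card_congr
  refine ⟨fun x => ⟨(fun t => (x.1.1 (j.succAbove t)).subtype p,
      x.1.2.image (Finset.subtype p)), ?_⟩,
    fun y => ⟨(j.insertNth T (fun t => (y.1.1 t).map (Function.Embedding.subtype p)),
      y.1.2.image (fun v => v.map (Function.Embedding.subtype p))), ?_, ?_⟩, ?_, ?_⟩
  · -- toFun : IsConf on the subtype
    dsimp only
    obtain ⟨⟨h1, h2, h3, h4, h5, h6, h7, h8⟩, hxj⟩ := x.2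
    have hBsub : ∀ i, i ≠ j → ∀ z ∈ x.1.1 i, p z := fun i hij z hz hzT =>
      (Finset.disjoint_left.mp (h3 i j hij)) hz (by rw [hxj]; exact hzT)
    have hPsub : ∀ u ∈ x.1.2, ∀ z ∈ u, p z := fun u hu z hz => by
      have := (h7 z).mp ⟨u, hu, hz⟩ j
      rwa [hxj] at this
    refine ⟨?_, ?_, ?_, ?_, ?_, ?_, ?_, ?_⟩
    · exact fun t => nonempty_subtype_of (hBsub _ (Fin.succAbove_ne j t)) (h1 _)
    · exact fun t => le_trans (le_of_eq (card_subtype_of (hBsub _ (Fin.succAbove_ne j t)))) (h2 _)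
    · exact fun t t' htt' => disjoint_subtype
        (h3 _ _ (fun h => htt' (Fin.succAbove_right_injective h)))
    · intro q hq
      obtain ⟨u, hu, rfl⟩ := Finset.mem_image.mp hq
      exact nonempty_subtype_of (hPsub u hu) (h4 u hu)
    · intro q hq
      obtain ⟨u, hu, rfl⟩ := Finset.mem_image.mp hq
      exact le_trans (le_of_eq (card_subtype_of (hPsub u hu))) (h5 u hu)
    · intro q hq q' hq' hne
      obtain ⟨u, hu, rfl⟩ := Finset.mem_image.mp hq
      obtain ⟨u', hu', rfl⟩ := Finset.mem_image.mp hq'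
      exact disjoint_subtype (h6 u hu u' hu' (fun h => hne (by rw [h])))
    · intro y
      constructor
      · rintro ⟨q, hq, hyq⟩ t
        obtain ⟨u, hu, rfl⟩ := Finset.mem_image.mp hq
        have hyu : (y : α) ∈ u := Finset.mem_subtype.mp hyq
        have := (h7 (y : α)).mp ⟨u, hu, hyu⟩ (j.succAbove t)
        exact fun hmem => this (Finset.mem_subtype.mp hmem)
      · intro hy
        have hyi : ∀ i, (y : α) ∉ x.1.1 i := by
          intro i
          rcases eq_or_ne i j with rfl | hij
          · rw [hxj]; exact y.2
          · obtain ⟨t, rfl⟩ := Fin.exists_succAbove_eq hij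
            exact fun hmem => hy t (Finset.mem_subtype.mpr hmem)
        obtain ⟨u, hu, hyu⟩ := (h7 (y : α)).mpr hyi
        exact ⟨u.subtype p, Finset.mem_image_of_mem _ hu, Finset.mem_subtype.mpr hyu⟩
    · rw [Finset.card_image_of_injOn, h8]
      intro u hu u' hu' h
      rw [← map_subtype_of (hPsub u hu), h, map_subtype_of (hPsub u' hu')]
  · -- invFun : IsConf
    dsimp only
    obtain ⟨g1, g2, g3, g4, g5, g6, g7, g8⟩ := y.2
    have hmapp : ∀ v : Finset {z : α // p z}, ∀ z ∈ v.map (Function.Embedding.subtype p), p z := by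
      intro v z hz
      exact ((mem_map_subtype z v).mp hz).1
    have hTd : ∀ v : Finset {z : α // p z}, Disjoint T (v.map (Function.Embedding.subtype p)) := by
      intro v
      rw [Finset.disjoint_right]
      exact fun z hz => hmapp v z hz
    refine ⟨?_, ?_, ?_, ?_, ?_, ?_, ?_, ?_⟩
    · intro i
      rcases eq_or_ne i j with rfl | hij
      · rw [Fin.insertNth_apply_same]
        exact Finset.insert_nonempty a S
      · obtain ⟨t, rfl⟩ := Fin.exists_succAbove_eq hij
        rw [Fin.insertNth_apply_succAbove]
        exact (g1 t).map
    · intro i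
      rcases eq_or_ne i j with rfl | hij
      · rw [Fin.insertNth_apply_same]
        rwa [hT, Finset.card_insert_of_notMem ha]
      · obtain ⟨t, rfl⟩ := Fin.exists_succAbove_eq hij
        rw [Fin.insertNth_apply_succAbove, Finset.card_map]
        exact g2 t
    · intro i i' hii'
      rcases eq_or_ne i j with rfl | hij
      · obtain ⟨t, rfl⟩ := Fin.exists_succAbove_eq hii'.symm
        rw [Fin.insertNth_apply_same, Fin.insertNth_apply_succAbove]
        exact hTd _
      · obtain ⟨t, rfl⟩ := Fin.exists_succAbove_eq hij
        rcases eq_or_ne i' j with rfl | hij'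
        · rw [Fin.insertNth_apply_same, Fin.insertNth_apply_succAbove]
          exact (hTd _).symm
        · obtain ⟨t', rfl⟩ := Fin.exists_succAbove_eq hij'
          rw [Fin.insertNth_apply_succAbove, Fin.insertNth_apply_succAbove]
          exact (Finset.disjoint_map _).mpr
            (g3 t t' (fun h => hii' (by rw [h])))
    · intro q hq
      obtain ⟨v, hv, rfl⟩ := Finset.mem_image.mp hq
      exact (g4 v hv).map
    · intro q hq
      obtain ⟨v, hv, rfl⟩ := Finset.mem_image.mp hq
      rw [Finset.card_map]
      exact g5 v hv
    · intro q hq q' hq' hne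
      obtain ⟨v, hv, rfl⟩ := Finset.mem_image.mp hq
      obtain ⟨v', hv', rfl⟩ := Finset.mem_image.mp hq'
      exact (Finset.disjoint_map _).mpr (g6 v hv v' hv' (fun h => hne (by rw [h])))
    · intro z
      by_cases hz : z ∈ T
      · constructor
        · rintro ⟨q, hq, hzq⟩
          obtain ⟨v, hv, rfl⟩ := Finset.mem_image.mp hq
          exact absurd hz (hmapp v z hzq)
        · intro h
          exfalso
          apply h j
          rw [Fin.insertNth_apply_same]
          exact hz
      · have hz' : p z := hz
        constructor
        · rintro ⟨q, hq, hzq⟩ i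
          obtain ⟨v, hv, rfl⟩ := Finset.mem_image.mp hq
          have hzv : (⟨z, hz'⟩ : {z // p z}) ∈ v := by
            obtain ⟨h', hm⟩ := (mem_map_subtype z v).mp hzq
            exact hm
          have := (g7 ⟨z, hz'⟩).mp ⟨v, hv, hzv⟩
          rcases eq_or_ne i j with rfl | hij
          · rw [Fin.insertNth_apply_same]
            exact hz
          · obtain ⟨t, rfl⟩ := Fin.exists_succAbove_eq hij
            rw [Fin.insertNth_apply_succAbove]
            intro hmem
            exact this t (((mem_map_subtype z _).mp hmem).2)
        · intro h
          have : ∀ t, (⟨z, hz'⟩ : {z // p z}) ∉ y.1.1 t := by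
            intro t hmem
            apply h (j.succAbove t)
            rw [Fin.insertNth_apply_succAbove]
            exact (mem_map_subtype z _).mpr ⟨hz', hmem⟩
          obtain ⟨v, hv, hzv⟩ := (g7 ⟨z, hz'⟩).mpr this
          exact ⟨v.map (Function.Embedding.subtype p), Finset.mem_image_of_mem _ hv,
            (mem_map_subtype z v).mpr ⟨hz', hzv⟩⟩
    · rw [Finset.card_image_of_injective _ (Finset.map_injective _), g8]
  · -- invFun : block at j is insert a S
    simp
  · -- left inverse
    intro x
    obtain ⟨⟨h1, h2, h3, h4, h5, h6, h7, h8⟩, hxj⟩ := x.2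
    have hBsub : ∀ i, i ≠ j → ∀ z ∈ x.1.1 i, p z := fun i hij z hz hzT =>
      (Finset.disjoint_left.mp (h3 i j hij)) hz (by rw [hxj]; exact hzT)
    have hPsub : ∀ u ∈ x.1.2, ∀ z ∈ u, p z := fun u hu z hz => by
      have := (h7 z).mp ⟨u, hu, hz⟩ j
      rwa [hxj] at this
    apply Subtype.ext
    dsimp only
    refine Prod.ext (funext fun i => ?_) ?_
    · dsimp only
      rcases eq_or_ne i j with rfl | hij
      · rw [Fin.insertNth_apply_same, hxj]
      · obtain ⟨t, rfl⟩ := Fin.exists_succAbove_eq hij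
        rw [Fin.insertNth_apply_succAbove]
        exact map_subtype_of (hBsub _ hij)
    · dsimp only
      rw [Finset.image_image]
      exact (Finset.image_congr (g := id)
        (fun u hu => map_subtype_of (hPsub u hu))).trans Finset.image_id
  · -- right inverse
    intro y
    apply Subtype.ext
    dsimp only
    refine Prod.ext (funext fun t => ?_) ?_
    · dsimp only
      rw [Fin.insertNth_apply_succAbove]
      exact subtype_map' _
    · dsimp only
      rw [Finset.image_image]
      exact (Finset.image_congr (g := id)
        (fun v hv => subtype_map' v)).trans Finset.image_id

lemma fiberB {m r b : ℕ} (a : α) (S : Finset α) (ha : a ∉ S) (hS : S.card + 1 ≤ m) :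
    Nat.card {x : (Fin b → Finset α) × Finset (Finset α) //
      IsConf m (r + 1) x.1 x.2 ∧ insert a S ∈ x.2} =
    confCount m b r {y : α // y ∉ insert a S} := by
  classical
  set T := insert a S with hT
  set p : α → Prop := fun z => z ∉ T with hp
  have haT : a ∈ T := Finset.mem_insert_self a S
  apply Nat.card_congr
  refine ⟨fun x => ⟨(fun i => (x.1.1 i).subtype p,
      (x.1.2.erase T).image (Finset.subtype p)), ?_⟩,
    fun y => ⟨(fun i => (y.1.1 i).map (Function.Embedding.subtype p),
      insert T (y.1.2.image (fun v => v.map (Function.Embedding.subtype p)))), ?_, ?_⟩, ?_, ?_⟩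
  · -- toFun : IsConf
    dsimp only
    obtain ⟨⟨h1, h2, h3, h4, h5, h6, h7, h8⟩, hxT⟩ := x.2
    have hBsub : ∀ i, ∀ z ∈ x.1.1 i, p z := fun i z hz hzT =>
      ((h7 z).mp ⟨T, hxT, hzT⟩) i hz
    have hPsub : ∀ u ∈ x.1.2.erase T, ∀ z ∈ u, p z := by
      intro u hu z hz
      have hu' := Finset.mem_of_mem_erase hu
      have hne := Finset.ne_of_mem_erase hu
      exact fun hzT => Finset.disjoint_left.mp (h6 u hu' T hxT hne) hz hzT
    refine ⟨?_, ?_, ?_, ?_, ?_, ?_, ?_, ?_⟩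
    · exact fun i => nonempty_subtype_of (hBsub i) (h1 i)
    · exact fun i => le_trans (le_of_eq (card_subtype_of (hBsub i))) (h2 i)
    · exact fun i i' hii' => disjoint_subtype (h3 i i' hii')
    · intro q hq
      obtain ⟨u, hu, rfl⟩ := Finset.mem_image.mp hq
      exact nonempty_subtype_of (hPsub u hu) (h4 u (Finset.mem_of_mem_erase hu))
    · intro q hq
      obtain ⟨u, hu, rfl⟩ := Finset.mem_image.mp hq
      exact le_trans (le_of_eq (card_subtype_of (hPsub u hu))) (h5 u (Finset.mem_of_mem_erase hu))
    · intro q hq q' hq' hne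
      obtain ⟨u, hu, rfl⟩ := Finset.mem_image.mp hq
      obtain ⟨u', hu', rfl⟩ := Finset.mem_image.mp hq'
      exact disjoint_subtype (h6 u (Finset.mem_of_mem_erase hu) u'
        (Finset.mem_of_mem_erase hu') (fun h => hne (by rw [h])))
    · intro y
      constructor
      · rintro ⟨q, hq, hyq⟩ i
        obtain ⟨u, hu, rfl⟩ := Finset.mem_image.mp hq
        have hyu : (y : α) ∈ u := Finset.mem_subtype.mp hyq
        have := (h7 (y : α)).mp ⟨u, Finset.mem_of_mem_erase hu, hyu⟩ i
        exact fun hmem => this (Finset.mem_subtype.mp hmem)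
      · intro hy
        have hyi : ∀ i, (y : α) ∉ x.1.1 i :=
          fun i hmem => hy i (Finset.mem_subtype.mpr hmem)
        obtain ⟨u, hu, hyu⟩ := (h7 (y : α)).mpr hyi
        have huT : u ≠ T := fun h => y.2 (h ▸ hyu)
        exact ⟨u.subtype p, Finset.mem_image_of_mem _ (Finset.mem_erase.mpr ⟨huT, hu⟩),
          Finset.mem_subtype.mpr hyu⟩
    · have hinj : Set.InjOn (Finset.subtype p) ((x.1.2.erase T : Finset (Finset α)) : Set (Finset α)) := by
        intro u hu u' hu' h
        rw [← map_subtype_of (hPsub u hu), h, map_subtype_of (hPsub u' hu')]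
      rw [Finset.card_image_of_injOn hinj, Finset.card_erase_of_mem hxT, h8]
      omega
  · -- invFun : IsConf
    dsimp only
    obtain ⟨g1, g2, g3, g4, g5, g6, g7, g8⟩ := y.2
    have hmapp : ∀ v : Finset {z : α // p z}, ∀ z ∈ v.map (Function.Embedding.subtype p), p z :=
      fun v z hz => ((mem_map_subtype z v).mp hz).1
    have hTd : ∀ v : Finset {z : α // p z}, Disjoint T (v.map (Function.Embedding.subtype p)) := by
      intro v
      rw [Finset.disjoint_right]
      exact fun z hz => hmapp v z hz
    have hTnot : T ∉ y.1.2.image (fun v => v.map (Function.Embedding.subtype p)) := by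
      intro h
      obtain ⟨v, hv, hvT⟩ := Finset.mem_image.mp h
      exact hmapp v a (hvT.symm ▸ haT) haT
    refine ⟨?_, ?_, ?_, ?_, ?_, ?_, ?_, ?_⟩
    · exact fun i => (g1 i).map
    · intro i; rw [Finset.card_map]; exact g2 i
    · exact fun i i' hii' => (Finset.disjoint_map _).mpr (g3 i i' hii')
    · intro q hq
      rcases Finset.mem_insert.mp hq with rfl | hq'
      · exact Finset.insert_nonempty a S
      · obtain ⟨v, hv, rfl⟩ := Finset.mem_image.mp hq'
        exact (g4 v hv).map
    · intro q hq
      rcases Finset.mem_insert.mp hq with rfl | hq'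
      · rwa [hT, Finset.card_insert_of_notMem ha]
      · obtain ⟨v, hv, rfl⟩ := Finset.mem_image.mp hq'
        rw [Finset.card_map]; exact g5 v hv
    · intro q hq q' hq' hne
      rcases Finset.mem_insert.mp hq with rfl | hq1
      · rcases Finset.mem_insert.mp hq' with rfl | hq2
        · exact absurd rfl hne
        · obtain ⟨v, hv, rfl⟩ := Finset.mem_image.mp hq2
          exact hTd v
      · obtain ⟨v, hv, rfl⟩ := Finset.mem_image.mp hq1
        rcases Finset.mem_insert.mp hq' with rfl | hq2
        · exact (hTd v).symm
        · obtain ⟨v', hv', rfl⟩ := Finset.mem_image.mp hq2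
          exact (Finset.disjoint_map _).mpr (g6 v hv v' hv' (fun h => hne (by rw [h])))
    · intro z
      by_cases hz : z ∈ T
      · constructor
        · intro _ i hmem
          exact hmapp _ z hmem hz
        · intro _
          exact ⟨T, Finset.mem_insert_self _ _, hz⟩
      · have hz' : p z := hz
        constructor
        · rintro ⟨q, hq, hzq⟩ i
          rcases Finset.mem_insert.mp hq with rfl | hq'
          · exact absurd hzq hz
          · obtain ⟨v, hv, rfl⟩ := Finset.mem_image.mp hq'
            have hzv := ((mem_map_subtype z v).mp hzq).2
            have := (g7 ⟨z, hz'⟩).mp ⟨v, hv, hzv⟩ i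
            exact fun hmem => this (((mem_map_subtype z _).mp hmem).2)
        · intro h
          have : ∀ t, (⟨z, hz'⟩ : {z // p z}) ∉ y.1.1 t := by
            intro t hmem
            exact h t ((mem_map_subtype z _).mpr ⟨hz', hmem⟩)
          obtain ⟨v, hv, hzv⟩ := (g7 ⟨z, hz'⟩).mpr this
          exact ⟨v.map (Function.Embedding.subtype p),
            Finset.mem_insert_of_mem (Finset.mem_image_of_mem _ hv),
            (mem_map_subtype z v).mpr ⟨hz', hzv⟩⟩
    · rw [Finset.card_insert_of_notMem hTnot,
        Finset.card_image_of_injective _ (Finset.map_injective _), g8]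
  · -- invFun : T is a part
    exact Finset.mem_insert_self _ _
  · -- left inverse
    intro x
    obtain ⟨⟨h1, h2, h3, h4, h5, h6, h7, h8⟩, hxT⟩ := x.2
    have hBsub : ∀ i, ∀ z ∈ x.1.1 i, p z := fun i z hz hzT =>
      ((h7 z).mp ⟨T, hxT, hzT⟩) i hz
    have hPsub : ∀ u ∈ x.1.2.erase T, ∀ z ∈ u, p z := by
      intro u hu z hz
      have hu' := Finset.mem_of_mem_erase hu
      have hne := Finset.ne_of_mem_erase hu
      exact fun hzT => Finset.disjoint_left.mp (h6 u hu' T hxT hne) hz hzT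
    apply Subtype.ext
    dsimp only
    refine Prod.ext (funext fun i => ?_) ?_
    · dsimp only
      exact map_subtype_of (hBsub i)
    · dsimp only
      rw [Finset.image_image]
      have himg : Finset.image ((fun v => v.map (Function.Embedding.subtype p)) ∘ Finset.subtype p)
          (x.1.2.erase T) = x.1.2.erase T :=
        (Finset.image_congr (g := id)
          (fun u hu => map_subtype_of (hPsub u hu))).trans Finset.image_id
      rw [himg]
      exact Finset.insert_erase hxT
  · -- right inverse
    intro y
    obtain ⟨g1, g2, g3, g4, g5, g6, g7, g8⟩ := y.2
    have hmapp : ∀ v : Finset {z : α // p z}, ∀ z ∈ v.map (Function.Embedding.subtype p), p z :=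
      fun v z hz => ((mem_map_subtype z v).mp hz).1
    have hTnot : T ∉ y.1.2.image (fun v => v.map (Function.Embedding.subtype p)) := by
      intro h
      obtain ⟨v, hv, hvT⟩ := Finset.mem_image.mp h
      exact hmapp v a (hvT.symm ▸ haT) haT
    apply Subtype.ext
    dsimp only
    refine Prod.ext (funext fun t => ?_) ?_
    · dsimp only
      exact subtype_map' _
    · dsimp only
      rw [Finset.erase_insert hTnot, Finset.image_image]
      exact (Finset.image_congr (g := id)
        (fun v hv => subtype_map' v)).trans Finset.image_id

end Fiber

lemma compl_card {n : ℕ} (a : Fin (n + 1)) (S : Finset (Fin (n + 1))) (haS : a ∉ S) :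
    Fintype.card {y : Fin (n + 1) // y ∉ insert a S} = n - S.card := by
  classical
  rw [Fintype.card_subtype]
  have : (Finset.univ.filter fun y : Fin (n + 1) => y ∉ insert a S) = univ \ insert a S := by
    rw [Finset.sdiff_eq_filter]
  rw [this, Finset.card_sdiff_of_subset (Finset.subset_univ _), Finset.card_insert_of_notMem haS,
    Finset.card_univ, Fintype.card_fin]
  omega

lemma compl_confCount {n : ℕ} (a : Fin (n + 1)) (S : Finset (Fin (n + 1))) (haS : a ∉ S)
    (m b' r' : ℕ) :
    confCount m b' r' {y : Fin (n + 1) // y ∉ insert a S} = confCount m b' r' (Fin (n - S.card)) := by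
  classical
  rw [confCount_congr m b' r' (Fintype.equivFin {y : Fin (n + 1) // y ∉ insert a S}),
    compl_card a S haS]

lemma confCount_succ (m b r n : ℕ) :
    confCount m b (r + 1) (Fin (n + 1)) =
      ∑ i ∈ Finset.range m, n.choose i *
        (b * confCount m (b - 1) (r + 1) (Fin (n - i)) + confCount m b r (Fin (n - i))) := by
  classical
  set a : Fin (n + 1) := 0 with ha0
  set D := (Fin b → Finset (Fin (n + 1))) × Finset (Finset (Fin (n + 1))) with hD
  set A : Finset (Finset (Fin (n + 1))) :=
    (Finset.univ.erase a).powerset.filter (fun S => S.card + 1 ≤ m) with hA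
  have hAmem : ∀ S ∈ A, a ∉ S ∧ S.card + 1 ≤ m := by
    intro S hS
    rw [hA, Finset.mem_filter, Finset.mem_powerset] at hS
    exact ⟨fun h => (Finset.mem_erase.mp (hS.1 h)).1 rfl, hS.2⟩
  have hcount : confCount m b (r + 1) (Fin (n + 1)) =
      (Finset.univ.filter fun x : D => IsConf m (r + 1) x.1 x.2).card := by
    rw [confCount, Nat.card_eq_fintype_card, Fintype.card_subtype]
  -- piece A
  have pieceA : (Finset.univ.filter fun x : D =>
        IsConf m (r + 1) x.1 x.2 ∧ ∃ jj, a ∈ x.1 jj).card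
      = ∑ S ∈ A, b * confCount m (b - 1) (r + 1) (Fin (n - S.card)) := by
    rcases b with _ | b'
    · rw [Finset.filter_false_of_mem, Finset.card_empty]
      · simp
      · rintro x - ⟨-, jj, -⟩
        exact jj.elim0
    · set φ : D → Fin (b' + 1) × Finset (Fin (n + 1)) := fun x =>
        if h : ∃ jj, a ∈ x.1 jj then (h.choose, (x.1 h.choose).erase a) else (0, ∅) with hφ
      have hmaps : ∀ x ∈ (Finset.univ.filter fun x : D =>
          IsConf m (r + 1) x.1 x.2 ∧ ∃ jj, a ∈ x.1 jj), φ x ∈ Finset.univ ×ˢ A := by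
        intro x hx
        obtain ⟨-, hC, hq⟩ := Finset.mem_filter.mp hx
        rw [hφ]
        dsimp only
        rw [dif_pos hq]
        refine Finset.mem_product.mpr ⟨Finset.mem_univ _, ?_⟩
        rw [hA, Finset.mem_filter, Finset.mem_powerset]
        have hac := hq.choose_spec
        constructor
        · intro z hz
          exact Finset.mem_erase.mpr ⟨(Finset.mem_erase.mp hz).1, Finset.mem_univ z⟩
        · have h1 : 1 ≤ (x.1 hq.choose).card := Finset.card_pos.mpr ⟨a, hac⟩
          have h2 := hC.2.1 hq.choose
          rw [Finset.card_erase_of_mem hac]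
          omega
      rw [Finset.card_eq_sum_card_fiberwise hmaps, Finset.sum_product]
      have hfib : ∀ j : Fin (b' + 1), ∀ S ∈ A,
          ((Finset.univ.filter fun x : D => IsConf m (r + 1) x.1 x.2 ∧ ∃ jj, a ∈ x.1 jj).filter
            (fun x => φ x = (j, S))).card
          = confCount m b' (r + 1) (Fin (n - S.card)) := by
        intro j S hS
        obtain ⟨haS, hSm⟩ := hAmem S hS
        have hset : ((Finset.univ.filter fun x : D =>
            IsConf m (r + 1) x.1 x.2 ∧ ∃ jj, a ∈ x.1 jj).filter (fun x => φ x = (j, S)))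
            = Finset.univ.filter (fun x : D => IsConf m (r + 1) x.1 x.2 ∧ x.1 j = insert a S) := by
          ext x
          simp only [Finset.mem_filter, Finset.mem_univ, true_and]
          constructor
          · rintro ⟨⟨hC, hq⟩, hφx⟩
            rw [hφ] at hφx
            dsimp only at hφx
            rw [dif_pos hq] at hφx
            have h1 : hq.choose = j := congrArg Prod.fst hφx
            have h2 : (x.1 hq.choose).erase a = S := congrArg Prod.snd hφx
            have hac := hq.choose_spec
            rw [h1] at h2 hac
            refine ⟨hC, ?_⟩
            rw [← h2, Finset.insert_erase hac]
          · rintro ⟨hC, hj⟩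
            have hac : a ∈ x.1 j := by rw [hj]; exact Finset.mem_insert_self a S
            have hq : ∃ jj, a ∈ x.1 jj := ⟨j, hac⟩
            refine ⟨⟨hC, hq⟩, ?_⟩
            rw [hφ]
            dsimp only
            rw [dif_pos hq]
            have hcj : hq.choose = j := by
              by_contra hne
              exact Finset.disjoint_left.mp (hC.2.2.1 _ _ hne) hq.choose_spec hac
            rw [hcj, hj, Finset.erase_insert haS]
        rw [hset]
        have : (Finset.univ.filter (fun x : D =>
            IsConf m (r + 1) x.1 x.2 ∧ x.1 j = insert a S)).card
            = Nat.card {x : D // IsConf m (r + 1) x.1 x.2 ∧ x.1 j = insert a S} := by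
          rw [Nat.card_eq_fintype_card, Fintype.card_subtype]
        rw [this, fiberA a S haS hSm j, compl_confCount a S haS]
      calc ∑ j : Fin (b' + 1), ∑ S ∈ A,
            ((Finset.univ.filter fun x : D => IsConf m (r + 1) x.1 x.2 ∧ ∃ jj, a ∈ x.1 jj).filter
              (fun x => φ x = (j, S))).card
          = ∑ j : Fin (b' + 1), ∑ S ∈ A, confCount m b' (r + 1) (Fin (n - S.card)) := by
            refine Finset.sum_congr rfl fun j _ => Finset.sum_congr rfl fun S hS => hfib j S hS
        _ = ∑ S ∈ A, (b' + 1) * confCount m (b' + 1 - 1) (r + 1) (Fin (n - S.card)) := by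
            rw [Finset.sum_const, Finset.card_univ, Fintype.card_fin, smul_eq_mul,
              Finset.mul_sum]
            simp
  -- piece B
  have pieceB : (Finset.univ.filter fun x : D =>
        IsConf m (r + 1) x.1 x.2 ∧ ¬ ∃ jj, a ∈ x.1 jj).card
      = ∑ S ∈ A, confCount m b r (Fin (n - S.card)) := by
    set ψ : D → Finset (Fin (n + 1)) := fun x =>
      if h : ∃ u ∈ x.2, a ∈ u then h.choose.erase a else ∅ with hψ
    have hmaps : ∀ x ∈ (Finset.univ.filter fun x : D =>
        IsConf m (r + 1) x.1 x.2 ∧ ¬ ∃ jj, a ∈ x.1 jj), ψ x ∈ A := by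
      intro x hx
      obtain ⟨-, hC, hq⟩ := Finset.mem_filter.mp hx
      have hex : ∃ u ∈ x.2, a ∈ u := by
        refine (hC.2.2.2.2.2.2.1 a).mpr ?_
        intro i hi
        exact hq ⟨i, hi⟩
      rw [hψ]
      dsimp only
      rw [dif_pos hex]
      obtain ⟨hu, hau⟩ := hex.choose_spec
      rw [hA, Finset.mem_filter, Finset.mem_powerset]
      constructor
      · intro z hz
        exact Finset.mem_erase.mpr ⟨(Finset.mem_erase.mp hz).1, Finset.mem_univ z⟩
      · have h1 : 1 ≤ hex.choose.card := Finset.card_pos.mpr ⟨a, hau⟩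
        have h2 := hC.2.2.2.2.1 _ hu
        rw [Finset.card_erase_of_mem hau]
        omega
    rw [Finset.card_eq_sum_card_fiberwise hmaps]
    refine Finset.sum_congr rfl ?_
    intro S hS
    obtain ⟨haS, hSm⟩ := hAmem S hS
    have hset : ((Finset.univ.filter fun x : D =>
        IsConf m (r + 1) x.1 x.2 ∧ ¬ ∃ jj, a ∈ x.1 jj).filter (fun x => ψ x = S))
        = Finset.univ.filter (fun x : D => IsConf m (r + 1) x.1 x.2 ∧ insert a S ∈ x.2) := by
      ext x
      simp only [Finset.mem_filter, Finset.mem_univ, true_and]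
      constructor
      · rintro ⟨⟨hC, hq⟩, hψx⟩
        have hex : ∃ u ∈ x.2, a ∈ u := by
          refine (hC.2.2.2.2.2.2.1 a).mpr ?_
          intro i hi
          exact hq ⟨i, hi⟩
        rw [hψ] at hψx
        dsimp only at hψx
        rw [dif_pos hex] at hψx
        obtain ⟨hu, hau⟩ := hex.choose_spec
        refine ⟨hC, ?_⟩
        rw [← hψx, Finset.insert_erase hau]
        exact hu
      · rintro ⟨hC, hT⟩
        have haT : a ∈ insert a S := Finset.mem_insert_self a S
        have hq : ¬ ∃ jj, a ∈ x.1 jj := by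
          rintro ⟨jj, hjj⟩
          exact (hC.2.2.2.2.2.2.1 a).mp ⟨insert a S, hT, haT⟩ jj hjj
        have hex : ∃ u ∈ x.2, a ∈ u := ⟨insert a S, hT, haT⟩
        refine ⟨⟨hC, hq⟩, ?_⟩
        rw [hψ]
        dsimp only
        rw [dif_pos hex]
        obtain ⟨hu, hau⟩ := hex.choose_spec
        have heq : hex.choose = insert a S := by
          by_contra hne
          exact Finset.disjoint_left.mp (hC.2.2.2.2.2.1 _ hu _ hT hne) hau haT
        rw [heq, Finset.erase_insert haS]
    rw [hset]
    have : (Finset.univ.filter (fun x : D =>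
        IsConf m (r + 1) x.1 x.2 ∧ insert a S ∈ x.2)).card
        = Nat.card {x : D // IsConf m (r + 1) x.1 x.2 ∧ insert a S ∈ x.2} := by
      rw [Nat.card_eq_fintype_card, Fintype.card_subtype]
    rw [this, fiberB a S haS hSm, compl_confCount a S haS]
  -- combine
  have hsplit : (Finset.univ.filter fun x : D => IsConf m (r + 1) x.1 x.2).card
      = ∑ S ∈ A, (b * confCount m (b - 1) (r + 1) (Fin (n - S.card))
          + confCount m b r (Fin (n - S.card))) := by
    rw [← Finset.card_filter_add_card_filter_not
      (s := Finset.univ.filter fun x : D => IsConf m (r + 1) x.1 x.2)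
      (fun x => ∃ jj, a ∈ x.1 jj), Finset.filter_filter, Finset.filter_filter,
      Finset.sum_add_distrib]
    rw [pieceA, pieceB]
  rw [hcount, hsplit]
  -- regroup by cardinality
  rw [← Finset.sum_fiberwise_of_maps_to (g := Finset.card) (t := Finset.range m)
    (fun S hS => Finset.mem_range.mpr (by have := (hAmem S hS).2; omega))]
  refine Finset.sum_congr rfl ?_
  intro i hi
  have hfilter : A.filter (fun S => S.card = i) = (Finset.univ.erase a).powersetCard i := by
    ext S
    rw [Finset.mem_filter, hA, Finset.mem_filter, Finset.mem_powerset,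
      Finset.mem_powersetCard]
    constructor
    · rintro ⟨⟨h1, _⟩, h3⟩; exact ⟨h1, h3⟩
    · rintro ⟨h1, rfl⟩
      exact ⟨⟨h1, by have := Finset.mem_range.mp hi; omega⟩, rfl⟩
  rw [hfilter]
  have hc : ((Finset.univ.erase a).powersetCard i).card = n.choose i := by
    rw [Finset.card_powersetCard, Finset.card_erase_of_mem (Finset.mem_univ a),
      Finset.card_univ, Fintype.card_fin]
    simp
  calc ∑ S ∈ (Finset.univ.erase a).powersetCard i,
        (b * confCount m (b - 1) (r + 1) (Fin (n - S.card)) + confCount m b r (Fin (n - S.card)))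
      = ∑ _S ∈ (Finset.univ.erase a).powersetCard i,
        (b * confCount m (b - 1) (r + 1) (Fin (n - i)) + confCount m b r (Fin (n - i))) := by
        refine Finset.sum_congr rfl ?_
        intro S hS
        rw [(Finset.mem_powersetCard.mp hS).2]
    _ = n.choose i * (b * confCount m (b - 1) (r + 1) (Fin (n - i)) + confCount m b r (Fin (n - i))) := by
        rw [Finset.sum_const, hc, smul_eq_mul]

theorem mixedStirlingLe_recurrence (n m k r : ℕ)
    (hn : 1 ≤ n) (hm : 1 ≤ m) (hk : 1 ≤ k) (hr : 1 ≤ r) :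
    mixedStirlingLe m n k r =
      ∑ i ∈ Finset.range m,
        (n - 1).choose i *
          ((k - 1) * mixedStirlingLe m (n - i - 1) (k - 1) r +
            mixedStirlingLe m (n - i - 1) k (r - 1)) := by
  obtain ⟨n0, rfl⟩ : ∃ n0, n = n0 + 1 := ⟨n - 1, by omega⟩
  obtain ⟨k0, rfl⟩ : ∃ k0, k = k0 + 1 := ⟨k - 1, by omega⟩
  obtain ⟨r0, rfl⟩ : ∃ r0, r = r0 + 1 := ⟨r - 1, by omega⟩
  rw [mixedStirlingLe_eq_confCount]
  have hk1 : k0 + 1 - 1 = k0 := by omega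
  rw [hk1, confCount_succ]
  refine Finset.sum_congr rfl ?_
  intro i hi
  have h1 : n0 + 1 - 1 = n0 := by omega
  have h2 : n0 + 1 - i - 1 = n0 - i := by omega
  have h3 : r0 + 1 - 1 = r0 := by omega
  rw [h1, h2, h3, mixedStirlingLe_eq_confCount m (n0 - i) k0 (r0 + 1),
    mixedStirlingLe_eq_confCount m (n0 - i) (k0 + 1) r0, hk1]
end

section
/- For positive integers n, m, k and r, the mixed restricted Stirling numbers of the second kind satisfy S_{≤m}(n,k,r) = S_{≤m}(n−1,k,r−1) + (k−1)·S_{≤m}(n−1,k−1,r) + (k+r−1)·S_{≤m}(n−1,k,r) − (n−1 choose m)·S_{≤m}(n−m−1,k,r−1) − (k−1)·(n−1 choose m)·S_{≤m}(n−m−1,k−1,r), where terms whose first argument is negative are taken to be 0, the binomial coefficient (n−1 choose m) is 0 when m > n−1, and the terms carrying the factor (k−1) are taken to be 0 when k = 1. -/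
open Finset


namespace MixedAux
open scoped Classical

noncomputable section

variable {α α' β β' : Type*}

/-- The fiber of `f` over `c` as a `Finset`. -/
def fib [Fintype α] (f : α → β) (c : β) : Finset α :=
  Finset.univ.filter fun x => f x = c

@[simp] lemma mem_fib [Fintype α] {f : α → β} {c : β} {x : α} :
    x ∈ fib f c ↔ f x = c := by simp [fib]

/-- Every fiber is nonempty and has at most `m` elements. -/
def IsGood [Fintype α] (m : ℕ) (f : α → β) : Prop :=
  ∀ c, (fib f c).Nonempty ∧ (fib f c).card ≤ m

lemma fib_conj [Fintype α] [Fintype α'] (e : α ≃ α') (e' : β ≃ β') (f : α → β) (c : β') :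
    fib (e' ∘ f ∘ e.symm) c = (fib f (e'.symm c)).image e := by
  ext x
  simp only [mem_fib, Finset.mem_image, Function.comp_apply]
  constructor
  · intro h
    exact ⟨e.symm x, by rw [← h]; simp, by simp⟩
  · rintro ⟨a, h1, rfl⟩
    simp [h1]

lemma isGood_conj [Fintype α] [Fintype α'] (e : α ≃ α') (e' : β ≃ β') {m : ℕ} {f : α → β} :
    IsGood m (e' ∘ f ∘ e.symm) ↔ IsGood m f := by
  constructor
  · intro h c
    have := h (e' c)
    rwa [fib_conj, Equiv.symm_apply_apply, Finset.image_nonempty,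
      Finset.card_image_of_injective _ e.injective] at this
  · intro h c
    rw [fib_conj, Finset.image_nonempty, Finset.card_image_of_injective _ e.injective]
    exact h _

/-- Transport of good functions along equivalences. -/
def goodEquiv [Fintype α] [Fintype α'] (m : ℕ) (e : α ≃ α') (e' : β ≃ β') :
    {f : α → β // IsGood m f} ≃ {f : α' → β' // IsGood m f} where
  toFun f := ⟨e' ∘ f.1 ∘ e.symm, (isGood_conj e e').2 f.2⟩
  invFun g := ⟨e'.symm ∘ g.1 ∘ e, by
    have := (isGood_conj e.symm e'.symm (m := m) (f := g.1)).2 g.2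
    simpa using this⟩
  left_inv f := by ext x; simp
  right_inv g := by ext x; simp

/-- The number of functions `Fin a → Fin t` all of whose fibers are nonempty of size `≤ m`. -/
def GC (m a t : ℕ) : ℕ := Nat.card {f : Fin a → Fin t // IsGood m f}

lemma natCard_goodFun (m : ℕ) (α β : Type*) [Fintype α] [Fintype β] :
    Nat.card {f : α → β // IsGood m f} = GC m (Fintype.card α) (Fintype.card β) :=
  Nat.card_congr (goodEquiv m (Fintype.equivFin α) (Fintype.equivFin β))

lemma natCard_sigma_const {ι : Type*} [Finite ι] (f : ι → Type*) [∀ i, Finite (f i)]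
    (c : ℕ) (h : ∀ i, Nat.card (f i) = c) :
    Nat.card (Σ i, f i) = Nat.card ι * c := by
  letI : Fintype ι := Fintype.ofFinite ι
  letI : ∀ i, Fintype (f i) := fun i => Fintype.ofFinite (f i)
  simp only [Nat.card_eq_fintype_card, Fintype.card_sigma]
  simp only [← Nat.card_eq_fintype_card, h]
  simp [Finset.sum_const, Nat.card_eq_fintype_card, mul_comm]


section ext

variable [Fintype α]

/-- Extend `g` to `Option α` by sending `none` to `c`. -/
def extO (c : β) (g : α → β) : Option α → β := fun o => o.elim c g

lemma fib_extO_ne {c c' : β} (h : c' ≠ c) (g : α → β) :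
    fib (extO c g) c' = (fib g c').image some := by
  ext o
  cases o with
  | none => simp [extO, h.symm]
  | some a => simp [extO]

lemma fib_extO_self (c : β) (g : α → β) :
    fib (extO c g) c = insert none ((fib g c).image some) := by
  ext o
  cases o with
  | none => simp [extO]
  | some a => simp [extO]

lemma isGood_extO {m : ℕ} (c : β) (g : α → β) :
    IsGood m (extO c g) ↔
      ((∀ c', c' ≠ c → ((fib g c').Nonempty ∧ (fib g c').card ≤ m)) ∧
        (fib g c).card + 1 ≤ m) := by
  have hcard : (fib (extO c g) c).card = (fib g c).card + 1 := by
    rw [fib_extO_self, Finset.card_insert_of_notMem (by simp),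
      Finset.card_image_of_injective _ (Option.some_injective α)]
  constructor
  · intro h
    refine ⟨fun c' hc' => ?_, ?_⟩
    · have := h c'
      rwa [fib_extO_ne hc', Finset.image_nonempty,
        Finset.card_image_of_injective _ (Option.some_injective α)] at this
    · have := (h c).2
      omega
  · rintro ⟨h1, h2⟩ c'
    by_cases hc' : c' = c
    · subst hc'
      refine ⟨⟨none, by rw [fib_extO_self]; simp⟩, by omega⟩
    · rw [fib_extO_ne hc', Finset.image_nonempty,
        Finset.card_image_of_injective _ (Option.some_injective α)]
      exact h1 c' hc'

/-- Peeling off the value at `none`. -/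
def optionEquiv (m : ℕ) :
    {f : Option α → β // IsGood m f} ≃ Σ c : β, {g : α → β // IsGood m (extO c g)} where
  toFun f := ⟨f.1 none, fun a => f.1 (some a), by
    have h : extO (f.1 none) (fun a => f.1 (some a)) = f.1 :=
      funext fun o => by cases o <;> rfl
    rw [h]; exact f.2⟩
  invFun x := ⟨extO x.1 x.2.1, x.2.2⟩
  left_inv f := by
    apply Subtype.ext
    funext o
    cases o <;> rfl
  right_inv x := rfl

end ext


lemma natCard_sigma {ι : Type*} [Fintype ι] (f : ι → Type*) [∀ i, Finite (f i)] :
    Nat.card (Σ i, f i) = ∑ i : ι, Nat.card (f i) := by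
  letI : ∀ i, Fintype (f i) := fun i => Fintype.ofFinite (f i)
  simp [Nat.card_eq_fintype_card, Fintype.card_sigma]

lemma natCard_subtype_split {γ : Type*} [Finite γ] (p q : γ → Prop) :
    Nat.card {x // p x} = Nat.card {x // p x ∧ q x} + Nat.card {x // p x ∧ ¬ q x} := by
  rw [← Nat.card_sum]
  refine Nat.card_congr ?_
  exact ((Equiv.sumCompl (fun x : {x // p x} => q x.1)).symm.trans
    (Equiv.sumCongr (Equiv.subtypeSubtypeEquivSubtypeInter p q)
      (Equiv.subtypeSubtypeEquivSubtypeInter p (fun x => ¬ q x))))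

variable [Fintype α]

lemma fib_val_eq {c : β} (h : α → {b : β // b ≠ c}) (c'' : {b : β // b ≠ c}) :
    fib (fun a => (h a).1) c''.1 = fib h c'' := by
  ext a; simp [Subtype.ext_iff]

/-- Case where the fiber of `c` is just the new element. -/
def emptyFibEquiv (m : ℕ) (hm : 1 ≤ m) (c : β) :
    {g : α → β // IsGood m (extO c g) ∧ ¬ (fib g c).Nonempty} ≃
      {h : α → {b : β // b ≠ c} // IsGood m h} where
  toFun g := ⟨fun a => ⟨g.1 a, fun hc => by
      exact g.2.2 ⟨a, mem_fib.2 hc⟩⟩, by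
    intro c''
    rw [← fib_val_eq]
    exact ((isGood_extO c g.1).1 g.2.1).1 c''.1 c''.2⟩
  invFun h := ⟨fun a => (h.1 a).1, by
    have hempty : ¬ (fib (fun a => (h.1 a).1) c).Nonempty := by
      rintro ⟨a, ha⟩
      simp only [mem_fib] at ha
      exact (h.1 a).2 ha
    refine ⟨(isGood_extO c _).2 ⟨fun c' hc' => ?_, ?_⟩, hempty⟩
    · rw [show c' = (⟨c', hc'⟩ : {b : β // b ≠ c}).1 from rfl, fib_val_eq]
      exact h.2 _
    · rw [Finset.not_nonempty_iff_eq_empty] at hempty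
      rw [hempty]
      simpa using hm⟩
  left_inv g := by apply Subtype.ext; funext a; rfl
  right_inv h := by apply Subtype.ext; funext a; apply Subtype.ext; rfl

lemma partB_iff (m : ℕ) (c : β) (g : α → β) :
    (IsGood m (extO c g) ∧ (fib g c).Nonempty) ↔ (IsGood m g ∧ (fib g c).card + 1 ≤ m) := by
  rw [isGood_extO]
  constructor
  · rintro ⟨⟨h1, h2⟩, hne⟩
    refine ⟨fun c' => ?_, h2⟩
    by_cases hc : c' = c
    · subst hc; exact ⟨hne, by omega⟩
    · exact h1 c' hc
  · rintro ⟨hg, h2⟩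
    exact ⟨⟨fun c' _ => hg c', h2⟩, (hg c).1⟩

lemma bad_iff (m : ℕ) (c : β) (g : α → β) :
    (IsGood m g ∧ ¬ ((fib g c).card + 1 ≤ m)) ↔ (IsGood m g ∧ (fib g c).card = m) := by
  constructor
  · rintro ⟨hg, h⟩
    have := (hg c).2
    exact ⟨hg, by omega⟩
  · rintro ⟨hg, h⟩
    exact ⟨hg, by omega⟩


section bad
variable (m : ℕ) (c : β)

/-- The projection sending a good function with `c`-fiber of size `m` to that fiber. -/
def badProj (g : {g : α → β // IsGood m g ∧ (fib g c).card = m}) : {S : Finset α // S.card = m} :=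
  ⟨fib g.1 c, g.2.2⟩

variable {c}

def restrictF (S : Finset α) (g : α → β) (pf : ∀ a : α, a ∉ S → g a ≠ c) :
    {a : α // a ∉ S} → {b : β // b ≠ c} :=
  fun a => ⟨g a.1, pf a.1 a.2⟩

def unrestrictF (S : Finset α) (h : {a : α // a ∉ S} → {b : β // b ≠ c}) : α → β :=
  fun a => if ha : a ∈ S then c else (h ⟨a, ha⟩).1

lemma avoid_of_fib {g : α → β} {S : Finset α} (hfib : fib g c = S) :
    ∀ a : α, a ∉ S → g a ≠ c := by
  intro a ha hc
  exact ha (hfib ▸ mem_fib.2 hc)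

lemma fib_unrestrictF_self (S : Finset α) (h : {a : α // a ∉ S} → {b : β // b ≠ c}) :
    fib (unrestrictF S h) c = S := by
  ext a
  simp only [mem_fib, unrestrictF]
  by_cases ha : a ∈ S
  · simp [ha]
  · simp only [dif_neg ha]
    exact ⟨fun hc => absurd hc (h ⟨a, ha⟩).2, fun hc => absurd hc ha⟩

lemma fib_restrictF {S : Finset α} {g : α → β} (hfib : fib g c = S) (pf : ∀ a : α, a ∉ S → g a ≠ c) (c'' : {b : β // b ≠ c}) :
    fib g c''.1 = (fib (restrictF S g pf) c'').image Subtype.val := by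
  ext a
  simp only [mem_fib, Finset.mem_image]
  constructor
  · intro hx
    have haS : a ∉ S := by
      intro haS
      have hac : g a = c := mem_fib.1 (hfib ▸ haS)
      exact c''.2 (by rw [← hx, hac])
    exact ⟨⟨a, haS⟩, Subtype.ext hx, rfl⟩
  · rintro ⟨x, hx, rfl⟩
    exact congrArg Subtype.val hx

lemma unrestrictF_restrictF {S : Finset α} {g : α → β} (hfib : fib g c = S) (pf : ∀ a : α, a ∉ S → g a ≠ c) :
    unrestrictF S (restrictF S g pf) = g := by
  funext a
  simp only [unrestrictF, restrictF]
  by_cases ha : a ∈ S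
  · rw [dif_pos ha]
    exact (mem_fib.1 (hfib ▸ ha)).symm
  · rw [dif_neg ha]

lemma restrictF_unrestrictF (S : Finset α) (h : {a : α // a ∉ S} → {b : β // b ≠ c})
    (pf : ∀ a : α, a ∉ S → unrestrictF S h a ≠ c) :
    restrictF S (unrestrictF S h) pf = h := by
  funext a
  apply Subtype.ext
  simp only [restrictF, unrestrictF, dif_neg a.2]

lemma isGood_unrestrictF {S : Finset α} (hm : 1 ≤ m) (hSc : S.card = m)
    (h : {a : α // a ∉ S} → {b : β // b ≠ c}) (hh : IsGood m h) :
    IsGood m (unrestrictF S h) := by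
  intro c'
  by_cases hc' : c' = c
  · subst hc'
    rw [fib_unrestrictF_self]
    exact ⟨Finset.card_pos.1 (by omega), le_of_eq hSc⟩
  · have := fib_restrictF (c := c) (fib_unrestrictF_self S h)
      (avoid_of_fib (fib_unrestrictF_self S h)) ⟨c', hc'⟩
    rw [restrictF_unrestrictF] at this
    rw [show c' = ((⟨c', hc'⟩ : {b : β // b ≠ c}) : β) from rfl, this,
      Finset.card_image_of_injective _ Subtype.val_injective, Finset.image_nonempty]
    exact hh _

lemma isGood_restrictF {S : Finset α} {g : α → β} (hfib : fib g c = S) (pf : ∀ a : α, a ∉ S → g a ≠ c)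
    (hg : IsGood m g) : IsGood m (restrictF S g pf) := by
  intro c''
  have := fib_restrictF hfib pf c''
  constructor
  · have h1 := (hg c''.1).1
    rw [this, Finset.image_nonempty] at h1
    exact h1
  · have h2 := (hg c''.1).2
    rwa [this, Finset.card_image_of_injective _ Subtype.val_injective] at h2

def badFiberEquiv (hm : 1 ≤ m) (S : {S : Finset α // S.card = m}) :
    {g : {g : α → β // IsGood m g ∧ (fib g c).card = m} // badProj m c g = S} ≃
      {h : {a : α // a ∉ S.1} → {b : β // b ≠ c} // IsGood m h} where
  toFun g := ⟨restrictF S.1 g.1.1 (avoid_of_fib (congrArg Subtype.val g.2)),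
    isGood_restrictF m (congrArg Subtype.val g.2) _ g.1.2.1⟩
  invFun h := ⟨⟨unrestrictF S.1 h.1, isGood_unrestrictF m hm S.2 h.1 h.2,
      by rw [fib_unrestrictF_self]; exact S.2⟩,
    Subtype.ext (fib_unrestrictF_self S.1 h.1)⟩
  left_inv g := by
    apply Subtype.ext
    apply Subtype.ext
    exact unrestrictF_restrictF (congrArg Subtype.val g.2)
      (avoid_of_fib (congrArg Subtype.val g.2))
  right_inv h := by
    apply Subtype.ext
    exact restrictF_unrestrictF S.1 h.1 (avoid_of_fib (fib_unrestrictF_self S.1 h.1))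

end bad


set_option maxHeartbeats 800000 in
lemma GC_rec (m N T : ℕ) (hm : 1 ≤ m) :
    GC m (N + 1) (T + 1) + (T + 1) * (N.choose m * GC m (N - m) T)
      = (T + 1) * GC m N (T + 1) + (T + 1) * GC m N T := by
  have hcardne : ∀ c : Fin (T + 1), Fintype.card {b : Fin (T + 1) // b ≠ c} = T := by
    intro c
    rw [Fintype.card_subtype_compl, Fintype.card_subtype_eq]
    simp
  have h0 : Nat.card {f : Option (Fin N) → Fin (T + 1) // IsGood m f} = GC m (N + 1) (T + 1) := by
    rw [natCard_goodFun]
    simp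
  have step1 : Nat.card {f : Option (Fin N) → Fin (T + 1) // IsGood m f}
      = ∑ c : Fin (T + 1), Nat.card {g : Fin N → Fin (T + 1) // IsGood m (extO c g)} :=
    (Nat.card_congr (optionEquiv m)).trans (natCard_sigma _)
  have key : ∀ c : Fin (T + 1),
      Nat.card {g : Fin N → Fin (T + 1) // IsGood m (extO c g)} + N.choose m * GC m (N - m) T
        = GC m N (T + 1) + GC m N T := by
    intro c
    have hsplit := natCard_subtype_split
      (fun g : Fin N → Fin (T + 1) => IsGood m (extO c g)) (fun g => (fib g c).Nonempty)
    have hA : Nat.card {g : Fin N → Fin (T + 1) //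
        IsGood m (extO c g) ∧ ¬ (fib g c).Nonempty} = GC m N T := by
      rw [Nat.card_congr (emptyFibEquiv m hm c), natCard_goodFun, hcardne c]
      simp
    have hB1 : Nat.card {g : Fin N → Fin (T + 1) // IsGood m (extO c g) ∧ (fib g c).Nonempty}
        = Nat.card {g : Fin N → Fin (T + 1) // IsGood m g ∧ (fib g c).card + 1 ≤ m} :=
      Nat.card_congr (Equiv.subtypeEquivRight (fun g => partB_iff m c g))
    have hB2 : GC m N (T + 1)
        = Nat.card {g : Fin N → Fin (T + 1) // IsGood m g ∧ (fib g c).card + 1 ≤ m}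
          + Nat.card {g : Fin N → Fin (T + 1) // IsGood m g ∧ (fib g c).card = m} := by
      have h := natCard_subtype_split
        (fun g : Fin N → Fin (T + 1) => IsGood m g) (fun g => (fib g c).card + 1 ≤ m)
      have h2 : Nat.card {g : Fin N → Fin (T + 1) // IsGood m g ∧ ¬ ((fib g c).card + 1 ≤ m)}
          = Nat.card {g : Fin N → Fin (T + 1) // IsGood m g ∧ (fib g c).card = m} :=
        Nat.card_congr (Equiv.subtypeEquivRight (fun g => bad_iff m c g))
      rw [show GC m N (T + 1) = Nat.card {g : Fin N → Fin (T + 1) // IsGood m g} from rfl,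
        h, h2]
    have hBad : Nat.card {g : Fin N → Fin (T + 1) // IsGood m g ∧ (fib g c).card = m}
        = N.choose m * GC m (N - m) T := by
      rw [Nat.card_congr (Equiv.sigmaFiberEquiv (badProj m c)).symm,
        natCard_sigma_const _ (GC m (N - m) T) ?_]
      · rw [Nat.card_eq_fintype_card, Fintype.card_finset_len]
        simp
      · intro S
        rw [Nat.card_congr (badFiberEquiv m hm S), natCard_goodFun, hcardne c]
        congr 2
        rw [Fintype.card_subtype_compl]
        have : Fintype.card {a : Fin N // a ∈ S.1} = m := by
          simpa using S.2
        rw [this]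
        simp
    omega
  rw [← h0, step1]
  have hsum : ∑ c : Fin (T + 1), Nat.card {g : Fin N → Fin (T + 1) // IsGood m (extO c g)}
        + (T + 1) * (N.choose m * GC m (N - m) T)
      = ∑ c : Fin (T + 1),
          (Nat.card {g : Fin N → Fin (T + 1) // IsGood m (extO c g)}
            + N.choose m * GC m (N - m) T) := by
    rw [Finset.sum_add_distrib, Finset.sum_const]
    simp [mul_comm]
  rw [hsum]
  simp_rw [key]
  rw [Finset.sum_const]
  simp [mul_add]


lemma finpartition_heq {α : Type*} [DecidableEq α] {s t : Finset α} (h : s = t)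
    {P : Finpartition s} {Q : Finpartition t} (hp : P.parts = Q.parts) : HEq P Q := by
  subst h
  exact heq_of_eq (Finpartition.ext hp)

section lemA
variable {m n K r : ℕ}

/-- Configurations counted by `mixedStirlingLe m n (K+1) r`. -/
def Cfg (m n K r : ℕ) :=
  {x : Σ B : Fin K → Finset (Fin n),
      Finpartition ((Finset.univ : Finset (Fin n)) \ Finset.univ.biUnion B) //
    (∀ i, (x.1 i).Nonempty) ∧ (∀ i, (x.1 i).card ≤ m) ∧
    (∀ i j, i ≠ j → Disjoint (x.1 i) (x.1 j)) ∧
    x.2.parts.card = r ∧ ∀ p ∈ x.2.parts, p.card ≤ m}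

lemma mixed_eq_cfg (m n K r : ℕ) : mixedStirlingLe m n (K + 1) r = Nat.card (Cfg m n K r) := rfl

def Bof (f : Fin n → Fin K ⊕ Fin r) : Fin K → Finset (Fin n) := fun i => fib f (Sum.inl i)

def groundOf (B : Fin K → Finset (Fin n)) : Finset (Fin n) :=
  (Finset.univ : Finset (Fin n)) \ Finset.univ.biUnion B

lemma mem_groundOf_Bof {f : Fin n → Fin K ⊕ Fin r} {a : Fin n} :
    a ∈ groundOf (Bof f) ↔ ∃ c, f a = Sum.inr c := by
  simp only [groundOf, Finset.mem_sdiff, Finset.mem_univ, true_and, Finset.mem_biUnion]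
  cases hfa : f a with
  | inl i => simp [Bof, hfa]
  | inr c => simp [Bof, hfa]

def partsOf (f : Fin n → Fin K ⊕ Fin r) : Finset (Finset (Fin n)) :=
  Finset.image (fun c : Fin r => fib f (Sum.inr c)) Finset.univ

/-- The partition of the ground set into the `inr`-fibers of a good function. -/
def partOf (f : Fin n → Fin K ⊕ Fin r) (hf : IsGood m f) : Finpartition (groundOf (Bof f)) where
  parts := partsOf f
  supIndep := by
    rw [Finset.supIndep_iff_pairwiseDisjoint]
    rintro p hp q hq hne
    simp only [partsOf, Finset.coe_image, Set.mem_image] at hp hq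
    obtain ⟨c, -, rfl⟩ := hp
    obtain ⟨c', -, rfl⟩ := hq
    simp only [Function.onFun, id_eq]
    rw [Finset.disjoint_left]
    intro x hx hx'
    have hcc : c = c' := Sum.inr_injective ((mem_fib.1 hx).symm.trans (mem_fib.1 hx'))
    exact hne (by rw [hcc])
  sup_parts := by
    ext a
    simp only [partsOf, Finset.sup_image, CompTriple.comp_eq, Finset.mem_sup, mem_fib,
      mem_groundOf_Bof]
    exact ⟨fun ⟨i, _, h⟩ => ⟨i, h⟩, fun ⟨i, h⟩ => ⟨i, Finset.mem_univ i, h⟩⟩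
  bot_notMem := by
    simp only [Finset.bot_eq_empty, partsOf, Finset.mem_image]
    rintro ⟨c, -, hc⟩
    obtain ⟨a, ha⟩ := (hf (Sum.inr c)).1
    rw [hc] at ha
    simp at ha

lemma fib_inr_injective (f : Fin n → Fin K ⊕ Fin r) (hf : IsGood m f) :
    Function.Injective (fun c : Fin r => fib f (Sum.inr c)) := by
  intro c c' h
  have h' : fib f (Sum.inr c) = fib f (Sum.inr c') := h
  obtain ⟨a, ha⟩ := (hf (Sum.inr c)).1
  have ha' : a ∈ fib f (Sum.inr c') := h' ▸ ha
  simp only [mem_fib] at ha ha'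
  exact Sum.inr_injective (ha.symm.trans ha')

/-- The projection from good functions to configurations. -/
def PhiA (f : {f : Fin n → Fin K ⊕ Fin r // IsGood m f}) : Cfg m n K r :=
  ⟨⟨Bof f.1, partOf f.1 f.2⟩,
    fun i => (f.2 (Sum.inl i)).1,
    fun i => (f.2 (Sum.inl i)).2,
    by
      intro i j hij
      rw [Finset.disjoint_left]
      intro x hx hx'
      simp only [Bof, mem_fib] at hx hx'
      exact hij (Sum.inl_injective (hx ▸ hx')),
    by
      show (partsOf f.1).card = r
      rw [partsOf, Finset.card_image_of_injective _ (fib_inr_injective f.1 f.2)]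
      simp,
    by
      intro p hp
      simp only [partOf, partsOf, Finset.mem_image] at hp
      obtain ⟨c, -, rfl⟩ := hp
      exact (f.2 (Sum.inr c)).2⟩


lemma existsUnique_mem_B (x : Cfg m n K r) {a : Fin n} (h : a ∉ groundOf x.1.1) :
    ∃! i, i ∈ (Finset.univ : Finset (Fin K)) ∧ a ∈ x.1.1 i := by
  have : a ∈ Finset.univ.biUnion x.1.1 := by
    by_contra hab
    exact h (Finset.mem_sdiff.2 ⟨Finset.mem_univ a, hab⟩)
  obtain ⟨i, -, hi⟩ := Finset.mem_biUnion.1 this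
  refine ⟨i, ⟨Finset.mem_univ i, hi⟩, ?_⟩
  rintro j ⟨-, hj⟩
  by_contra hne
  exact (x.2.2.2.1 j i hne).forall_ne_finset hj hi rfl

/-- Reconstruct a function from a configuration and a labeling of its parts. -/
def recon (x : Cfg m n K r) (e : Fin r ≃ {p // p ∈ x.1.2.parts}) : Fin n → Fin K ⊕ Fin r :=
  fun a =>
    if h : a ∈ groundOf x.1.1 then Sum.inr (e.symm ⟨x.1.2.part a, x.1.2.part_mem.2 h⟩)
    else Sum.inl (Finset.choose _ _ (existsUnique_mem_B x h))

lemma fib_recon_inl (x : Cfg m n K r) (e : Fin r ≃ {p // p ∈ x.1.2.parts}) (i : Fin K) :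
    fib (recon x e) (Sum.inl i) = x.1.1 i := by
  ext a
  simp only [mem_fib, recon]
  by_cases h : a ∈ groundOf x.1.1
  · simp only [dif_pos h]
    constructor
    · intro hc; exact absurd hc (by simp)
    · intro ha
      exfalso
      have : a ∈ Finset.univ.biUnion x.1.1 := Finset.mem_biUnion.2 ⟨i, Finset.mem_univ i, ha⟩
      exact (Finset.mem_sdiff.1 h).2 this
  · simp only [dif_neg h, Sum.inl.injEq]
    constructor
    · rintro rfl
      exact Finset.choose_property _ _ (existsUnique_mem_B x h)
    · intro ha
      exact (existsUnique_mem_B x h).unique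
        ⟨Finset.mem_univ _, Finset.choose_property _ _ (existsUnique_mem_B x h)⟩
        ⟨Finset.mem_univ _, ha⟩

lemma fib_recon_inr (x : Cfg m n K r) (e : Fin r ≃ {p // p ∈ x.1.2.parts}) (c : Fin r) :
    fib (recon x e) (Sum.inr c) = (e c).1 := by
  ext a
  simp only [mem_fib, recon]
  by_cases h : a ∈ groundOf x.1.1
  · simp only [dif_pos h, Sum.inr.injEq, Equiv.symm_apply_eq]
    constructor
    · intro hpart
      have : x.1.2.part a = (e c).1 := congrArg Subtype.val hpart
      exact this ▸ x.1.2.mem_part h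
    · intro ha
      apply Subtype.ext
      exact x.1.2.part_eq_of_mem (e c).2 ha
  · simp only [dif_neg h]
    constructor
    · intro hc; exact absurd hc (by simp)
    · intro ha
      exfalso
      exact h (x.1.2.le (e c).2 ha)

lemma isGood_recon (x : Cfg m n K r) (e : Fin r ≃ {p // p ∈ x.1.2.parts}) :
    IsGood m (recon x e) := by
  rintro (i | c)
  · rw [fib_recon_inl]
    exact ⟨x.2.1 i, x.2.2.1 i⟩
  · rw [fib_recon_inr]
    exact ⟨x.1.2.nonempty_of_mem_parts (e c).2, x.2.2.2.2.2 _ (e c).2⟩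

lemma partsOf_recon (x : Cfg m n K r) (e : Fin r ≃ {p // p ∈ x.1.2.parts}) :
    partsOf (recon x e) = x.1.2.parts := by
  ext p
  simp only [partsOf, Finset.mem_image, fib_recon_inr]
  constructor
  · rintro ⟨c, -, rfl⟩; exact (e c).2
  · intro hp; exact ⟨e.symm ⟨p, hp⟩, Finset.mem_univ _, by simp⟩

lemma cfg_sigma_ext {x y : Σ B : Fin K → Finset (Fin n),
      Finpartition ((Finset.univ : Finset (Fin n)) \ Finset.univ.biUnion B)}
    (h1 : x.1 = y.1) (h2 : x.2.parts = y.2.parts) : x = y := by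
  obtain ⟨B, π⟩ := x
  obtain ⟨B', π'⟩ := y
  dsimp only at h1 h2
  subst h1
  exact congrArg _ (Finpartition.ext h2)

lemma PhiA_recon (x : Cfg m n K r) (e : Fin r ≃ {p // p ∈ x.1.2.parts}) :
    PhiA ⟨recon x e, isGood_recon x e⟩ = x := by
  apply Subtype.ext
  apply cfg_sigma_ext
  · funext i
    exact fib_recon_inl x e i
  · exact partsOf_recon x e

lemma parts_of_phi {x : Cfg m n K r} (f : {f : Fin n → Fin K ⊕ Fin r // IsGood m f})
    (hfx : PhiA f = x) : partsOf f.1 = x.1.2.parts :=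
  congrArg (fun y : Cfg m n K r => y.1.2.parts) hfx

lemma fib_mem_parts {x : Cfg m n K r} (f : {f : Fin n → Fin K ⊕ Fin r // IsGood m f})
    (hfx : PhiA f = x) (c : Fin r) : fib f.1 (Sum.inr c) ∈ x.1.2.parts := by
  rw [← parts_of_phi f hfx]
  exact Finset.mem_image_of_mem _ (Finset.mem_univ c)

/-- The fiber of `PhiA` over `x` is the set of labelings of the parts of `x`. -/
def fibAEquiv (x : Cfg m n K r) :
    {f : {f : Fin n → Fin K ⊕ Fin r // IsGood m f} // PhiA f = x} ≃
      (Fin r ≃ {p // p ∈ x.1.2.parts}) where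
  toFun f := Equiv.ofBijective (fun c => ⟨fib f.1.1 (Sum.inr c), fib_mem_parts f.1 f.2 c⟩)
    (by
      constructor
      · intro c c' h
        exact fib_inr_injective f.1.1 f.1.2 (congrArg Subtype.val h)
      · rintro ⟨p, hp⟩
        rw [← parts_of_phi f.1 f.2] at hp
        obtain ⟨c, -, hc⟩ := Finset.mem_image.1 hp
        exact ⟨c, Subtype.ext hc⟩)
  invFun e := ⟨⟨recon x e, isGood_recon x e⟩, PhiA_recon x e⟩
  left_inv f := by
    apply Subtype.ext
    apply Subtype.ext
    funext a
    have hB : x.1.1 = Bof f.1.1 := congrArg (fun y : Cfg m n K r => y.1.1) f.2.symm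
    show recon x _ a = f.1.1 a
    rw [recon]
    by_cases h : a ∈ groundOf x.1.1
    · rw [dif_pos h]
      have h' : a ∈ groundOf (Bof f.1.1) := hB ▸ h
      obtain ⟨c, hc⟩ := mem_groundOf_Bof.1 h'
      rw [hc]
      congr 1
      rw [Equiv.symm_apply_eq]
      apply Subtype.ext
      show x.1.2.part a = fib f.1.1 (Sum.inr c)
      exact x.1.2.part_eq_of_mem (fib_mem_parts f.1 f.2 c) (mem_fib.2 hc)
    · rw [dif_neg h]
      have h' : a ∉ groundOf (Bof f.1.1) := hB ▸ h
      cases hfa : f.1.1 a with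
      | inr c => exact absurd (mem_groundOf_Bof.2 ⟨c, hfa⟩) h'
      | inl j =>
        congr 1
        refine (existsUnique_mem_B x h).unique
          ⟨Finset.mem_univ _, Finset.choose_property _ _ (existsUnique_mem_B x h)⟩
          ⟨Finset.mem_univ _, ?_⟩
        rw [hB]
        exact mem_fib.2 hfa
  right_inv e := by
    apply Equiv.ext
    intro c
    apply Subtype.ext
    exact fib_recon_inr x e c


instance : Finite (Cfg m n K r) := by
  unfold Cfg
  infer_instance

lemma factorial_mul_mixed (m n K r : ℕ) :
    r.factorial * mixedStirlingLe m n (K + 1) r = GC m n (K + r) := by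
  rw [mixed_eq_cfg]
  have h2 : GC m n (K + r) = Nat.card {f : Fin n → Fin K ⊕ Fin r // IsGood m f} := by
    rw [natCard_goodFun m (Fin n) (Fin K ⊕ Fin r)]
    simp
  rw [h2, Nat.card_congr (Equiv.sigmaFiberEquiv (PhiA (m := m) (n := n) (K := K) (r := r))).symm,
    natCard_sigma_const _ r.factorial ?_]
  · exact mul_comm _ _
  · intro x
    have hcard : Fintype.card {p // p ∈ x.1.2.parts} = r := by
      rw [show Fintype.card {p // p ∈ x.1.2.parts} = x.1.2.parts.card from Fintype.card_coe _]
      exact x.2.2.2.2.1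
    rw [Nat.card_congr (fibAEquiv x), Nat.card_eq_fintype_card,
      Fintype.card_equiv ((Fintype.equivFinOfCardEq hcard).symm)]
    simp

end lemA

end
end MixedAux

theorem mixedStirlingLe_recurrence' (n m k r : ℕ)
    (hn : 1 ≤ n) (hm : 1 ≤ m) (hk : 1 ≤ k) (hr : 1 ≤ r) :
    (mixedStirlingLe m n k r : ℤ) =
      (mixedStirlingLe m (n - 1) k (r - 1) : ℤ) +
        (k - 1 : ℕ) * (mixedStirlingLe m (n - 1) (k - 1) r : ℤ) +
        (k + r - 1 : ℕ) * (mixedStirlingLe m (n - 1) k r : ℤ) -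
        ((n - 1).choose m : ℤ) * (mixedStirlingLe m (n - m - 1) k (r - 1) : ℤ) -
        (k - 1 : ℕ) * ((n - 1).choose m : ℤ) *
          (mixedStirlingLe m (n - m - 1) (k - 1) r : ℤ) := by
  open MixedAux in
  obtain ⟨K, rfl⟩ : ∃ K, k = K + 1 := ⟨k - 1, by omega⟩
  obtain ⟨R, rfl⟩ : ∃ R, r = R + 1 := ⟨r - 1, by omega⟩
  obtain ⟨N, rfl⟩ : ∃ N, n = N + 1 := ⟨n - 1, by omega⟩
  simp only [Nat.add_sub_cancel]
  rw [show K + 1 + (R + 1) - 1 = K + R + 1 by omega, show N + 1 - m - 1 = N - m by omega]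
  have hF : ((R + 1).factorial : ℤ) ≠ 0 := by
    exact_mod_cast (R + 1).factorial_ne_zero
  apply mul_left_cancel₀ hF
  have E1 : ((R + 1).factorial : ℤ) * (mixedStirlingLe m (N + 1) (K + 1) (R + 1) : ℤ)
      = (GC m (N + 1) (K + R + 1) : ℤ) := by
    exact_mod_cast factorial_mul_mixed m (N + 1) K (R + 1)
  have E2 : ((R + 1).factorial : ℤ) * (mixedStirlingLe m N (K + 1) R : ℤ)
      = ((R : ℤ) + 1) * (GC m N (K + R) : ℤ) := by
    have h := factorial_mul_mixed m N K R
    have hfac : ((R + 1).factorial : ℤ) = ((R : ℤ) + 1) * (R.factorial : ℤ) := by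
      exact_mod_cast Nat.factorial_succ R
    rw [hfac, mul_assoc]
    congr 1
    exact_mod_cast h
  have E3 : (K : ℤ) * (((R + 1).factorial : ℤ) * (mixedStirlingLe m N K (R + 1) : ℤ))
      = (K : ℤ) * (GC m N (K + R) : ℤ) := by
    cases K with
    | zero => simp
    | succ K' =>
      congr 1
      have h := factorial_mul_mixed m N K' (R + 1)
      rw [show K' + (R + 1) = K' + 1 + R by omega] at h
      exact_mod_cast h
  have E4 : ((R + 1).factorial : ℤ) * (mixedStirlingLe m N (K + 1) (R + 1) : ℤ)
      = (GC m N (K + R + 1) : ℤ) := by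
    exact_mod_cast factorial_mul_mixed m N K (R + 1)
  have E5 : ((R + 1).factorial : ℤ) * (mixedStirlingLe m (N - m) (K + 1) R : ℤ)
      = ((R : ℤ) + 1) * (GC m (N - m) (K + R) : ℤ) := by
    have h := factorial_mul_mixed m (N - m) K R
    have hfac : ((R + 1).factorial : ℤ) = ((R : ℤ) + 1) * (R.factorial : ℤ) := by
      exact_mod_cast Nat.factorial_succ R
    rw [hfac, mul_assoc]
    congr 1
    exact_mod_cast h
  have E6 : (K : ℤ) * (((R + 1).factorial : ℤ) * (mixedStirlingLe m (N - m) K (R + 1) : ℤ))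
      = (K : ℤ) * (GC m (N - m) (K + R) : ℤ) := by
    cases K with
    | zero => simp
    | succ K' =>
      congr 1
      have h := factorial_mul_mixed m (N - m) K' (R + 1)
      rw [show K' + (R + 1) = K' + 1 + R by omega] at h
      exact_mod_cast h
  have EB : (GC m (N + 1) (K + R + 1) : ℤ)
        + ((K : ℤ) + R + 1) * ((N.choose m : ℤ) * (GC m (N - m) (K + R) : ℤ))
      = ((K : ℤ) + R + 1) * (GC m N (K + R + 1) : ℤ)
        + ((K : ℤ) + R + 1) * (GC m N (K + R) : ℤ) := by
    exact_mod_cast GC_rec m N (K + R) hm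
  push_cast
  linear_combination E1 - E2 - E3 - ((K : ℤ) + R + 1) * E4 + (N.choose m : ℤ) * E5
    + (N.choose m : ℤ) * E6 + EB
end

section
/- For positive integers n, k and integers 1 ≤ s ≤ r, the mixed Stirling numbers of the second kind satisfy the convolution identity (r choose s) · S(n,k,r) = Σ_{j=0}^{n} (n choose j) · {n−j brace s} · S(j,k,r−s). -/
open Finset Function


/-- transfer surjections along equivs -/
def surjEquiv {α β α' β' : Type*} (ea : α ≃ α') (eb : β ≃ β') :
    {f : α → β // Surjective f} ≃ {f : α' → β' // Surjective f} :=
  (Equiv.arrowCongr ea eb).subtypeEquiv fun f => by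
    constructor
    · intro hf b
      obtain ⟨a, ha⟩ := hf (eb.symm b)
      exact ⟨ea a, by simp [Equiv.arrowCongr, ha]⟩
    · intro hf b
      obtain ⟨a, ha⟩ := hf (eb b)
      refine ⟨ea.symm a, eb.injective ?_⟩
      simpa [Equiv.arrowCongr] using ha

noncomputable def Nsur (n q : ℕ) : ℕ := Nat.card {f : Fin n → Fin q // Surjective f}

lemma nat_card_surj (α β : Type*) [Fintype α] [Fintype β] :
    Nat.card {f : α → β // Surjective f} = Nsur (Fintype.card α) (Fintype.card β) :=
  Nat.card_congr (surjEquiv (Fintype.equivFin α) (Fintype.equivFin β))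

def splitFiberEquiv {α β γ : Type*} [Fintype α] [DecidableEq α] (A : Finset α) :
    {F : {f : α → β ⊕ γ // Surjective f} //
        univ.filter (fun x => (F.1 x).isLeft) = A} ≃
      {g : {x // x ∈ A} → β // Surjective g} × {h : {x // x ∈ Aᶜ} → γ // Surjective h} where
  toFun F :=
    have hmem : ∀ x, x ∈ A → (F.1.1 x).isLeft := fun x hx => by
      rw [← F.2] at hx; exact (mem_filter.mp hx).2
    have hmem' : ∀ x, x ∈ Aᶜ → (F.1.1 x).isRight := fun x hx => by
      have : x ∉ A := mem_compl.mp hx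
      rw [← F.2] at this
      simpa [Sum.not_isLeft] using fun h => this (mem_filter.mpr ⟨mem_univ x, h⟩)
    ⟨⟨fun x => (F.1.1 x.1).getLeft (hmem x.1 x.2), by
        intro y
        obtain ⟨a, ha⟩ := F.1.2 (Sum.inl y)
        have haA : a ∈ A := by rw [← F.2]; exact mem_filter.mpr ⟨mem_univ a, by simp [ha]⟩
        refine ⟨⟨a, haA⟩, ?_⟩
        obtain ⟨h', hh⟩ := Sum.eq_left_iff_getLeft_eq.mp ha
        exact hh⟩,
      ⟨fun x => (F.1.1 x.1).getRight (hmem' x.1 x.2), by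
        intro y
        obtain ⟨a, ha⟩ := F.1.2 (Sum.inr y)
        have haA : a ∈ Aᶜ := by
          rw [mem_compl, ← F.2]
          simp [ha, mem_filter]
        refine ⟨⟨a, haA⟩, ?_⟩
        obtain ⟨h', hh⟩ := Sum.eq_right_iff_getRight_eq.mp ha
        exact hh⟩⟩
  invFun gh :=
    ⟨⟨fun a => if ha : a ∈ A then Sum.inl (gh.1.1 ⟨a, ha⟩)
        else Sum.inr (gh.2.1 ⟨a, mem_compl.mpr ha⟩), by
      rintro (y | y)
      · obtain ⟨x, hx⟩ := gh.1.2 y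
        exact ⟨x.1, by dsimp only; rw [dif_pos x.2]; exact congrArg Sum.inl (by rw [Subtype.eta]; exact hx)⟩
      · obtain ⟨x, hx⟩ := gh.2.2 y
        refine ⟨x.1, ?_⟩
        dsimp only
        rw [dif_neg (mem_compl.mp x.2)]
        exact congrArg Sum.inr (by rw [Subtype.eta]; exact hx)⟩, by
      ext a
      simp only [mem_filter, mem_univ, true_and]
      by_cases ha : a ∈ A <;> simp [ha]⟩
  left_inv := by
    rintro ⟨⟨f, hf⟩, hA⟩
    apply Subtype.ext
    apply Subtype.ext
    funext a
    by_cases ha : a ∈ A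
    · simp only [dif_pos ha]
      have : (f a).isLeft := by rw [← hA] at ha; exact (mem_filter.mp ha).2
      obtain ⟨y, hy⟩ := Sum.isLeft_iff.mp this
      simp [hy]
    · simp only [dif_neg ha]
      have : (f a).isRight := by
        rw [← hA] at ha
        simpa [Sum.not_isLeft] using fun h => ha (mem_filter.mpr ⟨mem_univ a, h⟩)
      obtain ⟨y, hy⟩ := Sum.isRight_iff.mp this
      simp [hy]
  right_inv := by
    rintro ⟨⟨g, hg⟩, ⟨h, hh⟩⟩
    refine Prod.ext (Subtype.ext ?_) (Subtype.ext ?_)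
    · funext x
      simp only []
      have : ∀ (p : _), Sum.getLeft (if ha : x.1 ∈ A then Sum.inl (g ⟨x.1, ha⟩)
          else Sum.inr (h ⟨x.1, mem_compl.mpr ha⟩)) p = g x := by
        rw [dif_pos x.2]
        intro p
        simp [Subtype.eta]
      exact this _
    · funext x
      have hx : x.1 ∉ A := mem_compl.mp x.2
      have : ∀ (p : _), Sum.getRight (if ha : x.1 ∈ A then Sum.inl (g ⟨x.1, ha⟩)
          else Sum.inr (h ⟨x.1, mem_compl.mpr ha⟩)) p = h x := by
        rw [dif_neg hx]
        intro p
        simp [Subtype.eta]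
      exact this _

lemma nat_card_fiber {α β γ : Type*} [Fintype α] [DecidableEq α] [Fintype β] [Fintype γ]
    (A : Finset α) :
    Nat.card {F : {f : α → β ⊕ γ // Surjective f} //
        univ.filter (fun x => (F.1 x).isLeft) = A} =
      Nsur A.card (Fintype.card β) * Nsur ((Fintype.card α) - A.card) (Fintype.card γ) := by
  rw [Nat.card_congr (splitFiberEquiv A), Nat.card_prod, nat_card_surj, nat_card_surj]
  simp [Finset.card_compl]

lemma Nsur_split (n b c : ℕ) :
    Nsur n (b + c) =
      ∑ j ∈ Finset.range (n + 1), n.choose j * (Nsur j b * Nsur (n - j) c) := by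
  classical
  have e1 : Nsur n (b + c) = Nat.card {f : Fin n → Fin b ⊕ Fin c // Surjective f} :=
    (Nat.card_congr (surjEquiv (Equiv.refl _) finSumFinEquiv)).symm
  rw [e1, Nat.card_congr (Equiv.sigmaFiberEquiv
      (fun F : {f : Fin n → Fin b ⊕ Fin c // Surjective f} =>
        univ.filter (fun x => (F.1 x).isLeft))).symm]
  rw [Nat.card_eq_fintype_card, Fintype.card_sigma]
  have key : ∀ A : Finset (Fin n),
      Fintype.card {F : {f : Fin n → Fin b ⊕ Fin c // Surjective f} //
          univ.filter (fun x => (F.1 x).isLeft) = A} =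
        Nsur A.card b * Nsur (n - A.card) c := by
    intro A
    rw [← Nat.card_eq_fintype_card, nat_card_fiber A]
    simp
  rw [Finset.sum_congr rfl (fun A _ => key A)]
  rw [← Finset.sum_fiberwise_of_maps_to (g := fun A : Finset (Fin n) => A.card)
      (t := Finset.range (n + 1)) (fun A _ => by
        simpa using Nat.lt_succ_of_le (by simpa using Finset.card_le_univ A))]
  refine Finset.sum_congr rfl fun j hj => ?_
  have : ∀ A ∈ univ.filter (fun A : Finset (Fin n) => A.card = j),
      Nsur A.card b * Nsur (n - A.card) c = Nsur j b * Nsur (n - j) c := by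
    intro A hA
    rw [(mem_filter.mp hA).2]
  rw [Finset.sum_congr rfl this, Finset.sum_const, smul_eq_mul]
  congr 1
  have : univ.filter (fun A : Finset (Fin n) => A.card = j) = Finset.powersetCard j univ := by
    rw [Finset.powersetCard_eq_filter, Finset.powerset_univ]
  rw [this, Finset.card_powersetCard]
  simp

/-- The Stirling number of the second kind `{n brace k}`: the number of partitions of an
`n`-element set into exactly `k` nonempty blocks. -/
noncomputable def stirling (n k : ℕ) : ℕ :=
  Nat.card {P : Finpartition (Finset.univ : Finset (Fin n)) // P.parts.card = k}

/-- The mixed Stirling number of the second kind `S(n, k, r)`: the number of pairs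
`(π, (B_2, …, B_k))` where `B_2, …, B_k` are pairwise disjoint nonempty subsets of `{1, …, n}`
and `π` is a partition of the complement of their union into exactly `r` nonempty blocks. -/
noncomputable def mixedStirling (n k r : ℕ) : ℕ :=
  Nat.card {x : Σ B : Fin (k - 1) → Finset (Fin n),
      Finpartition ((Finset.univ : Finset (Fin n)) \ Finset.univ.biUnion B) //
    (∀ i, (x.1 i).Nonempty) ∧
    (∀ i j, i ≠ j → Disjoint (x.1 i) (x.1 j)) ∧
    x.2.parts.card = r}


abbrev MxT (n m r : ℕ) := {x : Σ B : Fin m → Finset (Fin n),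
      Finpartition ((Finset.univ : Finset (Fin n)) \ Finset.univ.biUnion B) //
    (∀ i, (x.1 i).Nonempty) ∧
    (∀ i j, i ≠ j → Disjoint (x.1 i) (x.1 j)) ∧
    x.2.parts.card = r}

lemma mixedStirling_eq (n m r : ℕ) : mixedStirling n (m + 1) r = Nat.card (MxT n m r) := rfl

variable {n m r : ℕ}

def lFiber (f : Fin n → Fin m ⊕ Fin r) (i : Fin m) : Finset (Fin n) :=
  univ.filter fun a => f a = Sum.inl i

def rFiber (f : Fin n → Fin m ⊕ Fin r) (j : Fin r) : Finset (Fin n) :=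
  univ.filter fun a => f a = Sum.inr j

lemma mem_lFiber {f : Fin n → Fin m ⊕ Fin r} {i a} : a ∈ lFiber f i ↔ f a = Sum.inl i := by
  simp [lFiber]

lemma mem_rFiber {f : Fin n → Fin m ⊕ Fin r} {j a} : a ∈ rFiber f j ↔ f a = Sum.inr j := by
  simp [rFiber]

lemma lFiber_disj {f : Fin n → Fin m ⊕ Fin r} {i i'} (h : i ≠ i') :
    Disjoint (lFiber f i) (lFiber f i') := by
  rw [Finset.disjoint_left]
  intro a ha ha'
  rw [mem_lFiber] at ha ha'
  exact h (by injection ha ▸ ha')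

lemma rFiber_disj {f : Fin n → Fin m ⊕ Fin r} {j j'} (h : j ≠ j') :
    Disjoint (rFiber f j) (rFiber f j') := by
  rw [Finset.disjoint_left]
  intro a ha ha'
  rw [mem_rFiber] at ha ha'
  exact h (by injection ha ▸ ha')

lemma lFiber_nonempty {f : Fin n → Fin m ⊕ Fin r} (hf : Surjective f) (i : Fin m) :
    (lFiber f i).Nonempty := by
  obtain ⟨a, ha⟩ := hf (Sum.inl i)
  exact ⟨a, mem_lFiber.mpr ha⟩

lemma rFiber_nonempty {f : Fin n → Fin m ⊕ Fin r} (hf : Surjective f) (j : Fin r) :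
    (rFiber f j).Nonempty := ⟨(hf (Sum.inr j)).choose, mem_rFiber.mpr (hf (Sum.inr j)).choose_spec⟩

lemma rFiber_inj {f : Fin n → Fin m ⊕ Fin r} (hf : Surjective f) : Injective (rFiber f) := by
  intro j j' h
  by_contra hne
  obtain ⟨a, ha⟩ := rFiber_nonempty hf j
  exact (Finset.disjoint_left.mp (rFiber_disj hne) ha) (h ▸ ha)

def surjPartition (f : Fin n → Fin m ⊕ Fin r) (hf : Surjective f) :
    Finpartition ((univ : Finset (Fin n)) \ univ.biUnion (lFiber f)) where
  parts := (univ : Finset (Fin r)).image (rFiber f)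
  supIndep := by
    rw [Finset.supIndep_iff_pairwiseDisjoint]
    intro p hp q hq hpq
    simp only [coe_image, Set.mem_image, mem_coe] at hp hq
    obtain ⟨j, -, rfl⟩ := hp
    obtain ⟨j', -, rfl⟩ := hq
    exact rFiber_disj fun h => hpq (by rw [h])
  sup_parts := by
    rw [Finset.sup_image]
    have : ((univ : Finset (Fin r)).sup (id ∘ rFiber f)) = univ.biUnion (rFiber f) :=
      (Finset.sup_eq_biUnion _ _).trans (by rfl)
    rw [this]
    ext a
    simp only [Finset.mem_biUnion, mem_univ, true_and, mem_sdiff, mem_rFiber, mem_lFiber]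
    constructor
    · rintro ⟨j, hj⟩ ⟨i, hi⟩
      rw [hj] at hi
      exact absurd hi (by simp)
    · intro h
      cases hfa : f a with
      | inl i => exact absurd ⟨i, hfa⟩ h
      | inr j => exact ⟨j, rfl⟩
  bot_notMem := by
    simp only [bot_eq_empty, mem_image]
    rintro ⟨j, -, hj⟩
    exact (rFiber_nonempty hf j).ne_empty hj

def toMx (F : {f : Fin n → Fin m ⊕ Fin r // Surjective f}) : MxT n m r :=
  ⟨⟨lFiber F.1, surjPartition F.1 F.2⟩,
    fun i => lFiber_nonempty F.2 i,
    fun _ _ hij => lFiber_disj hij,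
    by
      show ((univ : Finset (Fin r)).image (rFiber F.1)).card = r
      rw [Finset.card_image_of_injective _ (rFiber_inj F.2)]
      simp⟩

lemma finpartition_heq {β : Type*} [DecidableEq β] {s t : Finset β} (h : s = t)
    {P : Finpartition s} {Q : Finpartition t} (hp : P.parts = Q.parts) : HEq P Q := by
  subst h
  exact heq_of_eq (Finpartition.ext hp)

def labMap (x : MxT n m r)
    (F : {F : {f : Fin n → Fin m ⊕ Fin r // Surjective f} // toMx F = x}) :
    Fin r → {p // p ∈ x.1.2.parts} := fun j =>
  ⟨rFiber F.1.1 j, by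
    rw [← congrArg (fun y : MxT n m r => y.1.2.parts) F.2]
    exact mem_image_of_mem _ (mem_univ j)⟩

noncomputable def labEquiv (x : MxT n m r)
    (F : {F : {f : Fin n → Fin m ⊕ Fin r // Surjective f} // toMx F = x}) :
    Fin r ≃ {p // p ∈ x.1.2.parts} :=
  Equiv.ofBijective (labMap x F) (by
    rw [Fintype.bijective_iff_injective_and_card]
    refine ⟨fun j j' h => rFiber_inj F.1.2 (congrArg Subtype.val h), ?_⟩
    simp [Fintype.card_coe, x.2.2.2])

lemma mem_compl_of_not_exists (x : MxT n m r) {a : Fin n} (h : ¬ ∃ i, a ∈ x.1.1 i) :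
    a ∈ (univ : Finset (Fin n)) \ univ.biUnion x.1.1 := by
  rw [mem_sdiff]
  refine ⟨mem_univ a, fun hb => h ?_⟩
  obtain ⟨i, -, hi⟩ := Finset.mem_biUnion.mp hb
  exact ⟨i, hi⟩

noncomputable def xFun (x : MxT n m r) (e : Fin r ≃ {p // p ∈ x.1.2.parts}) (a : Fin n) :
    Fin m ⊕ Fin r :=
  if h : ∃ i, a ∈ x.1.1 i then Sum.inl h.choose
  else Sum.inr (e.symm ⟨x.1.2.part a, x.1.2.part_mem.mpr (mem_compl_of_not_exists x h)⟩)

lemma choose_eq (x : MxT n m r) {a : Fin n} {i : Fin m} (ha : a ∈ x.1.1 i)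
    (h : ∃ i, a ∈ x.1.1 i) : h.choose = i := by
  by_contra hne
  exact (Finset.disjoint_left.mp (x.2.2.1 _ _ hne) h.choose_spec) ha

lemma xFun_eq_inl_iff (x : MxT n m r) (e : Fin r ≃ {p // p ∈ x.1.2.parts}) {a : Fin n}
    {i : Fin m} : xFun x e a = Sum.inl i ↔ a ∈ x.1.1 i := by
  constructor
  · intro hx
    rw [xFun] at hx
    by_cases h : ∃ i, a ∈ x.1.1 i
    · rw [dif_pos h] at hx
      injection hx with hx
      exact hx ▸ h.choose_spec
    · rw [dif_neg h] at hx
      exact absurd hx (by simp)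
  · intro ha
    have h : ∃ i, a ∈ x.1.1 i := ⟨i, ha⟩
    rw [xFun, dif_pos h, choose_eq x ha h]

lemma lFiber_xFun (x : MxT n m r) (e : Fin r ≃ {p // p ∈ x.1.2.parts}) :
    lFiber (xFun x e) = x.1.1 := by
  funext i
  ext a
  rw [mem_lFiber, xFun_eq_inl_iff]

lemma xFun_eq_inr_iff (x : MxT n m r) (e : Fin r ≃ {p // p ∈ x.1.2.parts}) {a : Fin n}
    {j : Fin r} : xFun x e a = Sum.inr j ↔ a ∈ (e j : {p // p ∈ x.1.2.parts}).1 := by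
  constructor
  · intro hx
    rw [xFun] at hx
    by_cases h : ∃ i, a ∈ x.1.1 i
    · rw [dif_pos h] at hx
      exact absurd hx (by simp)
    · rw [dif_neg h] at hx
      injection hx with hx
      have := congrArg e hx
      rw [Equiv.apply_symm_apply] at this
      have hpa : x.1.2.part a = (e j).1 := by rw [← this]
      rw [← hpa]
      exact x.1.2.mem_part (mem_compl_of_not_exists x h)
  · intro ha
    have hp := (e j).2
    have hmem : a ∈ (univ : Finset (Fin n)) \ univ.biUnion x.1.1 := x.1.2.le hp ha
    have h : ¬ ∃ i, a ∈ x.1.1 i := by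
      rintro ⟨i, hi⟩
      exact (mem_sdiff.mp hmem).2 (Finset.mem_biUnion.mpr ⟨i, mem_univ i, hi⟩)
    rw [xFun, dif_neg h]
    have hpa : (⟨x.1.2.part a, x.1.2.part_mem.mpr (mem_compl_of_not_exists x h)⟩ :
        {p // p ∈ x.1.2.parts}) = e j :=
      Subtype.ext (x.1.2.part_eq_of_mem hp ha)
    rw [hpa, Equiv.symm_apply_apply]

lemma rFiber_xFun (x : MxT n m r) (e : Fin r ≃ {p // p ∈ x.1.2.parts}) (j : Fin r) :
    rFiber (xFun x e) j = (e j : {p // p ∈ x.1.2.parts}).1 := by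
  ext a
  rw [mem_rFiber, xFun_eq_inr_iff]

lemma xFun_surjective (x : MxT n m r) (e : Fin r ≃ {p // p ∈ x.1.2.parts}) :
    Surjective (xFun x e) := by
  rintro (i | j)
  · obtain ⟨a, ha⟩ := x.2.1 i
    exact ⟨a, (xFun_eq_inl_iff x e).mpr ha⟩
  · obtain ⟨a, ha⟩ := x.1.2.nonempty_of_mem_parts (e j).2
    exact ⟨a, (xFun_eq_inr_iff x e).mpr ha⟩

lemma toMx_xFun (x : MxT n m r) (e : Fin r ≃ {p // p ∈ x.1.2.parts}) :
    toMx ⟨xFun x e, xFun_surjective x e⟩ = x := by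
  apply Subtype.ext
  refine Sigma.ext (lFiber_xFun x e) (finpartition_heq ?_ ?_)
  · exact congrArg (fun B : Fin m → Finset (Fin n) => univ \ univ.biUnion B) (lFiber_xFun x e)
  · show (univ : Finset (Fin r)).image (rFiber (xFun x e)) = x.1.2.parts
    ext p
    simp only [mem_image, mem_univ, true_and]
    constructor
    · rintro ⟨j, rfl⟩
      rw [rFiber_xFun x e j]
      exact (e j).2
    · intro hp
      refine ⟨e.symm ⟨p, hp⟩, ?_⟩
      rw [rFiber_xFun x e, Equiv.apply_symm_apply]

lemma labEquiv_bijective (x : MxT n m r) : Bijective (labEquiv x) := by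
  constructor
  · intro F F' h
    have hr : ∀ j, rFiber F.1.1 j = rFiber F'.1.1 j := fun j =>
      congrArg (fun q : Fin r ≃ {p // p ∈ x.1.2.parts} => (q j).1) h
    have hlF : lFiber F.1.1 = x.1.1 := congrArg (fun y : MxT n m r => y.1.1) F.2
    have hlF' : lFiber F'.1.1 = x.1.1 := congrArg (fun y : MxT n m r => y.1.1) F'.2
    have hl : ∀ i, lFiber F.1.1 i = lFiber F'.1.1 i := fun i => by
      rw [hlF, hlF']
    apply Subtype.ext
    apply Subtype.ext
    funext a
    cases hfa : F.1.1 a with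
    | inl i =>
      have : a ∈ lFiber F'.1.1 i := (hl i) ▸ mem_lFiber.mpr hfa
      rw [mem_lFiber.mp this]
    | inr j =>
      have : a ∈ rFiber F'.1.1 j := (hr j) ▸ mem_rFiber.mpr hfa
      rw [mem_rFiber.mp this]
  · intro e
    refine ⟨⟨⟨xFun x e, xFun_surjective x e⟩, toMx_xFun x e⟩, ?_⟩
    apply Equiv.ext
    intro j
    apply Subtype.ext
    show rFiber (xFun x e) j = ((e j : {p // p ∈ x.1.2.parts}) : Finset (Fin n))
    exact rFiber_xFun x e j

lemma card_fiber (x : MxT n m r) :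
    Nat.card {F : {f : Fin n → Fin m ⊕ Fin r // Surjective f} // toMx F = x} = r.factorial := by
  classical
  rw [Nat.card_eq_of_bijective (labEquiv x) (labEquiv_bijective x)]
  have hc : Fintype.card {p // p ∈ x.1.2.parts} = r := by
    rw [Fintype.card_coe, x.2.2.2]
  rw [Nat.card_eq_fintype_card,
    Fintype.card_equiv (Fintype.equivOfCardEq (by simp [hc]))]
  simp

lemma mixed_card (n m r : ℕ) :
    Nat.card {f : Fin n → Fin m ⊕ Fin r // Surjective f} =
      Nat.card (MxT n m r) * r.factorial := by
  classical
  have h1 : Fintype (MxT n m r) := by infer_instance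
  have h2 : ∀ y : MxT n m r,
      Fintype {F : {f : Fin n → Fin m ⊕ Fin r // Surjective f} // toMx F = y} := fun y => by
    infer_instance
  rw [Nat.card_congr (Equiv.sigmaFiberEquiv (toMx (n := n) (m := m) (r := r))).symm]
  rw [Nat.card_eq_fintype_card, Fintype.card_sigma]
  have key : ∀ x : MxT n m r, Fintype.card {F // toMx F = x} = r.factorial := fun x => by
    rw [← Nat.card_eq_fintype_card, card_fiber x]
  rw [Finset.sum_congr rfl (fun x _ => key x), Finset.sum_const, smul_eq_mul, card_univ,
    Nat.card_eq_fintype_card]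

lemma copy_heq {β : Type*} [DecidableEq β] {s t : Finset β} (P : Finpartition s) (h : s = t) :
    HEq (P.copy h) P := by
  subst h
  exact heq_of_eq (Finpartition.ext rfl)

def mxZeroEquiv (n s : ℕ) :
    MxT n 0 s ≃ {P : Finpartition (univ : Finset (Fin n)) // P.parts.card = s} where
  toFun x := ⟨x.1.2.copy (by simp), by simpa using x.2.2.2⟩
  invFun P := ⟨⟨fun i => i.elim0, P.1.copy (by simp)⟩,
    fun i => i.elim0, fun i => i.elim0, by simpa using P.2⟩
  left_inv x := by
    apply Subtype.ext
    refine Sigma.ext (funext fun i => i.elim0) ?_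
    have hb1 : ((univ : Finset (Fin n)) \ univ.biUnion x.1.1) = univ := by simp
    have hb2 : (univ : Finset (Fin n)) =
        univ \ univ.biUnion (fun i : Fin 0 => i.elim0 (α := Finset (Fin n))) := by simp
    exact HEq.trans (copy_heq (x.1.2.copy hb1) hb2) (copy_heq x.1.2 hb1)
  right_inv P := Subtype.ext (Finpartition.ext rfl)

lemma stirling_eq_mixed (n s : ℕ) : stirling n s = mixedStirling n 1 s := by
  have h : mixedStirling n 1 s = Nat.card (MxT n 0 s) := rfl
  rw [h, stirling]
  exact Nat.card_congr (mxZeroEquiv n s).symm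

lemma mixed_Nsur (n m r : ℕ) : mixedStirling n (m + 1) r * r.factorial = Nsur n (m + r) := by
  rw [mixedStirling_eq, ← mixed_card, nat_card_surj]
  congr 1 <;> simp

lemma stirling_Nsur (n s : ℕ) : stirling n s * s.factorial = Nsur n s := by
  have h := mixed_Nsur n 0 s
  simp only [Nat.zero_add] at h
  rw [stirling_eq_mixed]
  exact h

theorem mixedStirling_convolution (n k s r : ℕ)
    (hn : 1 ≤ n) (hk : 1 ≤ k) (hs : 1 ≤ s) (hsr : s ≤ r) :
    r.choose s * mixedStirling n k r =
      ∑ j ∈ Finset.range (n + 1),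
        n.choose j * stirling (n - j) s * mixedStirling j k (r - s) := by
  obtain ⟨m, rfl⟩ : ∃ m, k = m + 1 := ⟨k - 1, (Nat.succ_pred_eq_of_pos hk).symm⟩
  obtain ⟨a, rfl⟩ : ∃ a, r = a + s := ⟨r - s, (Nat.sub_add_cancel hsr).symm⟩
  have hpos : 0 < s.factorial * a.factorial := Nat.mul_pos s.factorial_pos a.factorial_pos
  apply Nat.eq_of_mul_eq_mul_right hpos
  have hrs : a + s - s = a := by omega
  rw [hrs]
  have h1 : (a + s).choose s * s.factorial * a.factorial = (a + s).factorial := by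
    have := Nat.choose_mul_factorial_mul_factorial (Nat.le_add_left s a)
    rwa [hrs] at this
  have hL : (a + s).choose s * mixedStirling n (m + 1) (a + s) * (s.factorial * a.factorial)
      = Nsur n ((m + a) + s) := by
    calc (a + s).choose s * mixedStirling n (m + 1) (a + s) * (s.factorial * a.factorial)
        = mixedStirling n (m + 1) (a + s) * ((a + s).choose s * s.factorial * a.factorial) := by
          ring
      _ = mixedStirling n (m + 1) (a + s) * (a + s).factorial := by rw [h1]
      _ = Nsur n (m + (a + s)) := mixed_Nsur n m (a + s)
      _ = Nsur n ((m + a) + s) := by rw [← Nat.add_assoc]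
  rw [hL, Nsur_split n (m + a) s, Finset.sum_mul]
  refine Finset.sum_congr rfl fun j hj => ?_
  rw [← stirling_Nsur (n - j) s, ← mixed_Nsur j m a]
  ring
end

section
/- For positive integers n, k, m and integers 1 ≤ s ≤ r, the mixed restricted Stirling numbers of the second kind satisfy the convolution identity (r choose s) · S_{≤m}(n,k,r) = Σ_{j=0}^{n} (n choose j) · {n−j brace s}_{≤m} · S_{≤m}(j,k,r−s). -/
open Finset

set_option linter.unusedSectionVars false

section Flat

variable {β γ : Type*} [Fintype β] [DecidableEq β] [Fintype γ] [DecidableEq γ]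

/-- Flat version of a restricted partition (with parts of size at most `m`, exactly `r` parts)
of the ground set `t`. -/
def partSet (m : ℕ) (t : Finset β) (r : ℕ) : Finset (Finset (Finset β)) :=
  univ.filter fun P => (∀ p ∈ P, p.Nonempty) ∧ (∀ p ∈ P, p.card ≤ m) ∧
    (∀ p ∈ P, ∀ q ∈ P, p ≠ q → Disjoint p q) ∧ P.biUnion id = t ∧ P.card = r

lemma mem_partSet {m r : ℕ} {t : Finset β} {P : Finset (Finset β)} :
    P ∈ partSet m t r ↔ (∀ p ∈ P, p.Nonempty) ∧ (∀ p ∈ P, p.card ≤ m) ∧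
      (∀ p ∈ P, ∀ q ∈ P, p ≠ q → Disjoint p q) ∧ P.biUnion id = t ∧ P.card = r := by
  simp [partSet]

/-- Flat version of a mixed structure on ground set `t`. -/
def mixedSet (m : ℕ) (t : Finset β) (k r : ℕ) :
    Finset ((Fin (k - 1) → Finset β) × Finset (Finset β)) :=
  univ.filter fun x => (∀ i, (x.1 i).Nonempty) ∧ (∀ i, (x.1 i).card ≤ m) ∧
    (∀ i j, i ≠ j → Disjoint (x.1 i) (x.1 j)) ∧ (∀ i, x.1 i ⊆ t) ∧
    x.2 ∈ partSet m (t \ univ.biUnion x.1) r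

lemma mem_mixedSet {m k r : ℕ} {t : Finset β} {x : (Fin (k - 1) → Finset β) × Finset (Finset β)} :
    x ∈ mixedSet m t k r ↔ (∀ i, (x.1 i).Nonempty) ∧ (∀ i, (x.1 i).card ≤ m) ∧
      (∀ i j, i ≠ j → Disjoint (x.1 i) (x.1 j)) ∧ (∀ i, x.1 i ⊆ t) ∧
      x.2 ∈ partSet m (t \ univ.biUnion x.1) r := by
  simp [mixedSet]

/-- Build a `Finpartition` from flat data. -/
def toFinpartition {t : Finset β} {Q : Finset (Finset β)} (h1 : ∀ p ∈ Q, p.Nonempty)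
    (h3 : ∀ p ∈ Q, ∀ q ∈ Q, p ≠ q → Disjoint p q) (h4 : Q.biUnion id = t) :
    Finpartition t where
  parts := Q
  supIndep := Finset.supIndep_iff_pairwiseDisjoint.mpr fun p hp q hq hpq => h3 p hp q hq hpq
  sup_parts := by rw [Finset.sup_eq_biUnion]; exact h4
  bot_notMem := fun hb => by simpa using (h1 _ hb)

lemma stirlingLe_eq (m N r : ℕ) :
    stirlingLe m N r = (partSet m (univ : Finset (Fin N)) r).card := by
  classical
  rw [stirlingLe, ← Fintype.card_coe (partSet m (univ : Finset (Fin N)) r),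
    ← Nat.card_eq_fintype_card]
  apply Nat.card_eq_of_bijective (fun P => ⟨P.1.parts, mem_partSet.mpr
    ⟨fun p hp => P.1.nonempty_of_mem_parts hp, fun p hp => P.2.2 p hp,
     fun p hp q hq hpq => (Finset.supIndep_iff_pairwiseDisjoint.mp P.1.supIndep) hp hq hpq,
     by rw [← Finset.sup_eq_biUnion]; exact P.1.sup_parts, P.2.1⟩⟩)
  constructor
  · rintro ⟨P1, h1⟩ ⟨P2, h2⟩ h
    simp only [Subtype.mk.injEq] at h ⊢
    exact Finpartition.ext h
  · rintro ⟨Q, hQ⟩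
    rw [mem_partSet] at hQ
    exact ⟨⟨toFinpartition hQ.1 hQ.2.2.1 hQ.2.2.2.1, hQ.2.2.2.2, hQ.2.1⟩, rfl⟩

lemma mixedStirlingLe_eq (m N k r : ℕ) :
    mixedStirlingLe m N k r = (mixedSet m (univ : Finset (Fin N)) k r).card := by
  classical
  rw [mixedStirlingLe, ← Fintype.card_coe (mixedSet m (univ : Finset (Fin N)) k r),
    ← Nat.card_eq_fintype_card]
  apply Nat.card_eq_of_bijective (fun x => ⟨(x.1.1, x.1.2.parts), mem_mixedSet.mpr
    ⟨x.2.1, x.2.2.1, x.2.2.2.1, fun i => subset_univ _,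
     mem_partSet.mpr ⟨fun p hp => x.1.2.nonempty_of_mem_parts hp, x.2.2.2.2.2,
       fun p hp q hq hpq => (Finset.supIndep_iff_pairwiseDisjoint.mp x.1.2.supIndep) hp hq hpq,
       by rw [← Finset.sup_eq_biUnion]; exact x.1.2.sup_parts, x.2.2.2.2.1⟩⟩⟩)
  constructor
  · rintro ⟨⟨B1, P1⟩, h1⟩ ⟨⟨B2, P2⟩, h2⟩ h
    simp only [Subtype.mk.injEq, Prod.mk.injEq] at h
    obtain ⟨hB, hP⟩ := h
    subst hB
    have : P1 = P2 := Finpartition.ext hP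
    subst this
    rfl
  · rintro ⟨⟨B, Q⟩, hQ⟩
    rw [mem_mixedSet] at hQ
    obtain ⟨h1, h2, h3, _, h5⟩ := hQ
    rw [mem_partSet] at h5
    exact ⟨⟨⟨B, toFinpartition h5.1 h5.2.2.1 h5.2.2.2.1⟩,
      h1, h2, h3, h5.2.2.2.2, h5.2.1⟩, rfl⟩

lemma img_biUnion {ι : Type*} (g : γ → β) (s : Finset ι) (f : ι → Finset γ) :
    (s.biUnion f).image g = s.biUnion fun i => (f i).image g := by
  ext x; simp only [mem_image, mem_biUnion]; tauto

lemma pre_img {g : γ → β} (hg : Function.Injective g) (p : Finset γ) :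
    (p.image g).preimage g hg.injOn = p := by
  ext x; simp [Finset.mem_preimage, Finset.mem_image, hg.eq_iff]

lemma img_pre {g : γ → β} (hg : Function.Injective g) {q : Finset β} {u : Finset γ}
    (hq : q ⊆ u.image g) : (q.preimage g hg.injOn).image g = q := by
  ext x
  simp only [mem_image, Finset.mem_preimage]
  constructor
  · rintro ⟨a, ha, rfl⟩; exact ha
  · intro hx
    obtain ⟨a, -, rfl⟩ := mem_image.mp (hq hx)
    exact ⟨a, hx, rfl⟩

lemma pre_subset {g : γ → β} (hg : Function.Injective g) {q : Finset β} {u : Finset γ}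
    (hq : q ⊆ u.image g) : q.preimage g hg.injOn ⊆ u := by
  intro x hx
  rw [Finset.mem_preimage] at hx
  obtain ⟨a, ha, e⟩ := mem_image.mp (hq hx)
  rwa [← hg e]

lemma partSet_image_mem {g : γ → β} (hg : Function.Injective g) {m r : ℕ} {t : Finset γ}
    {P : Finset (Finset γ)} (h : P ∈ partSet m t r) :
    P.image (Finset.image g) ∈ partSet m (t.image g) r := by
  rw [mem_partSet] at h ⊢
  obtain ⟨h1, h2, h3, h4, h5⟩ := h
  refine ⟨?_, ?_, ?_, ?_, ?_⟩
  · rintro p' hp'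
    obtain ⟨p, hp, rfl⟩ := mem_image.mp hp'
    exact (h1 p hp).image g
  · rintro p' hp'
    obtain ⟨p, hp, rfl⟩ := mem_image.mp hp'
    rw [Finset.card_image_of_injective _ hg]
    exact h2 p hp
  · rintro p' hp' q' hq' hne
    obtain ⟨p, hp, rfl⟩ := mem_image.mp hp'
    obtain ⟨q, hq, rfl⟩ := mem_image.mp hq'
    exact (Finset.disjoint_image hg).mpr (h3 p hp q hq (fun e => hne (by rw [e])))
  · rw [Finset.image_biUnion, ← h4, img_biUnion]
    rfl
  · rw [Finset.card_image_of_injective _ (Finset.image_injective hg)]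
    exact h5

lemma partSet_preimage_mem {g : γ → β} (hg : Function.Injective g) {m r : ℕ} {t : Finset γ}
    {Q : Finset (Finset β)} (h : Q ∈ partSet m (t.image g) r) :
    Q.image (fun q => q.preimage g hg.injOn) ∈ partSet m t r := by
  rw [mem_partSet] at h ⊢
  obtain ⟨h1, h2, h3, h4, h5⟩ := h
  have hsub : ∀ q ∈ Q, q ⊆ t.image g := by
    intro q hq
    rw [← h4]
    intro x hx
    exact mem_biUnion.mpr ⟨q, hq, hx⟩
  have himg : ∀ q ∈ Q, (q.preimage g hg.injOn).image g = q :=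
    fun q hq => img_pre hg (hsub q hq)
  have hinj : ∀ q ∈ Q, ∀ q' ∈ Q, q.preimage g hg.injOn = q'.preimage g hg.injOn → q = q' := by
    intro q hq q' hq' e
    rw [← himg q hq, ← himg q' hq', e]
  refine ⟨?_, ?_, ?_, ?_, ?_⟩
  · rintro p' hp'
    obtain ⟨q, hq, rfl⟩ := mem_image.mp hp'
    rw [← Finset.card_pos, ← Finset.card_image_of_injective _ hg, himg q hq, Finset.card_pos]
    exact h1 q hq
  · rintro p' hp'
    obtain ⟨q, hq, rfl⟩ := mem_image.mp hp'
    rw [← Finset.card_image_of_injective _ hg, himg q hq]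
    exact h2 q hq
  · rintro p' hp' q' hq' hne
    obtain ⟨p, hp, rfl⟩ := mem_image.mp hp'
    obtain ⟨q, hq, rfl⟩ := mem_image.mp hq'
    have hpq : p ≠ q := fun e => hne (by rw [e])
    have := h3 p hp q hq hpq
    rw [Finset.disjoint_left] at this ⊢
    intro x hx hx'
    rw [Finset.mem_preimage] at hx hx'
    exact this hx hx'
  · ext x
    simp only [mem_biUnion, mem_image, id]
    constructor
    · rintro ⟨p', ⟨q, hq, rfl⟩, hx⟩
      rw [Finset.mem_preimage] at hx
      exact pre_subset hg (hsub q hq) (Finset.mem_preimage.mpr hx)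
    · intro hx
      have hgx : g x ∈ t.image g := mem_image_of_mem g hx
      rw [← h4, mem_biUnion] at hgx
      obtain ⟨q, hq, hgq⟩ := hgx
      exact ⟨q.preimage g hg.injOn, ⟨q, hq, rfl⟩, Finset.mem_preimage.mpr hgq⟩
  · rw [Finset.card_image_of_injOn fun q hq q' hq' => hinj q hq q' hq']
    exact h5

lemma card_partSet_image {g : γ → β} (hg : Function.Injective g) (m r : ℕ) (t : Finset γ) :
    (partSet m t r).card = (partSet m (t.image g) r).card := by
  classical
  refine Finset.card_bij' (fun P _ => P.image (Finset.image g))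
    (fun Q _ => Q.image (fun q => q.preimage g hg.injOn))
    (fun P hP => partSet_image_mem hg hP) (fun Q hQ => partSet_preimage_mem hg hQ) ?_ ?_
  · intro P hP
    rw [Finset.image_image]
    calc P.image (fun p => (Finset.image g p).preimage g hg.injOn)
        = P.image id := Finset.image_congr fun p _ => pre_img hg p
      _ = P := Finset.image_id
  · intro Q hQ
    rw [Finset.image_image]
    rw [mem_partSet] at hQ
    have hsub : ∀ q ∈ Q, q ⊆ t.image g := by
      intro q hq
      rw [← hQ.2.2.2.1]
      intro x hx
      exact mem_biUnion.mpr ⟨q, hq, hx⟩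
    calc Q.image (fun q => (q.preimage g hg.injOn).image g)
        = Q.image id := Finset.image_congr fun q hq => img_pre hg (hsub q hq)
      _ = Q := Finset.image_id

lemma image_image_pre {g : γ → β} (hg : Function.Injective g) (P : Finset (Finset γ)) :
    (P.image (Finset.image g)).image (fun q => q.preimage g hg.injOn) = P := by
  rw [Finset.image_image]
  calc P.image (fun p => (Finset.image g p).preimage g hg.injOn)
      = P.image id := Finset.image_congr fun p _ => pre_img hg p
    _ = P := Finset.image_id

lemma image_pre_image {g : γ → β} (hg : Function.Injective g) {u : Finset γ}
    {Q : Finset (Finset β)} (hQ : ∀ q ∈ Q, q ⊆ u.image g) :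
    (Q.image (fun q => q.preimage g hg.injOn)).image (Finset.image g) = Q := by
  rw [Finset.image_image]
  calc Q.image (fun q => (q.preimage g hg.injOn).image g)
      = Q.image id := Finset.image_congr fun q hq => img_pre hg (hQ q hq)
    _ = Q := Finset.image_id

lemma card_mixedSet_image {g : γ → β} (hg : Function.Injective g) (m k r : ℕ) (t : Finset γ) :
    (mixedSet m t k r).card = (mixedSet m (t.image g) k r).card := by
  classical
  refine Finset.card_bij' (fun x _ => (fun i => (x.1 i).image g, x.2.image (Finset.image g)))
    (fun y _ => (fun i => (y.1 i).preimage g hg.injOn,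
      y.2.image (fun q => q.preimage g hg.injOn))) ?_ ?_ ?_ ?_
  · rintro ⟨B, P⟩ hx
    rw [mem_mixedSet] at hx ⊢
    obtain ⟨h1, h2, h3, h4, h5⟩ := hx
    refine ⟨fun i => (h1 i).image g,
      fun i => by rw [Finset.card_image_of_injective _ hg]; exact h2 i,
      fun i j hij => (Finset.disjoint_image hg).mpr (h3 i j hij),
      fun i => Finset.image_subset_image (h4 i), ?_⟩
    have : (t.image g) \ univ.biUnion (fun i => (B i).image g)
        = (t \ univ.biUnion B).image g := by
      rw [Finset.image_sdiff _ _ hg, img_biUnion]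
    rw [this]
    exact partSet_image_mem hg h5
  · rintro ⟨B', P'⟩ hy
    rw [mem_mixedSet] at hy ⊢
    obtain ⟨h1, h2, h3, h4, h5⟩ := hy
    have himgB : ∀ i, ((B' i).preimage g hg.injOn).image g = B' i := fun i => img_pre hg (h4 i)
    refine ⟨?_, ?_, ?_, fun i => pre_subset hg (h4 i), ?_⟩
    · intro i
      rw [← Finset.card_pos, ← Finset.card_image_of_injective _ hg, himgB i, Finset.card_pos]
      exact h1 i
    · intro i
      rw [← Finset.card_image_of_injective _ hg, himgB i]
      exact h2 i
    · intro i j hij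
      have := h3 i j hij
      rw [Finset.disjoint_left] at this ⊢
      intro x hx hx'
      rw [Finset.mem_preimage] at hx hx'
      exact this hx hx'
    · have hground : (t \ univ.biUnion fun i => (B' i).preimage g hg.injOn).image g
          = (t.image g) \ univ.biUnion B' := by
        rw [Finset.image_sdiff _ _ hg, img_biUnion]
        congr 1
        exact Finset.biUnion_congr rfl fun i _ => himgB i
      exact partSet_preimage_mem hg
        (t := t \ univ.biUnion fun i => (B' i).preimage g hg.injOn)
        (Q := P') (by rw [hground]; exact h5)
  · rintro ⟨B, P⟩ hx
    dsimp only
    refine Prod.ext ?_ ?_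
    · funext i
      exact pre_img hg (B i)
    · exact image_image_pre hg P
  · rintro ⟨B', P'⟩ hy
    dsimp only
    rw [mem_mixedSet] at hy
    obtain ⟨h1, h2, h3, h4, h5⟩ := hy
    rw [mem_partSet] at h5
    refine Prod.ext ?_ ?_
    · funext i
      exact img_pre hg (h4 i)
    · refine image_pre_image hg (u := t) fun q hq => ?_
      have : q ⊆ (t.image g) \ univ.biUnion B' := by
        rw [← h5.2.2.2.1]
        intro x hx
        exact mem_biUnion.mpr ⟨q, hq, hx⟩
      exact this.trans (Finset.sdiff_subset)

lemma exists_enum (t : Finset β) :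
    ∃ g : Fin t.card → β, Function.Injective g ∧ (univ : Finset (Fin t.card)).image g = t := by
  refine ⟨fun i => ((t.equivFin.symm i : {x // x ∈ t}) : β),
    Subtype.val_injective.comp t.equivFin.symm.injective, ?_⟩
  ext a
  simp only [mem_image, mem_univ, true_and]
  constructor
  · rintro ⟨i, rfl⟩
    exact (t.equivFin.symm i).2
  · intro ha
    exact ⟨t.equivFin ⟨a, ha⟩, by simp⟩

lemma card_partSet (m r : ℕ) (t : Finset β) :
    (partSet m t r).card = stirlingLe m t.card r := by
  obtain ⟨g, hg, hgt⟩ := exists_enum t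
  rw [stirlingLe_eq, card_partSet_image hg m r (univ : Finset (Fin t.card)), hgt]

lemma card_mixedSet (m k r : ℕ) (t : Finset β) :
    (mixedSet m t k r).card = mixedStirlingLe m t.card k r := by
  obtain ⟨g, hg, hgt⟩ := exists_enum t
  rw [mixedStirlingLe_eq, card_mixedSet_image hg m k r (univ : Finset (Fin t.card)), hgt]

end Flat

theorem mixedStirlingLe_convolution (n k m s r : ℕ)
    (hn : 1 ≤ n) (hk : 1 ≤ k) (hm : 1 ≤ m) (hs : 1 ≤ s) (hsr : s ≤ r) :
    r.choose s * mixedStirlingLe m n k r =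
      ∑ j ∈ Finset.range (n + 1),
        n.choose j * stirlingLe m (n - j) s * mixedStirlingLe m j k (r - s) := by
  classical
  set M := mixedSet m (univ : Finset (Fin n)) k r with hM
  set T := M.sigma (fun x => x.2.powersetCard s) with hT
  have hTcard : T.card = r.choose s * M.card := by
    rw [hT, Finset.card_sigma]
    have hconst : ∀ x ∈ M, (x.2.powersetCard s).card = r.choose s := by
      intro x hx
      rw [Finset.card_powersetCard]
      rw [hM, mem_mixedSet] at hx
      rw [(mem_partSet.mp hx.2.2.2.2).2.2.2.2]
    rw [Finset.sum_congr rfl hconst, Finset.sum_const, smul_eq_mul, mul_comm]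
  have key : ∀ j ∈ Finset.range (n + 1),
      (T.filter fun y => ((univ : Finset (Fin n)) \ y.2.biUnion id).card = j).card
        = n.choose j * stirlingLe m (n - j) s * mixedStirlingLe m j k (r - s) := by
    intro j hj
    set Yj := (powersetCard j (univ : Finset (Fin n))).sigma
      (fun A => (partSet m (univ \ A) s) ×ˢ (mixedSet m A k (r - s))) with hYj
    have hbij : (T.filter fun y =>
        ((univ : Finset (Fin n)) \ y.2.biUnion id).card = j).card = Yj.card := by
      refine Finset.card_bij
        (fun y _ => (⟨univ \ y.2.biUnion id, (y.2, (y.1.1, y.1.2 \ y.2))⟩ :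
          Σ _ : Finset (Fin n),
            Finset (Finset (Fin n)) × ((Fin (k - 1) → Finset (Fin n)) × Finset (Finset (Fin n)))))
        ?_ ?_ ?_
      · -- membership
        rintro ⟨⟨B, P⟩, S⟩ hy
        rw [mem_filter] at hy
        obtain ⟨hyT, hyj⟩ := hy
        rw [hT, Finset.mem_sigma] at hyT
        obtain ⟨hxM, hSmem⟩ := hyT
        rw [hM, mem_mixedSet] at hxM
        obtain ⟨hBne, hBm, hBdis, -, hPmem⟩ := hxM
        rw [mem_partSet] at hPmem
        obtain ⟨hPne, hPm, hPdis, hPun, hPr⟩ := hPmem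
        rw [Finset.mem_powersetCard] at hSmem
        obtain ⟨hSP, hSs⟩ := hSmem
        dsimp only at hyj ⊢
        have hWsub : S.biUnion id ⊆ univ \ univ.biUnion B := by
          rw [← hPun]
          exact Finset.biUnion_subset_biUnion_of_subset_left _ hSP
        have hgroundS : (univ : Finset (Fin n)) \ (univ \ S.biUnion id) = S.biUnion id :=
          Finset.sdiff_sdiff_eq_self (subset_univ _)
        have hBdisW : ∀ i, Disjoint (B i) (S.biUnion id) := by
          intro i
          have h2 : Disjoint (univ.biUnion B) (S.biUnion id) :=
            Finset.disjoint_right.mpr fun x hx => (Finset.mem_sdiff.mp (hWsub hx)).2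
          exact h2.mono_left (Finset.subset_biUnion_of_mem B (mem_univ i))
        have hPSun : (P \ S).biUnion id = (univ \ univ.biUnion B) \ S.biUnion id := by
          ext x
          constructor
          · intro hx
            obtain ⟨p, hp, hxp⟩ := mem_biUnion.mp hx
            obtain ⟨hpP, hpS⟩ := Finset.mem_sdiff.mp hp
            rw [Finset.mem_sdiff]
            refine ⟨by rw [← hPun]; exact mem_biUnion.mpr ⟨p, hpP, hxp⟩, fun hxS => ?_⟩
            obtain ⟨q, hq, hxq⟩ := mem_biUnion.mp hxS
            rcases eq_or_ne p q with rfl | hpq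
            · exact hpS hq
            · exact (Finset.disjoint_left.mp (hPdis p hpP q (hSP hq) hpq)) hxp hxq
          · intro hx
            obtain ⟨hx1, hx2⟩ := Finset.mem_sdiff.mp hx
            rw [← hPun, mem_biUnion] at hx1
            obtain ⟨p, hpP, hxp⟩ := hx1
            exact mem_biUnion.mpr ⟨p, Finset.mem_sdiff.mpr
              ⟨hpP, fun hpS => hx2 (mem_biUnion.mpr ⟨p, hpS, hxp⟩)⟩, hxp⟩
        rw [hYj, Finset.mem_sigma]
        refine ⟨Finset.mem_powersetCard.mpr ⟨Finset.sdiff_subset, hyj⟩, ?_⟩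
        rw [Finset.mem_product]
        constructor
        · -- S is a partition of univ \ A
          dsimp only
          rw [mem_partSet, hgroundS]
          exact ⟨fun p hp => hPne p (hSP hp), fun p hp => hPm p (hSP hp),
            fun p hp q hq hpq => hPdis p (hSP hp) q (hSP hq) hpq, rfl, hSs⟩
        · -- (B, P \ S) is a mixed structure on A
          dsimp only
          rw [mem_mixedSet]
          refine ⟨hBne, hBm, hBdis, fun i =>
            Finset.subset_sdiff.mpr ⟨subset_univ _, hBdisW i⟩, ?_⟩
          rw [mem_partSet]
          refine ⟨fun p hp => hPne p (Finset.sdiff_subset hp),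
            fun p hp => hPm p (Finset.sdiff_subset hp),
            fun p hp q hq hpq =>
              hPdis p (Finset.sdiff_subset hp) q (Finset.sdiff_subset hq) hpq, ?_, ?_⟩
          · rw [hPSun, sdiff_sdiff_comm]
          · rw [Finset.card_sdiff_of_subset hSP, hPr, hSs]
      · -- injectivity
        rintro ⟨⟨B1, P1⟩, S1⟩ h1 ⟨⟨B2, P2⟩, S2⟩ h2 heq
        rw [mem_filter, hT, Finset.mem_sigma] at h1 h2
        have hS1P1 : S1 ⊆ P1 :=
          (Finset.mem_powersetCard.mp h1.1.2).1
        have hS2P2 : S2 ⊆ P2 :=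
          (Finset.mem_powersetCard.mp h2.1.2).1
        have hS : S1 = S2 := congrArg (fun z => z.2.1) heq
        have hB : B1 = B2 := congrArg (fun z => z.2.2.1) heq
        have hPS : P1 \ S1 = P2 \ S2 := congrArg (fun z => z.2.2.2) heq
        have hP : P1 = P2 := by
          have e1 : P1 = P1 \ S1 ∪ S1 := (Finset.sdiff_union_of_subset hS1P1).symm
          have e2 : P2 = P2 \ S2 ∪ S2 := (Finset.sdiff_union_of_subset hS2P2).symm
          rw [e1, e2, hPS, hS]
        subst hS; subst hB; subst hP
        rfl
      · -- surjectivity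
        rintro ⟨A, Q, B, R⟩ hb
        rw [hYj, Finset.mem_sigma, Finset.mem_product] at hb
        obtain ⟨hA, hQ, hBR⟩ := hb
        rw [Finset.mem_powersetCard] at hA
        obtain ⟨hAsub, hAj⟩ := hA
        dsimp only at hQ hBR
        rw [mem_partSet] at hQ
        obtain ⟨hQne, hQm, hQdis, hQun, hQs⟩ := hQ
        rw [mem_mixedSet] at hBR
        obtain ⟨hBne, hBm, hBdis, hBsub, hRmem⟩ := hBR
        rw [mem_partSet] at hRmem
        obtain ⟨hRne, hRm, hRdis, hRun, hRr⟩ := hRmem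
        have hQsub : ∀ q ∈ Q, q ⊆ univ \ A := by
          intro q hq
          rw [← hQun]
          intro x hx
          exact mem_biUnion.mpr ⟨q, hq, hx⟩
        have hRsub : ∀ p ∈ R, p ⊆ A := by
          intro p hp
          have : p ⊆ A \ univ.biUnion B := by
            rw [← hRun]
            intro x hx
            exact mem_biUnion.mpr ⟨p, hp, hx⟩
          exact this.trans Finset.sdiff_subset
        have hQRdis : Disjoint Q R := by
          rw [Finset.disjoint_left]
          intro q hq hqR
          obtain ⟨x, hx⟩ := hQne q hq
          have h1 : x ∈ univ \ A := hQsub q hq hx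
          have h2 : x ∈ A := hRsub q hqR hx
          exact (Finset.mem_sdiff.mp h1).2 h2
        have hUB : univ.biUnion B ⊆ A := Finset.biUnion_subset.mpr fun i _ => hBsub i
        have hQRun : (Q ∪ R).biUnion id = univ \ univ.biUnion B := by
          have : (Q ∪ R).biUnion id = Q.biUnion id ∪ R.biUnion id := by
            ext x
            simp only [mem_biUnion, mem_union, id_eq]
            constructor
            · rintro ⟨a, (h | h), hx⟩
              exacts [Or.inl ⟨a, h, hx⟩, Or.inr ⟨a, h, hx⟩]
            · rintro (⟨a, h, hx⟩ | ⟨a, h, hx⟩)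
              exacts [⟨a, Or.inl h, hx⟩, ⟨a, Or.inr h, hx⟩]
          rw [this, hQun, hRun]
          exact Finset.sdiff_union_sdiff_cancel (subset_univ A) hUB
        have hmemT : (⟨(B, Q ∪ R), Q⟩ :
            Σ _ : (Fin (k - 1) → Finset (Fin n)) × Finset (Finset (Fin n)),
              Finset (Finset (Fin n))) ∈ T := by
          rw [hT, Finset.mem_sigma]
          constructor
          · rw [hM, mem_mixedSet]
            refine ⟨hBne, hBm, hBdis, fun i => subset_univ _, ?_⟩
            rw [mem_partSet]
            refine ⟨?_, ?_, ?_, hQRun, ?_⟩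
            · intro p hp
              rcases Finset.mem_union.mp hp with h | h
              · exact hQne p h
              · exact hRne p h
            · intro p hp
              rcases Finset.mem_union.mp hp with h | h
              · exact hQm p h
              · exact hRm p h
            · intro p hp q hq hpq
              rcases Finset.mem_union.mp hp with h | h <;>
                rcases Finset.mem_union.mp hq with h' | h'
              · exact hQdis p h q h' hpq
              · exact Finset.disjoint_left.mpr fun x hxp hxq =>
                  (Finset.mem_sdiff.mp (hQsub p h hxp)).2 (hRsub q h' hxq)
              · exact Finset.disjoint_left.mpr fun x hxp hxq =>
                  (Finset.mem_sdiff.mp (hQsub q h' hxq)).2 (hRsub p h hxp)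
              · exact hRdis p h q h' hpq
            · rw [Finset.card_union_of_disjoint hQRdis, hQs, hRr]
              exact Nat.add_sub_cancel' hsr
          · dsimp only
            exact Finset.mem_powersetCard.mpr ⟨Finset.subset_union_left, hQs⟩
        have hQA : (univ : Finset (Fin n)) \ Q.biUnion id = A := by
          rw [hQun]
          exact Finset.sdiff_sdiff_eq_self hAsub
        refine ⟨⟨(B, Q ∪ R), Q⟩, ?_, ?_⟩
        · rw [mem_filter]
          refine ⟨hmemT, ?_⟩
          dsimp only
          rw [hQA, hAj]
        · dsimp only
          rw [hQA, Finset.union_sdiff_cancel_left hQRdis]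
    have hYcard : Yj.card
        = n.choose j * (stirlingLe m (n - j) s * mixedStirlingLe m j k (r - s)) := by
      rw [hYj, Finset.card_sigma]
      have hconst : ∀ A ∈ powersetCard j (univ : Finset (Fin n)),
          ((partSet m (univ \ A) s) ×ˢ (mixedSet m A k (r - s))).card
            = stirlingLe m (n - j) s * mixedStirlingLe m j k (r - s) := by
        intro A hA
        rw [Finset.mem_powersetCard] at hA
        have hcardA : ((univ : Finset (Fin n)) \ A).card = n - j := by
          rw [Finset.card_sdiff_of_subset hA.1, hA.2]
          simp
        rw [Finset.card_product, card_partSet, card_mixedSet, hA.2, hcardA]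
      rw [Finset.sum_congr rfl hconst, Finset.sum_const, smul_eq_mul,
        Finset.card_powersetCard]
      simp
    rw [hbij, hYcard, mul_assoc]
  have hfw : ∀ y ∈ T, ((univ : Finset (Fin n)) \ y.2.biUnion id).card ∈ Finset.range (n + 1) := by
    intro y hy
    refine Finset.mem_range.mpr (Nat.lt_succ_of_le ?_)
    calc ((univ : Finset (Fin n)) \ y.2.biUnion id).card
        ≤ (univ : Finset (Fin n)).card := Finset.card_le_card Finset.sdiff_subset
      _ = n := by simp
  calc r.choose s * mixedStirlingLe m n k r = T.card := by
        rw [hTcard, mixedStirlingLe_eq]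
    _ = ∑ j ∈ Finset.range (n + 1),
          (T.filter fun y => ((univ : Finset (Fin n)) \ y.2.biUnion id).card = j).card :=
        Finset.card_eq_sum_card_fiberwise hfw
    _ = _ := Finset.sum_congr rfl key
end

section
/- For positive integers n, r and integers 1 ≤ s ≤ k−1 (with k ≥ 2), the mixed Stirling numbers of the second kind satisfy the convolution identity S(n,k,r) = Σ_{j=0}^{n} (n choose j) · s! · {n−j brace s} · S(j,k−s,r). -/
set_option linter.unusedSectionVars false
set_option linter.unusedVariables false

open Finset

variable {γ α : Type*} [DecidableEq γ] [DecidableEq α]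

lemma finpartition_heq_s7 {a b : Finset α} (hab : a = b) {P : Finpartition a} {Q : Finpartition b}
    (h : P.parts = Q.parts) : HEq P Q := by
  subst hab; exact heq_of_eq (Finpartition.ext h)

/-- Push a finpartition forward along an embedding. -/
def mapEmbPart (g : γ ↪ α) {T : Finset γ} (P : Finpartition T) : Finpartition (T.map g) where
  parts := P.parts.image (fun p => p.map g)
  supIndep := by
    rw [Finset.supIndep_iff_pairwiseDisjoint]
    rintro p hp q hq hpq
    simp only [coe_image, Set.mem_image, mem_coe] at hp hq
    obtain ⟨p', hp', rfl⟩ := hp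
    obtain ⟨q', hq', rfl⟩ := hq
    have : p' ≠ q' := by rintro rfl; exact hpq rfl
    exact (Finset.disjoint_map g).2 (P.disjoint hp' hq' this)
  sup_parts := by
    ext x
    simp only [mem_sup, mem_image, id, mem_map]
    constructor
    · rintro ⟨v, ⟨p, hp, rfl⟩, hv⟩
      simp only [mem_map] at hv
      obtain ⟨y, hy, rfl⟩ := hv
      exact ⟨y, P.le hp hy, rfl⟩
    · rintro ⟨y, hy, rfl⟩
      have := P.sup_parts
      rw [← this, mem_sup] at hy
      obtain ⟨p, hp, hyp⟩ := hy
      exact ⟨p.map g, ⟨p, hp, rfl⟩, mem_map_of_mem g hyp⟩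
  bot_notMem := by
    simp only [bot_eq_empty, mem_image, not_exists]
    rintro p ⟨hp, h⟩
    rw [Finset.map_eq_empty] at h
    rw [h] at hp
    simpa using P.bot_notMem hp

lemma parts_mapEmbPart (g : γ ↪ α) {T : Finset γ} (P : Finpartition T) :
    (mapEmbPart g P).parts = P.parts.image (fun p => p.map g) := rfl

lemma card_parts_mapEmbPart (g : γ ↪ α) {T : Finset γ} (P : Finpartition T) :
    (mapEmbPart g P).parts.card = P.parts.card :=
  Finset.card_image_of_injective _ (Finset.map_injective g)

lemma map_preimage_of_subset {g : γ ↪ α} {p : Finset α} {T : Finset γ} (h : p ⊆ T.map g) :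
    (p.preimage g g.injective.injOn).map g = p := by
  ext x
  simp only [mem_map, mem_preimage]
  constructor
  · rintro ⟨y, hy, rfl⟩; exact hy
  · intro hx
    obtain ⟨y, _, rfl⟩ := mem_map.1 (h hx)
    exact ⟨y, hx, rfl⟩

/-- Pull a finpartition back along an embedding. -/
noncomputable def preimgPart (g : γ ↪ α) {T : Finset γ} (Q : Finpartition (T.map g)) : Finpartition T where
  parts := Q.parts.image (fun p => p.preimage g g.injective.injOn)
  supIndep := by
    rw [Finset.supIndep_iff_pairwiseDisjoint]
    rintro p hp q hq hpq
    simp only [coe_image, Set.mem_image, mem_coe] at hp hq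
    obtain ⟨p', hp', rfl⟩ := hp
    obtain ⟨q', hq', rfl⟩ := hq
    have hne : p' ≠ q' := by
      rintro rfl; exact hpq rfl
    have : Disjoint p' q' := Q.disjoint hp' hq' hne
    show Disjoint (p'.preimage g g.injective.injOn) (q'.preimage g g.injective.injOn)
    rw [Finset.disjoint_left] at this ⊢
    intro x hx hx'
    exact this (mem_preimage.1 hx) (mem_preimage.1 hx')
  sup_parts := by
    ext x
    simp only [mem_sup, mem_image, id]
    constructor
    · rintro ⟨v, ⟨p, hp, rfl⟩, hv⟩
      have : g x ∈ T.map g := Q.le hp (mem_preimage.1 hv)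
      obtain ⟨y, hy, hgy⟩ := mem_map.1 this
      rwa [← g.injective hgy]
    · intro hx
      have : g x ∈ T.map g := mem_map_of_mem g hx
      rw [← Q.sup_parts, mem_sup] at this
      obtain ⟨p, hp, hgp⟩ := this
      exact ⟨p.preimage g g.injective.injOn, ⟨p, hp, rfl⟩, mem_preimage.2 hgp⟩
  bot_notMem := by
    simp only [bot_eq_empty, mem_image, not_exists]
    rintro p ⟨hp, h⟩
    have h2 := map_preimage_of_subset (g := g) (Q.le hp)
    rw [h, Finset.map_empty] at h2
    exact Q.bot_notMem (by rw [bot_eq_empty, h2]; exact hp)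

lemma parts_preimgPart (g : γ ↪ α) {T : Finset γ} (Q : Finpartition (T.map g)) :
    (preimgPart g Q).parts = Q.parts.image (fun p => p.preimage g g.injective.injOn) := rfl

/-- Finpartitions transport along an embedding of the ground set. -/
noncomputable def finpartCongrEmb (g : γ ↪ α) (T : Finset γ) : Finpartition T ≃ Finpartition (T.map g) where
  toFun := mapEmbPart g
  invFun := preimgPart g
  left_inv P := by
    apply Finpartition.ext
    show (P.parts.image _).image _ = P.parts
    rw [Finset.image_image]
    refine Finset.image_congr (fun p hp => ?_) |>.trans (Finset.image_id)
    exact Finset.preimage_map g p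
  right_inv Q := by
    apply Finpartition.ext
    show (Q.parts.image _).image _ = Q.parts
    rw [Finset.image_image]
    refine Finset.image_congr (fun p hp => ?_) |>.trans (Finset.image_id)
    exact map_preimage_of_subset (Q.le hp)

lemma card_parts_finpartCongrEmb (g : γ ↪ α) {T : Finset γ} (P : Finpartition T) :
    (finpartCongrEmb g T P).parts.card = P.parts.card :=
  card_parts_mapEmbPart g P

/-- Subtype version. -/
noncomputable def finpartSubCongr (g : γ ↪ α) (T : Finset γ) (r : ℕ) :
    {P : Finpartition T // P.parts.card = r} ≃ {P : Finpartition (T.map g) // P.parts.card = r} :=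
  (finpartCongrEmb g T).subtypeEquiv fun P => by
    rw [card_parts_finpartCongrEmb]

section MSet

variable (β : Type*) [DecidableEq β] [Fintype β]

/-- Mixed-Stirling structures inside a subset `S`. -/
def MSetIn (S : Finset β) (k r : ℕ) : Type _ :=
  {x : Σ B : Fin k → Finset β, Finpartition (S \ Finset.univ.biUnion B) //
    (∀ i, x.1 i ⊆ S) ∧ (∀ i, (x.1 i).Nonempty) ∧
    (∀ i j, i ≠ j → Disjoint (x.1 i) (x.1 j)) ∧ x.2.parts.card = r}

/-- Ordered set partitions of `T` with `a` blocks. -/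
def OPart (T : Finset β) (a : ℕ) : Type _ :=
  {B : Fin a → Finset β // (∀ i, (B i).Nonempty) ∧
    (∀ i j, i ≠ j → Disjoint (B i) (B j)) ∧ Finset.univ.biUnion B = T}

variable {β}

instance (S : Finset β) (k r : ℕ) : Finite (MSetIn β S k r) := by
  unfold MSetIn; infer_instance

instance (T : Finset β) (a : ℕ) : Finite (OPart β T a) := by
  unfold OPart; infer_instance

lemma msetIn_ext {S : Finset β} {k r : ℕ} {x y : MSetIn β S k r}
    (hB : x.1.1 = y.1.1) (hp : x.1.2.parts = y.1.2.parts) : x = y :=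
  Subtype.ext (Sigma.ext hB (finpartition_heq_s7 (by rw [hB]) hp))

lemma mixedStirling_eq_s7 (n k r : ℕ) :
    mixedStirling n k r = Nat.card (MSetIn (Fin n) Finset.univ (k - 1) r) := by
  refine Nat.card_congr (Equiv.subtypeEquivRight fun x => ?_)
  simp [MSetIn, subset_univ]

end MSet

section Transport

variable {γ β : Type*} [DecidableEq γ] [Fintype γ] [DecidableEq β] [Fintype β]

lemma embMapSdiff (g : γ ↪ β) (s t : Finset γ) : (s \ t).map g = s.map g \ t.map g := by
  simp only [map_eq_image]
  exact Finset.image_sdiff s t g.injective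

lemma biUnion_map' {k : ℕ} (g : γ ↪ β) (B : Fin k → Finset γ) :
    (Finset.univ.biUnion B).map g = Finset.univ.biUnion (fun i => (B i).map g) := by
  ext x
  simp only [mem_map, mem_biUnion, mem_univ, true_and]
  tauto

lemma card_parts_preimgPart (g : γ ↪ β) {T : Finset γ} (Q : Finpartition (T.map g)) :
    (preimgPart g Q).parts.card = Q.parts.card := by
  refine Finset.card_image_of_injOn fun p hp q hq h => ?_
  rw [← map_preimage_of_subset (Q.le hp), ← map_preimage_of_subset (Q.le hq), h]

/-- Transport of mixed-Stirling structures along an embedding whose image is `S`. -/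
noncomputable def msetCongr (g : γ ↪ β) (k r : ℕ) :
    MSetIn γ Finset.univ k r ≃ MSetIn β ((Finset.univ : Finset γ).map g) k r where
  toFun x :=
    ⟨⟨fun i => (x.1.1 i).map g,
      (mapEmbPart g x.1.2).copy (by rw [embMapSdiff, biUnion_map'])⟩,
      fun i => map_subset_map.2 (subset_univ _),
      fun i => Finset.Nonempty.map (x.2.2.1 i),
      fun i j hij => (Finset.disjoint_map g).2 (x.2.2.2.1 i j hij),
      by
        dsimp only
        rw [Finpartition.copy_parts, card_parts_mapEmbPart]
        exact x.2.2.2.2⟩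
  invFun y := by
    refine ⟨⟨fun i => (y.1.1 i).preimage g g.injective.injOn,
      preimgPart g ((y.1.2).copy ?_)⟩, fun i => subset_univ _, ?_, ?_, ?_⟩
    · rw [embMapSdiff, biUnion_map']
      congr 1
      refine Finset.biUnion_congr rfl fun i _ => ?_
      exact (map_preimage_of_subset (y.2.1 i)).symm
    · intro i
      obtain ⟨x, hx⟩ := y.2.2.1 i
      obtain ⟨z, _, rfl⟩ := mem_map.1 (y.2.1 i hx)
      exact ⟨z, (mem_preimage (hf := g.injective.injOn)).2 hx⟩
    · intro i j hij
      have h2 := y.2.2.2.1 i j hij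
      rw [Finset.disjoint_left] at h2 ⊢
      intro x hx hx'
      dsimp only at hx hx'
      rw [mem_preimage] at hx hx'
      exact h2 hx hx'
    · show (preimgPart g _).parts.card = r
      rw [card_parts_preimgPart, Finpartition.copy_parts]
      exact y.2.2.2.2
  left_inv x := by
    refine msetIn_ext (funext fun i => Finset.preimage_map g (x.1.1 i)) ?_
    dsimp only
    rw [parts_preimgPart, Finpartition.copy_parts, Finpartition.copy_parts, parts_mapEmbPart,
      Finset.image_image]
    refine Finset.image_congr (fun p hp => ?_) |>.trans (Finset.image_id)
    exact Finset.preimage_map g p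
  right_inv y := by
    refine msetIn_ext (funext fun i => map_preimage_of_subset (y.2.1 i)) ?_
    dsimp only
    rw [Finpartition.copy_parts, parts_mapEmbPart, parts_preimgPart, Finpartition.copy_parts,
      Finset.image_image]
    refine Finset.image_congr (fun p hp => ?_) |>.trans (Finset.image_id)
    simp only [Function.comp_apply, id_eq]
    exact map_preimage_of_subset ((y.1.2.le hp).trans sdiff_subset)

end Transport

section OPartCard

variable {β : Type*} [DecidableEq β] [Fintype β]

lemma opart_inj {a : ℕ} {B : Fin a → Finset β} (hne : ∀ i, (B i).Nonempty)
    (hdis : ∀ i j, i ≠ j → Disjoint (B i) (B j)) : Function.Injective B := by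
  intro i j h
  by_contra hij
  have := hdis i j hij
  rw [h, disjoint_self] at this
  exact (hne j).ne_empty (by simpa using this)

def opartPartition {T : Finset β} {a : ℕ} (B : Fin a → Finset β)
    (hne : ∀ i, (B i).Nonempty) (hdis : ∀ i j, i ≠ j → Disjoint (B i) (B j))
    (hT : Finset.univ.biUnion B = T) : Finpartition T where
  parts := Finset.univ.image B
  supIndep := by
    rw [Finset.supIndep_iff_pairwiseDisjoint]
    rintro p hp q hq hpq
    simp only [coe_image, Set.mem_image, mem_coe, coe_univ, Set.image_univ,
      Set.mem_range] at hp hq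
    obtain ⟨i, rfl⟩ := hp
    obtain ⟨j, rfl⟩ := hq
    exact hdis i j fun h => hpq (by rw [h])
  sup_parts := by
    rw [Finset.sup_image]
    show Finset.univ.sup B = T
    rw [Finset.sup_eq_biUnion, hT]
  bot_notMem := by
    simp only [bot_eq_empty, mem_image, not_exists]
    rintro i ⟨-, h⟩
    exact (hne i).ne_empty h

lemma card_parts_opartPartition {T : Finset β} {a : ℕ} (B : Fin a → Finset β)
    (hne : ∀ i, (B i).Nonempty) (hdis : ∀ i j, i ≠ j → Disjoint (B i) (B j))
    (hT : Finset.univ.biUnion B = T) :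
    (opartPartition B hne hdis hT).parts.card = a := by
  show (Finset.univ.image B).card = a
  rw [Finset.card_image_of_injective _ (opart_inj hne hdis), card_univ, Fintype.card_fin]

def opartEquiv (T : Finset β) (a : ℕ) :
    OPart β T a ≃ Σ P : {P : Finpartition T // P.parts.card = a},
      {g : Fin a → Finset β // Function.Injective g ∧ Finset.univ.image g = P.1.parts} where
  toFun x :=
    ⟨⟨opartPartition x.1 x.2.1 x.2.2.1 x.2.2.2,
      card_parts_opartPartition x.1 x.2.1 x.2.2.1 x.2.2.2⟩,
     ⟨x.1, opart_inj x.2.1 x.2.2.1, rfl⟩⟩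
  invFun y :=
    ⟨y.2.1, fun i =>
        y.1.1.nonempty_of_mem_parts
          ((Finset.ext_iff.1 y.2.2.2 _).1 (mem_image_of_mem _ (mem_univ i))),
      fun i j hij =>
        y.1.1.disjoint ((Finset.ext_iff.1 y.2.2.2 _).1 (mem_image_of_mem _ (mem_univ i)))
          ((Finset.ext_iff.1 y.2.2.2 _).1 (mem_image_of_mem _ (mem_univ j)))
          (fun h => hij (y.2.2.1 h)),
      by
        have h2 := congrArg (fun s : Finset (Finset β) => s.sup id) y.2.2.2
        rw [Finset.sup_image] at h2
        rw [← Finset.sup_eq_biUnion]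
        exact h2.trans y.1.1.sup_parts⟩
  left_inv x := Subtype.ext rfl
  right_inv y := by
    have hparts : Finset.univ.image (y.2.1 : Fin a → Finset β) = y.1.1.parts := y.2.2.2
    refine Sigma.ext (Subtype.ext (Finpartition.ext hparts)) ?_
    refine (Subtype.heq_iff_coe_eq fun g => ?_).2 rfl
    show Function.Injective g ∧ Finset.univ.image g = Finset.univ.image y.2.1
      ↔ Function.Injective g ∧ Finset.univ.image g = y.1.1.parts
    rw [hparts]

lemma natcard_sigma {ι : Type*} [Fintype ι] (F : ι → Type*) [∀ i, Finite (F i)] :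
    Nat.card (Σ i, F i) = ∑ i : ι, Nat.card (F i) := by
  have (i : ι) : Fintype (F i) := Fintype.ofFinite _
  simp [Nat.card_eq_fintype_card]

lemma card_fiber_s7 {a : ℕ} {Q : Finset (Finset β)} (hQ : Q.card = a) :
    Nat.card {g : Fin a → Finset β // Function.Injective g ∧ Finset.univ.image g = Q}
      = a.factorial := by
  have e : {g : Fin a → Finset β // Function.Injective g ∧ Finset.univ.image g = Q}
      ≃ (Fin a ↪ ↥Q) := {
    toFun := fun x => ⟨fun i => ⟨x.1 i,
      (Finset.ext_iff.1 x.2.2 _).1 (mem_image_of_mem _ (mem_univ i))⟩,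
      fun i j h => x.2.1 (congrArg Subtype.val h)⟩
    invFun := fun f => ⟨fun i => (f i : Finset β),
      fun i j h => f.injective (Subtype.ext h),
      by
        refine Finset.eq_of_subset_of_card_le (fun p hp => ?_) ?_
        · obtain ⟨i, -, rfl⟩ := mem_image.1 hp
          exact (f i).2
        · rw [Finset.card_image_of_injective _ (fun i j h => f.injective (Subtype.ext h)),
            card_univ, Fintype.card_fin, hQ]⟩
    left_inv := fun x => Subtype.ext rfl
    right_inv := fun f => by ext i : 1; rfl }
  rw [Nat.card_congr e, Nat.card_eq_fintype_card, Fintype.card_embedding_eq]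
  rw [Fintype.card_coe, hQ, Fintype.card_fin, Nat.descFactorial_self]

end OPartCard

section CardLemmas

variable {β : Type*} [DecidableEq β] [LinearOrder β] [Fintype β]

lemma univ_map_orderEmbOfFin (S : Finset β) :
    (Finset.univ : Finset (Fin S.card)).map (S.orderEmbOfFin rfl).toEmbedding = S := by
  apply Finset.coe_injective
  rw [coe_map, coe_univ, Set.image_univ]
  exact S.range_orderEmbOfFin rfl

lemma card_finpart_subtype (S : Finset β) (s : ℕ) :
    Nat.card {P : Finpartition S // P.parts.card = s} = stirling S.card s := by
  unfold stirling
  refine (Nat.card_congr ?_).symm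
  refine (finpartSubCongr (S.orderEmbOfFin rfl).toEmbedding Finset.univ s).trans (Equiv.cast ?_)
  rw [univ_map_orderEmbOfFin]

lemma card_msetIn (S : Finset β) (k r : ℕ) :
    Nat.card (MSetIn β S k r) = mixedStirling S.card (k + 1) r := by
  rw [mixedStirling_eq_s7]
  simp only [Nat.add_sub_cancel]
  refine (Nat.card_congr ((msetCongr (S.orderEmbOfFin rfl).toEmbedding k r).trans
    (Equiv.cast ?_))).symm
  rw [univ_map_orderEmbOfFin]

lemma card_opart (S : Finset β) (a : ℕ) :
    Nat.card (OPart β S a) = stirling S.card a * a.factorial := by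
  rw [Nat.card_congr (opartEquiv S a), natcard_sigma]
  have h1 : ∀ P : {P : Finpartition S // P.parts.card = a},
      Nat.card {g : Fin a → Finset β // Function.Injective g ∧ Finset.univ.image g = P.1.parts}
        = a.factorial := fun P => card_fiber_s7 P.2
  rw [Finset.sum_congr rfl (fun P _ => h1 P), Finset.sum_const, smul_eq_mul,
    Finset.card_univ, ← Nat.card_eq_fintype_card, card_finpart_subtype]

end CardLemmas

section Main

variable {β : Type*} [DecidableEq β] [Fintype β]

lemma hset_split {a b : ℕ} (B : Fin (a + b) → Finset β) :
    Finset.univ \ Finset.univ.biUnion B =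
      (Finset.univ \ Finset.univ.biUnion (fun i : Fin a => B (finSumFinEquiv (Sum.inl i)))) \
        Finset.univ.biUnion (fun i : Fin b => B (finSumFinEquiv (Sum.inr i))) := by
  ext x
  simp only [mem_sdiff, mem_univ, true_and, mem_biUnion, not_exists]
  constructor
  · intro h
    exact ⟨fun i => h _, fun i => h _⟩
  · rintro ⟨h1, h2⟩ i
    obtain ⟨c, rfl⟩ := finSumFinEquiv.surjective i
    cases c with
    | inl j => exact h1 j
    | inr j => exact h2 j

lemma target_ext_s7 {a b r : ℕ}
    {x y : Σ T : Finset β, OPart β T a × MSetIn β (Finset.univ \ T) b r}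
    (hT : x.1 = y.1) (hB1 : (x.2.1.1 : Fin a → Finset β) = y.2.1.1)
    (hB2 : (x.2.2.1.1 : Fin b → Finset β) = y.2.2.1.1)
    (hp : x.2.2.1.2.parts = y.2.2.1.2.parts) : x = y := by
  obtain ⟨T, p⟩ := x
  obtain ⟨T', p'⟩ := y
  dsimp only at hT
  subst hT
  exact congrArg (Sigma.mk T) (Prod.ext (Subtype.ext hB1) (msetIn_ext hB2 hp))

noncomputable def mainEquiv (a b r : ℕ) :
    MSetIn β Finset.univ (a + b) r ≃
      Σ T : Finset β, OPart β T a × MSetIn β (Finset.univ \ T) b r where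
  toFun x :=
    ⟨Finset.univ.biUnion (fun i : Fin a => x.1.1 (finSumFinEquiv (Sum.inl i))),
     ⟨fun i => x.1.1 (finSumFinEquiv (Sum.inl i)),
       fun i => x.2.2.1 _,
       fun i j hij => x.2.2.2.1 _ _
         (fun h => hij (Sum.inl_injective (finSumFinEquiv.injective h))),
       rfl⟩,
     ⟨⟨fun i => x.1.1 (finSumFinEquiv (Sum.inr i)), x.1.2.copy (hset_split x.1.1)⟩,
       fun i y hy => by
         rw [mem_sdiff]
         refine ⟨mem_univ _, ?_⟩
         rw [mem_biUnion]
         push_neg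
         intro j _
         intro hy'
         exact (Finset.disjoint_left.1 (x.2.2.2.1 _ _ (fun h => Sum.inl_ne_inr
           (finSumFinEquiv.injective h)))) hy' hy,
       fun i => x.2.2.1 _,
       fun i j hij => x.2.2.2.1 _ _
         (fun h => hij (Sum.inr_injective (finSumFinEquiv.injective h))),
       by dsimp only; rw [Finpartition.copy_parts]; exact x.2.2.2.2⟩⟩
  invFun y :=
    ⟨⟨fun i => Sum.elim y.2.1.1 y.2.2.1.1 (finSumFinEquiv.symm i),
      y.2.2.1.2.copy (by
        rw [hset_split (fun i => Sum.elim y.2.1.1 y.2.2.1.1 (finSumFinEquiv.symm i))]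
        simp only [Equiv.symm_apply_apply, Sum.elim_inl, Sum.elim_inr, y.2.1.2.2.2])⟩,
     fun i => subset_univ _,
     fun i => by
       rcases h : finSumFinEquiv.symm i with j | j
       · simpa [h] using y.2.1.2.1 j
       · simpa [h] using y.2.2.2.2.1 j,
     fun i j hij => by
       have hij' : finSumFinEquiv.symm i ≠ finSumFinEquiv.symm j :=
         fun h => hij (finSumFinEquiv.symm.injective h)
       have hB1T : ∀ u, y.2.1.1 u ⊆ y.1 := fun u => by
         have h2 := subset_biUnion_of_mem (fun v => y.2.1.1 v) (mem_univ u)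
         rwa [y.2.1.2.2.2] at h2
       have hTd : Disjoint (y.1 : Finset β) (Finset.univ \ y.1) := sdiff_disjoint.symm
       dsimp only
       rcases hi : finSumFinEquiv.symm i with u | u <;>
         rcases hj : finSumFinEquiv.symm j with v | v <;>
         simp only [Sum.elim_inl, Sum.elim_inr]
       · exact y.2.1.2.2.1 u v (fun h => hij' (by rw [hi, hj, h]))
       · exact hTd.mono (hB1T u) (y.2.2.2.1 v)
       · exact (hTd.mono (hB1T v) (y.2.2.2.1 u)).symm
       · exact y.2.2.2.2.2.1 u v (fun h => hij' (by rw [hi, hj, h])),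
     by dsimp only; rw [Finpartition.copy_parts]; exact y.2.2.2.2.2.2⟩
  left_inv x := by
    refine msetIn_ext (funext fun i => ?_) ?_
    · rcases h : finSumFinEquiv.symm i with j | j <;>
        simp only [h, Sum.elim_inl, Sum.elim_inr] <;>
        rw [← h, Equiv.apply_symm_apply]
    · dsimp only
      rw [Finpartition.copy_parts, Finpartition.copy_parts]
  right_inv y := by
    refine target_ext_s7 ?_ (funext fun i => ?_) (funext fun i => ?_) ?_
    · dsimp only
      simp only [Equiv.symm_apply_apply, Sum.elim_inl]
      exact y.2.1.2.2.2
    · dsimp only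
      rw [Equiv.symm_apply_apply]
      rfl
    · dsimp only
      rw [Equiv.symm_apply_apply]
      rfl
    · dsimp only
      rw [Finpartition.copy_parts, Finpartition.copy_parts]

end Main

theorem mixedStirling_convolution' (n r k s : ℕ)
    (hn : 1 ≤ n) (hr : 1 ≤ r) (hk : 2 ≤ k) (hs : 1 ≤ s) (hsk : s ≤ k - 1) :
    mixedStirling n k r =
      ∑ j ∈ Finset.range (n + 1),
        n.choose j * s.factorial * stirling (n - j) s * mixedStirling j (k - s) r := by
  have hk1 : k - 1 = s + (k - 1 - s) := by omega
  rw [mixedStirling_eq_s7 n k r, hk1, Nat.card_congr (mainEquiv s (k - 1 - s) r), natcard_sigma]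
  have hterm : ∀ T : Finset (Fin n),
      Nat.card (OPart (Fin n) T s × MSetIn (Fin n) (Finset.univ \ T) (k - 1 - s) r)
        = stirling T.card s * s.factorial * mixedStirling (n - T.card) (k - s) r := by
    intro T
    rw [Nat.card_prod, card_opart, card_msetIn]
    have h2 : (Finset.univ \ T).card = n - T.card := by
      rw [Finset.card_sdiff_of_subset (Finset.subset_univ T), Finset.card_univ, Fintype.card_fin]
    have h3 : k - 1 - s + 1 = k - s := by omega
    rw [h2, h3]
  rw [Finset.sum_congr rfl (fun T _ => hterm T)]
  rw [← Finset.powerset_univ,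
    Finset.sum_powerset_apply_card
      (fun m => stirling m s * s.factorial * mixedStirling (n - m) (k - s) r)]
  rw [Finset.card_univ, Fintype.card_fin]
  rw [← Finset.sum_range_reflect]
  refine Finset.sum_congr rfl fun j hj => ?_
  rw [Finset.mem_range, Nat.lt_succ_iff] at hj
  have h4 : n + 1 - 1 - j = n - j := by omega
  rw [h4, smul_eq_mul, Nat.choose_symm hj, Nat.sub_sub_self hj]
  ring
end
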